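/- arXiv:2101.07593 — 8 statements merged into one kernel-verified Lean document; each statement's English description precedes it below -/
import Mathlib

section
/- Let n and s_1, ..., s_v be positive integers such that s_g(n) = s_1 + ... + s_v and s_v > (g-2)(v-1). Then there exist positive integers n_1, ..., n_v such that the base-g representation of n is the concatenation of the base-g representations of n_1, ..., n_v (in order), and |s_g(n_i) - s_i| ≤ (g-2)(v-1) for each i = 1, ..., v. -/
/-- Strip trailing zeros from a prefix of a digit list. -/
lemma niven_strip (ds : List ℕ) : ∀ k0, k0 ≤ ds.length → 0 < (ds.take k0).sum →
    ∃ k, 0 < k ∧ k ≤ k0 ∧ (∀ h : ds.take k ≠ [], (ds.take k).getLast h ≠ 0) ∧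
      (ds.drop k).sum = (ds.drop k0).sum := by
  intro k0
  induction k0 with
  | zero => simp
  | succ k0 ih =>
    intro hk0 hpos
    have hlt : k0 < ds.length := by omega
    have htake : (ds.take (k0+1)).sum = (ds.take k0).sum + ds.get ⟨k0, hlt⟩ :=
      List.sum_take_succ ds k0 hlt
    have hdrop : ds.drop k0 = ds[k0] :: ds.drop (k0+1) := List.drop_eq_getElem_cons hlt
    by_cases hz : ds[k0] = 0
    · have hpos' : 0 < (ds.take k0).sum := by
        simp only [List.get_eq_getElem] at htake; omega
      obtain ⟨k, hk1, hk2, hk3, hk4⟩ := ih (by omega) hpos'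
      refine ⟨k, hk1, by omega, hk3, ?_⟩
      rw [hk4, hdrop]; simp [hz]
    · refine ⟨k0+1, by omega, le_refl _, ?_, rfl⟩
      intro h
      have hlen : (ds.take (k0+1)).length = k0+1 := by
        rw [List.length_take]; omega
      rw [List.getLast_eq_getElem]
      have : (ds.take (k0+1))[(ds.take (k0+1)).length - 1]'(by omega) = ds[k0] := by
        simp [hlen, List.getElem_take]
      rw [this]; exact hz

/-- Find a good cut point in a digit list. -/
lemma niven_cut (g : ℕ) (hg : 2 ≤ g) (ds : List ℕ) (hlt : ∀ d ∈ ds, d < g)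
    (a : ℕ) (ha : 0 < a) (hS : a + (g-1) ≤ ds.sum) :
    ∃ k, 0 < k ∧ k < ds.length ∧ (∀ h : ds.take k ≠ [], (ds.take k).getLast h ≠ 0) ∧
      a ≤ (ds.drop k).sum ∧ (ds.drop k).sum ≤ a + (g-2) := by
  have hne : ds ≠ [] := by
    intro h; rw [h] at hS; simp at hS; omega
  have hlen1 : 1 ≤ ds.length := by
    cases ds with
    | nil => exact absurd rfl hne
    | cons x xs => simp
  have hsum01 : ds.sum = ds[0]'(by omega) + (ds.drop 1).sum := by
    conv_lhs => rw [← (List.drop_zero : ds.drop 0 = ds), List.drop_eq_getElem_cons (by omega : 0 < ds.length)]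
    simp
  have hP1 : a ≤ (ds.drop 1).sum := by
    have : ds[0]'(by omega) < g := hlt _ (List.getElem_mem (by omega))
    omega
  set k0 := Nat.findGreatest (fun k => a ≤ (ds.drop k).sum) ds.length with hk0def
  have hk0le : k0 ≤ ds.length := Nat.findGreatest_le _
  have hk0ge : 1 ≤ k0 := Nat.le_findGreatest (P := fun k => a ≤ (ds.drop k).sum) hlen1 hP1
  have hPk0 : a ≤ (ds.drop k0).sum := Nat.findGreatest_spec (P := fun k => a ≤ (ds.drop k).sum) hlen1 hP1
  have hk0lt : k0 < ds.length := by
    rcases lt_or_eq_of_le hk0le with h | h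
    · exact h
    · exfalso
      have h2 : (ds.drop k0).sum = 0 := by rw [h]; simp
      omega
  have hnot : ¬ (a ≤ (ds.drop (k0+1)).sum) :=
    Nat.findGreatest_is_greatest (P := fun k => a ≤ (ds.drop k).sum) (n := ds.length)
      (by omega) (by omega)
  have hdrop : ds.drop k0 = ds[k0] :: ds.drop (k0+1) := List.drop_eq_getElem_cons hk0lt
  have hdg : ds[k0] < g := hlt _ (List.getElem_mem hk0lt)
  have hdropsum : (ds.drop k0).sum = ds[k0] + (ds.drop (k0+1)).sum := by
    rw [hdrop, List.sum_cons]
  have hub : (ds.drop k0).sum ≤ a + (g-2) := by omega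
  have htd : (ds.take k0).sum + (ds.drop k0).sum = ds.sum := List.sum_take_add_sum_drop ds k0
  have htpos : 0 < (ds.take k0).sum := by omega
  obtain ⟨k, hk1, hk2, hk3, hk4⟩ := niven_strip ds k0 hk0le htpos
  exact ⟨k, hk1, by omega, hk3, by omega, by omega⟩

/-- Peel off the most significant piece with digit sum in `[a, a+g-2]`. -/
lemma niven_peel (g : ℕ) (hg : 2 ≤ g) (n : ℕ) (a : ℕ) (ha : 0 < a)
    (hS : a + (g-1) ≤ (Nat.digits g n).sum) :
    ∃ n' m0 : ℕ, 0 < n' ∧ 0 < m0 ∧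
      n = n' + m0 * g ^ (Nat.digits g n').length ∧
      a ≤ (Nat.digits g m0).sum ∧ (Nat.digits g m0).sum ≤ a + (g-2) ∧
      (Nat.digits g n').sum + (Nat.digits g m0).sum = (Nat.digits g n).sum ∧
      (Nat.digits g n').length + (Nat.digits g m0).length = (Nat.digits g n).length := by
  have hn : n ≠ 0 := by
    intro h; rw [h] at hS; simp at hS; omega
  set ds := Nat.digits g n with hds
  have hlt : ∀ d ∈ ds, d < g := fun d hd => Nat.digits_lt_base hg hd
  have hdsne : ds ≠ [] := Nat.digits_ne_nil_iff_ne_zero.mpr hn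
  have hlast : ds.getLast hdsne ≠ 0 := Nat.getLast_digit_ne_zero g hn
  obtain ⟨k, hk1, hk2, hk3, hk4, hk5⟩ := niven_cut g hg ds hlt a ha hS
  set A := ds.take k with hA
  set B := ds.drop k with hB
  have hAlen : A.length = k := by rw [hA, List.length_take]; omega
  have hBlen : B.length = ds.length - k := by rw [hB, List.length_drop]
  have hAne : A ≠ [] := List.ne_nil_of_length_pos (by omega)
  have hBne : B ≠ [] := List.ne_nil_of_length_pos (by omega)
  have hAB : A ++ B = ds := List.take_append_drop k ds
  have hAlt : ∀ d ∈ A, d < g := fun d hd => hlt d (by rw [← hAB]; exact List.mem_append_left _ hd)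
  have hBlt : ∀ d ∈ B, d < g := fun d hd => hlt d (by rw [← hAB]; exact List.mem_append_right _ hd)
  have hBlast : ∀ h : B ≠ [], B.getLast h ≠ 0 := by
    intro h
    have h1 : B.getLast? = ds.getLast? := by
      rw [← hAB]; exact (List.getLast?_append_of_ne_nil A h).symm
    have h2 : ds.getLast? = some (ds.getLast hdsne) := List.getLast?_eq_getLast_of_ne_nil hdsne
    have h3 : B.getLast? = some (B.getLast h) := List.getLast?_eq_getLast_of_ne_nil h
    have : B.getLast h = ds.getLast hdsne := by
      rw [h1, h2] at h3; exact (Option.some_injective _ h3.symm)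
    rw [this]; exact hlast
  set n' := Nat.ofDigits g A with hn'
  set m0 := Nat.ofDigits g B with hm0
  have hdA : Nat.digits g n' = A := Nat.digits_ofDigits g (by omega) A hAlt hk3
  have hdB : Nat.digits g m0 = B := Nat.digits_ofDigits g (by omega) B hBlt hBlast
  have hn'pos : 0 < n' := by
    have h1 : Nat.digits g n' ≠ [] := by rw [hdA]; exact hAne
    exact Nat.pos_of_ne_zero (Nat.digits_ne_nil_iff_ne_zero.mp h1)
  have hm0pos : 0 < m0 := by
    have h1 : Nat.digits g m0 ≠ [] := by rw [hdB]; exact hBne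
    exact Nat.pos_of_ne_zero (Nat.digits_ne_nil_iff_ne_zero.mp h1)
  have hnval : n = n' + m0 * g ^ (Nat.digits g n').length := by
    conv_lhs => rw [← Nat.ofDigits_digits g n, ← hds, ← hAB]
    rw [Nat.ofDigits_append, hdA]
    ring
  refine ⟨n', m0, hn'pos, hm0pos, hnval, ?_, ?_, ?_, ?_⟩
  · rw [hdB]; exact hk4
  · rw [hdB]; exact hk5
  · rw [hdA, hdB, ← hAB]; simp
  · rw [hdA, hdB, ← hAB]; simp

set_option maxHeartbeats 2000000 in
lemma niven_aux (g : ℕ) (hg : 2 ≤ g) :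
    ∀ v : ℕ, ∀ _hv : 0 < v, ∀ n : ℕ, 0 < n → ∀ s : Fin v → ℕ, (∀ i, 0 < s i) →
      (Nat.digits g n).sum = ∑ i, s i →
      ((g : ℤ) - 2) * (v - 1) < (s ⟨v - 1, by omega⟩ : ℤ) →
      ∃ m : Fin v → ℕ, (∀ i, 0 < m i) ∧
        n = ∑ i, m i * g ^ (∑ j ∈ Finset.Ioi i, (Nat.digits g (m j)).length) ∧
        (∀ i, |((Nat.digits g (m i)).sum : ℤ) - (s i : ℤ)| ≤ ((g : ℤ) - 2) * (v - 1)) ∧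
        (Nat.digits g n).length = ∑ i, (Nat.digits g (m i)).length := by
  intro v
  induction v with
  | zero => omega
  | succ v' ih =>
    intro _ n hn s hs hsum hlast
    rcases Nat.eq_zero_or_pos v' with hv0 | hv'
    · subst hv0
      refine ⟨fun _ => n, fun _ => hn, ?_, ?_, ?_⟩
      · simp
      · intro i
        have hi : i = ⟨0, by omega⟩ := by
          ext; omega
        rw [Fin.sum_univ_one] at hsum
        subst hi
        rw [hsum]
        simp
      · simp
    -- main inductive step, v = v' + 1 with v' ≥ 1
    · have hlast' : ((g:ℤ)-2) * (v' : ℤ) < (s ⟨v', Nat.lt_succ_self v'⟩ : ℤ) := by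
        have h := hlast
        have e : ((g:ℤ)-2) * (((v'+1 : ℕ) : ℤ) - 1) = ((g:ℤ)-2) * (v' : ℤ) := by
          push_cast; ring
        rw [e] at h
        exact h
      have hlastN : (g - 2) * v' + 1 ≤ s ⟨v', Nat.lt_succ_self v'⟩ := by
        have hcast : (((g-2)*v' : ℕ) : ℤ) = ((g:ℤ)-2)*(v':ℤ) := by
          have h2 : ((g - 2 : ℕ) : ℤ) = (g:ℤ) - 2 := by omega
          rw [Nat.cast_mul, h2]
        rw [← hcast] at hlast'
        exact_mod_cast hlast'
      have hgv : (g-2) * 1 ≤ (g-2) * v' := Nat.mul_le_mul_left _ hv'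
      have hsv : s ⟨v', Nat.lt_succ_self v'⟩ ≤ ∑ i : Fin v', s i.succ := by
        have h1 : s ((⟨v'-1, by omega⟩ : Fin v').succ) ≤ ∑ i : Fin v', s i.succ :=
          Finset.single_le_sum (f := fun i : Fin v' => s i.succ)
            (fun i _ => Nat.zero_le _) (Finset.mem_univ (⟨v'-1, by omega⟩ : Fin v'))
        have heq : ((⟨v'-1, by omega⟩ : Fin v').succ : Fin (v'+1)) = ⟨v', Nat.lt_succ_self v'⟩ := by
          ext; simp [Fin.val_succ]; omega
        rwa [heq] at h1
      have hsum1 : (Nat.digits g n).sum = s 0 + ∑ i : Fin v', s i.succ := by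
        rw [hsum, Fin.sum_univ_succ]
      have hSa : s 0 + (g-1) ≤ (Nat.digits g n).sum := by omega
      obtain ⟨n', m0, hn'pos, hm0pos, hnval, ht1, ht2, htsum, htlen⟩ :=
        niven_peel g hg n (s 0) (hs 0) hSa
      set Δ := (Nat.digits g m0).sum - s 0 with hΔdef
      have hΔ1 : (Nat.digits g m0).sum = s 0 + Δ := by omega
      have hΔ2 : Δ ≤ g - 2 := by omega
      set s' : Fin v' → ℕ :=
        fun i => if (i : ℕ) = v' - 1 then s ⟨v', Nat.lt_succ_self v'⟩ - Δ else s i.succ with hs'def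
      have hΔs : Δ ≤ s ⟨v', Nat.lt_succ_self v'⟩ := by omega
      set L : Fin v' := ⟨v'-1, by omega⟩ with hLdef
      have hLsucc : (L.succ : Fin (v'+1)) = ⟨v', Nat.lt_succ_self v'⟩ := by
        ext; simp [Fin.val_succ, hLdef]; omega
      have e4 : s' L = s ⟨v', Nat.lt_succ_self v'⟩ - Δ := by
        simp [hs'def, hLdef]
      have e3 : ∑ i ∈ Finset.univ.erase L, s' i = ∑ i ∈ Finset.univ.erase L, s i.succ := by
        apply Finset.sum_congr rfl
        intro i hi
        have hiL : i ≠ L := (Finset.mem_erase.mp hi).1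
        have : (i : ℕ) ≠ v' - 1 := by
          intro h; apply hiL; ext; rw [h, hLdef]
        simp [hs'def, this]
      have e1 : ∑ i ∈ Finset.univ.erase L, s' i + s' L = ∑ i, s' i :=
        Finset.sum_erase_add _ _ (Finset.mem_univ L)
      have e2 : ∑ i ∈ Finset.univ.erase L, s i.succ + s L.succ = ∑ i : Fin v', s i.succ :=
        Finset.sum_erase_add _ _ (Finset.mem_univ L)
      have hsum'key : ∑ i, s' i + Δ = ∑ i : Fin v', s i.succ := by
        rw [← e1, ← e2, e3, e4, hLsucc]
        omega
      have hsum' : (Nat.digits g n').sum = ∑ i, s' i := by omega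
      have hs'pos : ∀ i, 0 < s' i := by
        intro i
        by_cases hi : (i : ℕ) = v' - 1
        · simp only [hs'def, hi, if_true]
          omega
        · simp only [hs'def, hi, if_false]
          exact hs _
      have hlast'' : ((g : ℤ) - 2) * ((v' : ℤ) - 1) < (s' ⟨v' - 1, by omega⟩ : ℤ) := by
        have hE : (s' ⟨v' - 1, by omega⟩ : ℕ) = s ⟨v', Nat.lt_succ_self v'⟩ - Δ := e4
        rw [hE]
        have e6 : ((s ⟨v', Nat.lt_succ_self v'⟩ - Δ : ℕ) : ℤ)
            = (s ⟨v', Nat.lt_succ_self v'⟩ : ℤ) - (Δ : ℤ) := by omega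
        rw [e6]
        have expand : ((g:ℤ)-2)*((v':ℤ)-1) = ((g:ℤ)-2)*(v':ℤ) - ((g:ℤ)-2) := by ring
        have hΔ2' : (Δ:ℤ) ≤ (g:ℤ) - 2 := by omega
        rw [expand]
        linarith
      obtain ⟨m', hm'pos, hm'val, hm'bound, hm'len⟩ :=
        ih hv' n' hn'pos s' hs'pos hsum' hlast''
      set M : Fin (v' + 1) → ℕ := Fin.cons m0 m' with hM
      refine ⟨M, ?_, ?_, ?_, ?_⟩
      · intro i
        cases i using Fin.cases with
        | zero => simpa [hM] using hm0pos
        | succ i => simpa [hM] using hm'pos i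
      · have hIoi0 : ∑ j ∈ Finset.Ioi (0 : Fin (v'+1)),
            (Nat.digits g (M j)).length = (Nat.digits g n').length := by
          rw [Fin.sum_Ioi_zero]
          simp only [hM, Fin.cons_succ]
          exact hm'len.symm
        have htail : (∑ i : Fin v', M i.succ
              * g ^ (∑ j ∈ Finset.Ioi i.succ, (Nat.digits g (M j)).length)) = n' := by
          rw [hm'val]
          apply Finset.sum_congr rfl
          intro i _
          rw [Fin.sum_Ioi_succ]
          simp only [hM, Fin.cons_succ]
        rw [Fin.sum_univ_succ, hIoi0, htail]
        simp only [hM, Fin.cons_zero]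
        rw [hnval]
        ring
      · have hcv : (((v'+1 : ℕ) : ℤ)) - 1 = (v' : ℤ) := by push_cast; ring
        have h1 : (1:ℤ) ≤ (v':ℤ) := by exact_mod_cast hv'
        have h2 : (0:ℤ) ≤ (g:ℤ) - 2 := by omega
        have h3 : ((g:ℤ)-2)*1 ≤ ((g:ℤ)-2)*(v':ℤ) := mul_le_mul_of_nonneg_left h1 h2
        have h4 : (Δ:ℤ) ≤ (g:ℤ)-2 := by omega
        intro i
        cases i using Fin.cases with
        | zero =>
          simp only [hM, Fin.cons_zero, hcv]
          rw [hΔ1, abs_le]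
          push_cast
          constructor <;> linarith
        | succ i =>
          simp only [hM, Fin.cons_succ, hcv]
          have hbound := hm'bound i
          by_cases hi : (i : ℕ) = v' - 1
          · have hiL : i = L := by ext; rw [hi, hLdef]
            have hisucc : (i.succ : Fin (v'+1)) = ⟨v', Nat.lt_succ_self v'⟩ := by
              rw [hiL]; exact hLsucc
            rw [hisucc, hiL]
            rw [hiL, e4] at hbound
            have e6 : ((s ⟨v', Nat.lt_succ_self v'⟩ - Δ : ℕ) : ℤ)
                = (s ⟨v', Nat.lt_succ_self v'⟩ : ℤ) - (Δ : ℤ) := by omega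
            rw [e6] at hbound
            have expand : ((g:ℤ)-2)*((v':ℤ)-1) = ((g:ℤ)-2)*(v':ℤ) - ((g:ℤ)-2) := by ring
            rcases abs_le.mp hbound with ⟨hb1, hb2⟩
            rw [expand] at hb1 hb2
            have hΔ0 : (0:ℤ) ≤ (Δ:ℤ) := by positivity
            rw [abs_le]
            constructor <;> linarith
          · have hs'i : s' i = s i.succ := by simp [hs'def, hi]
            rw [hs'i] at hbound
            have expand : ((g:ℤ)-2)*((v':ℤ)-1) = ((g:ℤ)-2)*(v':ℤ) - ((g:ℤ)-2) := by ring
            rcases abs_le.mp hbound with ⟨hb1, hb2⟩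
            rw [expand] at hb1 hb2
            rw [abs_le]
            constructor <;> linarith
      · rw [Fin.sum_univ_succ]
        simp only [hM, Fin.cons_zero, Fin.cons_succ]
        rw [← hm'len]
        omega


/-- Lemma 1 (splitting): if `s_g(n) = s 0 + ⋯ + s (v-1)` and the last part satisfies
`s (v-1) > (g-2)(v-1)`, then `n`'s base-`g` digit string is the concatenation of the
digit strings of positive integers `m 0, …, m (v-1)` with `|s_g(m i) - s i| ≤ (g-2)(v-1)`.
Concatenation means `n = ∑ i, m i * g ^ (∑_{j > i} ℓ_g(m j))`. -/
theorem niven_split (g : ℕ) (hg : 2 ≤ g) (n : ℕ) (hn : 0 < n) (v : ℕ) (hv : 0 < v)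
    (s : Fin v → ℕ) (hs : ∀ i, 0 < s i)
    (hsum : (Nat.digits g n).sum = ∑ i, s i)
    (hlast : ((g : ℤ) - 2) * (v - 1) < (s ⟨v - 1, by omega⟩ : ℤ)) :
    ∃ m : Fin v → ℕ, (∀ i, 0 < m i) ∧
      n = ∑ i, m i * g ^ (∑ j ∈ Finset.Ioi i, (Nat.digits g (m j)).length) ∧
      ∀ i, |((Nat.digits g (m i)).sum : ℤ) - (s i : ℤ)| ≤ ((g : ℤ) - 2) * (v - 1) := by
  obtain ⟨m, h1, h2, h3, _⟩ := niven_aux g hg v hv n hn s hs hsum hlast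
  exact ⟨m, h1, h2, h3⟩
end

section
/- Let n and n_1, ..., n_v be positive integers such that the base-g representation of n is the concatenation of the base-g representations of n_1, ..., n_v, and suppose each n_i is a sum of t_i base-g Niven numbers. Then n is a sum of t_1 + ... + t_v base-g Niven numbers. -/
/-- `m` is a base-`g` Niven number. -/
def IsNiven (g m : ℕ) : Prop := 0 < m ∧ (Nat.digits g m).sum ∣ m

/-- `n` is the sum of `t` base-`g` Niven numbers. -/
def IsSumOfNiven (g n t : ℕ) : Prop :=
  ∃ L : List ℕ, L.length = t ∧ (∀ m ∈ L, IsNiven g m) ∧ L.sum = n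

lemma niven_mul_pow {g x : ℕ} (hg : 2 ≤ g) (h : IsNiven g x) (e : ℕ) :
    IsNiven g (x * g ^ e) := by
  obtain ⟨hx, hd⟩ := h
  refine ⟨by positivity, ?_⟩
  have : Nat.digits g (g ^ e * x) = List.replicate e 0 ++ Nat.digits g x :=
    Nat.digits_base_pow_mul hg hx
  rw [mul_comm, this]
  simp only [List.sum_append, List.sum_replicate, smul_zero, zero_add]
  exact hd.mul_left _

/-- Lemma 2 (joining): if the base-`g` digit string of `n` is the concatenation of those of
`m 0, …, m (v-1)`, and each `m i` is a sum of `t i` base-`g` Niven numbers, then `n` is a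
sum of `∑ i, t i` base-`g` Niven numbers. -/
theorem niven_join (g : ℕ) (hg : 2 ≤ g) (n : ℕ) (hn : 0 < n) (v : ℕ) (hv : 0 < v)
    (m : Fin v → ℕ) (hm : ∀ i, 0 < m i)
    (hcat : n = ∑ i, m i * g ^ (∑ j ∈ Finset.Ioi i, (Nat.digits g (m j)).length))
    (t : Fin v → ℕ) (ht : ∀ i, IsSumOfNiven g (m i) (t i)) :
    IsSumOfNiven g n (∑ i, t i) := by
  choose L hlen hniv hsum using ht
  set e : Fin v → ℕ := fun i => ∑ j ∈ Finset.Ioi i, (Nat.digits g (m j)).length with he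
  refine ⟨(List.finRange v).flatMap (fun i => (L i).map (· * g ^ e i)), ?_, ?_, ?_⟩
  · simp only [List.length_flatMap, List.length_map]
    rw [Fin.sum_univ_def]
    congr 1
    apply List.map_congr_left
    intro i _
    simp [hlen]
  · intro x hx
    simp only [List.mem_flatMap, List.mem_map, List.mem_finRange, true_and] at hx
    obtain ⟨i, y, hy, rfl⟩ := hx
    exact niven_mul_pow hg (hniv i y hy) _
  · rw [hcat, Fin.sum_univ_def]
    rw [List.flatMap_def, List.sum_flatten, List.map_map]
    congr 1
    apply List.map_congr_left
    intro i _
    simp only [Function.comp]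
    rw [List.sum_map_mul_right, List.map_id'', hsum]
    exact fun _ => rfl
end

section
/- Let h be a positive integer, p a prime, and A ⊆ F_p. Then the set h^∧A of sums of h pairwise distinct elements of A satisfies |h^∧A| ≥ min{p, h|A| - h² + 1}. In particular, if |A| ≥ (p-1)/h + h, then h^∧A = F_p. -/
open MvPolynomial Finset

variable {F : Type*} [CommRing F] {n : ℕ}

private lemma finsupp_sum_eq (m : Fin n →₀ ℕ) : (m.sum fun _ e => e) = ∑ j, m j :=
  Finsupp.sum_fintype _ _ fun _ => rfl

private lemma erase_sum_add (i : Fin n) (m : Fin n →₀ ℕ) :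
    ((Finsupp.erase i m).sum fun _ e => e) + m i = m.sum fun _ e => e := by
  rw [finsupp_sum_eq, finsupp_sum_eq]
  rw [← Finset.sum_erase_add Finset.univ m (mem_univ i),
    ← Finset.sum_erase_add Finset.univ (fun j => Finsupp.erase i m j) (mem_univ i),
    Finsupp.erase_same, add_zero]
  congr 1
  refine Finset.sum_congr rfl fun j hj => ?_
  exact Finsupp.erase_ne (Finset.mem_erase.1 hj).1

lemma exists_div_lin (f : MvPolynomial (Fin n) F) (i : Fin n) (a : F) :
    ∃ g r : MvPolynomial (Fin n) F,
      f = (X i - C a) * g + r ∧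
      (∀ d, f.totalDegree ≤ d + 1 → g.totalDegree ≤ d) ∧
      (∀ σ : Fin n →₀ ℕ, σ i ≠ 0 → r.coeff σ = 0) ∧
      (∀ y : Fin n → F, eval y r = eval (Function.update y i a) f) := by
  classical
  refine ⟨∑ m ∈ f.support, monomial (Finsupp.erase i m) (f.coeff m) *
      ∑ j ∈ Finset.range (m i), X i ^ j * C a ^ (m i - 1 - j),
    ∑ m ∈ f.support, monomial (Finsupp.erase i m) (f.coeff m * a ^ (m i)), ?_, ?_, ?_, ?_⟩
  · conv_lhs => rw [f.as_sum]
    rw [Finset.mul_sum, ← Finset.sum_add_distrib]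
    refine Finset.sum_congr rfl fun m _ => ?_
    have h1 : monomial m (f.coeff m) =
        monomial (Finsupp.erase i m) (f.coeff m) * X i ^ (m i) := by
      rw [X_pow_eq_monomial, monomial_mul, mul_one, Finsupp.erase_add_single]
    have h2 : (X i : MvPolynomial (Fin n) F) ^ (m i) =
        (∑ j ∈ Finset.range (m i), X i ^ j * C a ^ (m i - 1 - j)) * (X i - C a) + C a ^ (m i) := by
      rw [geom_sum₂_mul]; ring
    have h3 : monomial (Finsupp.erase i m) (f.coeff m * a ^ (m i)) =
        monomial (Finsupp.erase i m) (f.coeff m) * C a ^ (m i) := by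
      rw [← C_pow, C_apply, monomial_mul, add_zero]
    rw [h1, h2, h3]; ring
  · intro d hd
    refine (totalDegree_finset_sum _ _).trans (Finset.sup_le fun m hm => ?_)
    by_cases h0 : m i = 0
    · rw [h0]; simp
    · refine (totalDegree_mul _ _).trans ?_
      have hmon := totalDegree_monomial_le (Finsupp.erase i m) (f.coeff m)
      have hgeom : (∑ j ∈ Finset.range (m i), (X i : MvPolynomial (Fin n) F) ^ j *
          C a ^ (m i - 1 - j)).totalDegree ≤ m i - 1 := by
        refine (totalDegree_finset_sum _ _).trans (Finset.sup_le fun j hj => ?_)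
        refine (totalDegree_mul _ _).trans ?_
        rw [← C_pow, totalDegree_C, add_zero, X_pow_eq_monomial]
        refine (totalDegree_monomial_le _ _).trans ?_
        rw [Finsupp.sum_single_index rfl]
        exact Nat.le_sub_one_of_lt (Finset.mem_range.1 hj)
      have he := erase_sum_add i m
      have hms : (m.sum fun _ e => e) ≤ d + 1 := (le_totalDegree hm).trans hd
      have : ((Finsupp.erase i m).sum fun _ => id) = (Finsupp.erase i m).sum fun _ e => e := rfl
      omega
  · intro σ hσ
    rw [coeff_sum]
    refine Finset.sum_eq_zero fun m _ => ?_
    rw [coeff_monomial, if_neg]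
    intro h
    exact hσ (h ▸ Finsupp.erase_same)
  · intro y
    rw [map_sum, eval_eq]
    refine Finset.sum_congr rfl fun m _ => ?_
    rw [eval_monomial]
    have key : (∏ j ∈ m.support, Function.update y i a j ^ m j)
        = a ^ m i * ∏ j ∈ (Finsupp.erase i m).support, y j ^ (Finsupp.erase i m) j := by
      rw [Finsupp.support_erase]
      by_cases hi : i ∈ m.support
      · have hcong : ∀ j ∈ m.support.erase i,
            Function.update y i a j ^ m j = y j ^ (Finsupp.erase i m) j := by
          intro j hj
          obtain ⟨hji, _⟩ := Finset.mem_erase.1 hj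
          rw [Finsupp.erase_ne hji, Function.update_of_ne hji]
        rw [← Finset.mul_prod_erase _ _ hi, Function.update_self,
          Finset.prod_congr rfl hcong]
      · have hcong : ∀ j ∈ m.support,
            Function.update y i a j ^ m j = y j ^ (Finsupp.erase i m) j := by
          intro j hj
          have hji : j ≠ i := fun h => hi (h ▸ hj)
          rw [Finsupp.erase_ne hji, Function.update_of_ne hji]
        rw [Finset.erase_eq_of_notMem hi, Finsupp.notMem_support_iff.1 hi, pow_zero, one_mul]
        exact Finset.prod_congr rfl hcong
    show coeff m f * a ^ m i *
        ∏ j ∈ (Finsupp.erase i m).support, y j ^ (Finsupp.erase i m) j = _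
    rw [key]; ring

theorem comb_null {F : Type*} [Field F] : ∀ (N : ℕ) {n : ℕ}
    (S : Fin n → Finset F) (t : Fin n →₀ ℕ), (∑ i, t i) ≤ N → (∀ i, t i < (S i).card) →
    ∀ (f : MvPolynomial (Fin n) F), f.totalDegree ≤ ∑ i, t i → f.coeff t ≠ 0 →
    ∃ x : Fin n → F, (∀ i, x i ∈ S i) ∧ eval x f ≠ 0 := by
  intro N
  induction N with
  | zero =>
    intro n S t htN hS f hdeg hc
    classical
    have hsum0 : ∑ i, t i = 0 := Nat.le_zero.1 htN
    have ht0 : t = 0 := by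
      ext i
      have := Finset.sum_eq_zero_iff.1 hsum0 i (mem_univ i)
      simpa using this
    have hx : ∀ i, ∃ a, a ∈ S i := fun i =>
      Finset.card_pos.1 (lt_of_le_of_lt (Nat.zero_le _) (hS i))
    choose x hxmem using hx
    refine ⟨x, hxmem, ?_⟩
    have hdeg0 : f.totalDegree = 0 := by
      rw [hsum0] at hdeg; exact Nat.le_zero.1 hdeg
    have hsupp : f.support = {0} := by
      rw [Finset.eq_singleton_iff_unique_mem]
      constructor
      · rw [mem_support_iff]; rw [ht0] at hc; exact hc
      · intro d hd
        have := le_totalDegree hd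
        rw [hdeg0, Nat.le_zero, finsupp_sum_eq] at this
        ext i
        simpa using Finset.sum_eq_zero_iff.1 this i (mem_univ i)
    rw [eval_eq, hsupp, Finset.sum_singleton, Finsupp.support_zero, Finset.prod_empty, mul_one]
    rw [ht0] at hc; exact hc
  | succ N ih =>
    intro n S t htN hS f hdeg hc
    classical
    by_cases hle : ∑ i, t i ≤ N
    · exact ih S t hle hS f hdeg hc
    have hsum : ∑ i, t i = N + 1 := le_antisymm htN (not_le.1 hle)
    have hex : ∃ i, t i ≠ 0 := by
      by_contra hcon
      push_neg at hcon
      rw [Finset.sum_eq_zero (fun i _ => hcon i)] at hsum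
      omega
    obtain ⟨i, hti⟩ := hex
    obtain ⟨a, ha⟩ : (S i).Nonempty :=
      Finset.card_pos.1 (lt_of_le_of_lt (Nat.zero_le _) (hS i))
    obtain ⟨g, r, hfgr, hgdeg, hrcoeff, hreval⟩ := exists_div_lin f i a
    set t' : Fin n →₀ ℕ := t - Finsupp.single i 1 with ht'def
    have ht'i : t' i = t i - 1 := by
      rw [ht'def, Finsupp.tsub_apply, Finsupp.single_eq_same]
    have ht'ne : ∀ j, j ≠ i → t' j = t j := fun j hj => by
      rw [ht'def, Finsupp.tsub_apply, Finsupp.single_eq_of_ne hj, Nat.sub_zero]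
    have hsum' : ∑ j, t' j = N := by
      have h1 : ∑ j ∈ Finset.univ.erase i, t' j + t' i = ∑ j, t' j :=
        Finset.sum_erase_add _ _ (Finset.mem_univ i)
      have h2 : ∑ j ∈ Finset.univ.erase i, t j + t i = ∑ j, t j :=
        Finset.sum_erase_add _ _ (Finset.mem_univ i)
      have h3 : ∑ j ∈ Finset.univ.erase i, t' j = ∑ j ∈ Finset.univ.erase i, t j :=
        Finset.sum_congr rfl fun j hj => ht'ne j (Finset.mem_erase.1 hj).1
      omega
    have hsupsum : ∑ j ∈ t.support, t j = ∑ j, t j := by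
      refine Finset.sum_subset (Finset.subset_univ _) fun j _ hj => ?_
      exact Finsupp.notMem_support_iff.1 hj
    have hgdeg' : g.totalDegree ≤ N := hgdeg N (by omega)
    have hcg : g.coeff t' ≠ 0 := by
      have h1 : f.coeff t = g.coeff t' - a * g.coeff t + r.coeff t := by
        conv_lhs => rw [hfgr]
        rw [coeff_add, sub_mul, coeff_sub, coeff_C_mul, coeff_X_mul',
          if_pos (Finsupp.mem_support_iff.2 hti)]
      have h2 : g.coeff t = 0 := by
        apply coeff_eq_zero_of_totalDegree_lt
        rw [hsupsum]; omega
      have h3 : r.coeff t = 0 := hrcoeff t hti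
      rw [h2, h3, mul_zero, sub_zero, add_zero] at h1
      rw [← h1]; exact hc
    set S' := Function.update S i ((S i).erase a) with hS'def
    have hS' : ∀ j, t' j < (S' j).card := by
      intro j
      by_cases hj : j = i
      · subst hj
        rw [ht'i, hS'def, Function.update_self, Finset.card_erase_of_mem ha]
        have := hS j
        omega
      · rw [ht'ne j hj, hS'def, Function.update_of_ne hj]
        exact hS j
    obtain ⟨y, hy, hgy⟩ := ih S' t' (le_of_eq hsum') hS' g (by omega) hcg
    have hyi : y i ∈ (S i).erase a := by
      have := hy i
      rwa [hS'def, Function.update_self] at this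
    have hyia : y i ≠ a := (Finset.mem_erase.1 hyi).1
    have hy' : ∀ j, y j ∈ S j := by
      intro j
      by_cases hj : j = i
      · subst hj; exact Finset.erase_subset _ _ hyi
      · have := hy j
        rwa [hS'def, Function.update_of_ne hj] at this
    by_cases hfy : eval y f = 0
    · refine ⟨Function.update y i a, fun j => ?_, ?_⟩
      · by_cases hj : j = i
        · subst hj; rw [Function.update_self]; exact ha
        · rw [Function.update_of_ne hj]; exact hy' j
      · rw [← hreval y]
        have heq : eval y f = (y i - a) * eval y g + eval y r := by
          conv_lhs => rw [hfgr]
          rw [map_add, map_mul, map_sub, eval_X, eval_C]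
        rw [hfy] at heq
        have : eval y r = -((y i - a) * eval y g) := eq_neg_of_add_eq_zero_right heq.symm
        rw [this]
        exact neg_ne_zero.2 (mul_ne_zero (sub_ne_zero.2 hyia) hgy)
    · exact ⟨y, hy', hfy⟩


open MvPolynomial Finset

variable {R : Type*} {n : ℕ}

lemma prod_monomial_one [CommSemiring R] {ι : Type*} (s : Finset ι) (d : ι → (Fin n →₀ ℕ)) :
    ∏ i ∈ s, (monomial (d i) (1 : R)) = monomial (∑ i ∈ s, d i) 1 := by
  classical
  induction s using Finset.induction with
  | empty => simp [MvPolynomial.monomial_zero', MvPolynomial.C_1]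
  | insert _ _ hx ih =>
    rw [Finset.prod_insert hx, Finset.sum_insert hx, ih, monomial_mul, one_mul]

lemma sum_single_apply (k : Fin n → ℕ) (j : Fin n) :
    (∑ i, Finsupp.single i (k i)) j = k j := by
  classical
  rw [Finsupp.finset_sum_apply]
  rw [Finset.sum_congr rfl (fun i _ => Finsupp.single_apply)]
  rw [Finset.sum_ite_eq' Finset.univ j k, if_pos (Finset.mem_univ j)]

lemma usig_apply (σ : Equiv.Perm (Fin n)) (j : Fin n) :
    (∑ i, Finsupp.single (σ i) (i : ℕ)) j = ((σ⁻¹ j : Fin n) : ℕ) := by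
  classical
  have : (∑ i, Finsupp.single (σ i) (i : ℕ))
      = ∑ i, Finsupp.single i (((σ⁻¹ i : Fin n)) : ℕ) := by
    rw [← Equiv.sum_comp σ (fun i => Finsupp.single i (((σ⁻¹ i : Fin n)) : ℕ))]
    refine Finset.sum_congr rfl fun i _ => ?_
    rw [show σ⁻¹ (σ i) = i from σ.symm_apply_apply i]
  rw [this, sum_single_apply]

lemma usig_sum (σ : Equiv.Perm (Fin n)) :
    ∑ j, ((∑ i, Finsupp.single (σ i) (i : ℕ)) j) = ∑ i : Fin n, (i : ℕ) := by
  rw [Finset.sum_congr rfl (fun j _ => usig_apply σ j)]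
  exact Equiv.sum_comp σ⁻¹ (fun i => (i : ℕ))

lemma vdet_eq [CommRing R] :
    (Matrix.vandermonde fun i : Fin n => (X i : MvPolynomial (Fin n) R)).det
      = ∑ σ : Equiv.Perm (Fin n),
        (Equiv.Perm.sign σ : ℤ) • monomial (∑ i, Finsupp.single (σ i) (i : ℕ)) (1 : R) := by
  rw [Matrix.det_apply]
  refine Finset.sum_congr rfl fun σ _ => ?_
  rw [Units.smul_def]
  congr 1
  rw [Finset.prod_congr rfl (fun i _ => by
    rw [Matrix.vandermonde_apply, X_pow_eq_monomial] :
      ∀ i ∈ Finset.univ, (Matrix.vandermonde fun i : Fin n => (X i : MvPolynomial (Fin n) R)) (σ i) i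
        = monomial (Finsupp.single (σ i) (i : ℕ)) (1 : R))]
  exact prod_monomial_one _ _

lemma vdet_totalDegree [CommRing R] :
    (Matrix.vandermonde fun i : Fin n => (X i : MvPolynomial (Fin n) R)).det.totalDegree
      ≤ ∑ i : Fin n, (i : ℕ) := by
  rw [vdet_eq]
  refine (totalDegree_finset_sum _ _).trans (Finset.sup_le fun σ _ => ?_)
  refine (totalDegree_smul_le _ _).trans ?_
  refine (totalDegree_monomial_le _ _).trans ?_
  have : ((∑ i : Fin n, Finsupp.single (σ i) (i : ℕ)).sum fun _ => id)
      = (∑ i : Fin n, Finsupp.single (σ i) (i : ℕ)).sum fun _ e => e := rfl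
  rw [this, finsupp_sum_eq, usig_sum]

lemma coeff_sum_X_pow [CommSemiring R] (ν : Fin n →₀ ℕ) (m : ℕ) (hν : ∑ j, ν j = m) :
    coeff ν ((∑ j : Fin n, (X j : MvPolynomial (Fin n) R)) ^ m)
      = (Nat.multinomial Finset.univ (fun j => ν j) : R) := by
  classical
  rw [Finset.sum_pow_eq_sum_piAntidiag, coeff_sum]
  have hmem : (fun j => ν j) ∈ Finset.univ.piAntidiag m :=
    Finset.mem_piAntidiag.2 ⟨hν, fun i _ => Finset.mem_univ i⟩
  rw [Finset.sum_eq_single_of_mem _ hmem]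
  · have hprod : (∏ i : Fin n, (X i : MvPolynomial (Fin n) R) ^ ν i)
        = monomial (∑ i, Finsupp.single i (ν i)) 1 := by
      rw [Finset.prod_congr rfl (fun i _ => X_pow_eq_monomial), prod_monomial_one]
    have hν' : (∑ i, Finsupp.single i (ν i)) = ν := by
      ext j; rw [sum_single_apply]
    rw [hprod, hν']
    rw [show ((Nat.multinomial Finset.univ fun j => ν j : ℕ) : MvPolynomial (Fin n) R)
        = MvPolynomial.C ((Nat.multinomial Finset.univ fun j => ν j : ℕ) : R) from
      (map_natCast (MvPolynomial.C : R →+* MvPolynomial (Fin n) R) _).symm]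
    rw [coeff_C_mul, coeff_monomial, if_pos rfl, mul_one]
  · intro k hk hkne
    have hprod : (∏ i : Fin n, (X i : MvPolynomial (Fin n) R) ^ k i)
        = monomial (∑ i, Finsupp.single i (k i)) 1 := by
      rw [Finset.prod_congr rfl (fun i _ => X_pow_eq_monomial), prod_monomial_one]
    rw [show ((Nat.multinomial Finset.univ k : ℕ) : MvPolynomial (Fin n) R)
        = MvPolynomial.C ((Nat.multinomial Finset.univ k : ℕ) : R) from
      (map_natCast (MvPolynomial.C : R →+* MvPolynomial (Fin n) R) _).symm]
    rw [hprod, coeff_C_mul, coeff_monomial, if_neg, mul_zero]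
    intro hcon
    exact hkne (funext fun j => by rw [← sum_single_apply k j, hcon])
section Key

open Equiv

variable {p : ℕ}

lemma key_coeff (hp : p.Prime) [NeZero p] {h : ℕ} (C : Finset (ZMod p)) (E : ℕ)
    (hCcard : C.card = E) (tf : Fin h → ℕ) (hmono : StrictMono tf)
    (htp : ∀ i, tf i < p) (hEp : E < p)
    (hsum : ∑ i, tf i = E + ∑ i : Fin h, (i : ℕ)) :
    MvPolynomial.coeff (Finsupp.equivFunOnFinite.symm tf)
      ((∏ c ∈ C, ((∑ j : Fin h, X j) - MvPolynomial.C c)) *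
        (Matrix.vandermonde fun i : Fin h => (X i : MvPolynomial (Fin h) (ZMod p))).det) ≠ 0 := by
  classical
  haveI : Fact p.Prime := ⟨hp⟩
  set τ : Fin h →₀ ℕ := Finsupp.equivFunOnFinite.symm tf with hτdef
  have hτ : ∀ i, τ i = tf i := fun i => rfl
  set T : ℕ := ∑ i : Fin h, (i : ℕ) with hTdef
  set SX : MvPolynomial (Fin h) (ZMod p) := ∑ j : Fin h, X j with hSXdef
  set V : MvPolynomial (Fin h) (ZMod p) :=
    (Matrix.vandermonde fun i : Fin h => (X i : MvPolynomial (Fin h) (ZMod p))).det with hVdef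
  -- support sum of τ
  have hsupτ : ∑ j ∈ τ.support, τ j = E + T := by
    rw [Finset.sum_subset (Finset.subset_univ _)
      (fun j _ hj => Finsupp.notMem_support_iff.1 hj)]
    rw [Finset.sum_congr rfl fun j _ => hτ j, hsum]
  -- degree facts
  have hSXdeg : SX.totalDegree ≤ 1 := by
    rw [hSXdef]
    exact (totalDegree_finset_sum _ _).trans
      (Finset.sup_le fun j _ => le_of_eq (totalDegree_X j))
  have hVdeg : V.totalDegree ≤ T := vdet_totalDegree
  -- Step A : reduce the product to SX^E
  set q : Polynomial (ZMod p) := ∏ c ∈ C, (Polynomial.X - Polynomial.C c) with hqdef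
  have hqmonic : q.Monic :=
    Polynomial.monic_prod_of_monic _ _ fun c _ => Polynomial.monic_X_sub_C c
  have hqdeg : q.natDegree = E := by
    rw [hqdef, Polynomial.natDegree_prod _ _
      (fun c _ => (Polynomial.monic_X_sub_C c).ne_zero)]
    rw [Finset.sum_congr rfl fun c _ => Polynomial.natDegree_X_sub_C c]
    rw [Finset.sum_const, smul_eq_mul, mul_one, hCcard]
  have hqE : q.coeff E = 1 := by
    rw [← hqdeg]; exact hqmonic.coeff_natDegree
  have hPsum : (∏ c ∈ C, (SX - MvPolynomial.C c))
      = ∑ j ∈ Finset.range (E + 1), MvPolynomial.C (q.coeff j) * SX ^ j := by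
    have h1 : (∏ c ∈ C, (SX - MvPolynomial.C c))
        = Polynomial.eval₂ MvPolynomial.C SX q := by
      rw [hqdef]
      rw [show Polynomial.eval₂ (MvPolynomial.C : ZMod p →+* MvPolynomial (Fin h) (ZMod p)) SX
            (∏ c ∈ C, (Polynomial.X - Polynomial.C c))
          = (Polynomial.eval₂RingHom (MvPolynomial.C : ZMod p →+* MvPolynomial (Fin h) (ZMod p)) SX)
            (∏ c ∈ C, (Polynomial.X - Polynomial.C c)) from rfl]
      rw [map_prod]
      refine (Finset.prod_congr rfl fun c _ => ?_).symm
      rw [Polynomial.coe_eval₂RingHom, Polynomial.eval₂_sub, Polynomial.eval₂_X,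
        Polynomial.eval₂_C]
    rw [h1, Polynomial.eval₂_eq_sum_range, hqdeg]
  -- the coefficient reduces to that of SX^E * V
  have hstepA : MvPolynomial.coeff τ ((∏ c ∈ C, (SX - MvPolynomial.C c)) * V)
      = MvPolynomial.coeff τ (SX ^ E * V) := by
    rw [hPsum, Finset.sum_mul, MvPolynomial.coeff_sum]
    have hterm : ∀ j ∈ Finset.range (E + 1),
        MvPolynomial.coeff τ (MvPolynomial.C (q.coeff j) * SX ^ j * V)
          = q.coeff j * MvPolynomial.coeff τ (SX ^ j * V) := fun j _ => by
      rw [mul_assoc, MvPolynomial.coeff_C_mul]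
    rw [Finset.sum_congr rfl hterm]
    rw [Finset.sum_eq_single_of_mem E (Finset.self_mem_range_succ E)]
    · rw [hqE, one_mul]
    · intro j hj hjne
      have hjE : j < E := lt_of_le_of_ne (Nat.lt_succ_iff.1 (Finset.mem_range.1 hj)) hjne
      have : MvPolynomial.coeff τ (SX ^ j * V) = 0 := by
        apply MvPolynomial.coeff_eq_zero_of_totalDegree_lt
        rw [hsupτ]
        calc (SX ^ j * V).totalDegree ≤ (SX ^ j).totalDegree + V.totalDegree :=
              MvPolynomial.totalDegree_mul _ _
          _ ≤ j * SX.totalDegree + T := by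
              exact Nat.add_le_add (MvPolynomial.totalDegree_pow _ _) hVdeg
          _ ≤ j * 1 + T := by
              exact Nat.add_le_add_right (Nat.mul_le_mul_left j hSXdeg) T
          _ < E + T := by omega
      rw [this, mul_zero]
  -- Step B : expand the Vandermonde determinant
  set nn : Equiv.Perm (Fin h) → ℕ := fun σ =>
    if ∀ i, ((σ⁻¹ i : Fin h) : ℕ) ≤ tf i then
      Nat.multinomial Finset.univ (fun j => tf j - ((σ⁻¹ j : Fin h) : ℕ)) else 0 with hnndef
  have hsumc : ∀ σ : Equiv.Perm (Fin h), (∀ i, ((σ⁻¹ i : Fin h) : ℕ) ≤ tf i) →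
      ∑ j, (tf j - ((σ⁻¹ j : Fin h) : ℕ)) = E := by
    intro σ hc
    have h1 : ∑ j, (tf j - ((σ⁻¹ j : Fin h) : ℕ)) + ∑ j, ((σ⁻¹ j : Fin h) : ℕ)
        = ∑ j, tf j := by
      rw [← Finset.sum_add_distrib]
      exact Finset.sum_congr rfl fun j _ => Nat.sub_add_cancel (hc j)
    have h2 : ∑ j, ((σ⁻¹ j : Fin h) : ℕ) = T := Equiv.sum_comp σ⁻¹ (fun i => (i : ℕ))
    omega
  have hB : ∀ σ : Equiv.Perm (Fin h),
      MvPolynomial.coeff τ (SX ^ E *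
          ((Equiv.Perm.sign σ : ℤ) • monomial (∑ i, Finsupp.single (σ i) (i : ℕ)) (1 : ZMod p)))
        = (((Equiv.Perm.sign σ : ℤ) * (nn σ : ℤ) : ℤ) : ZMod p) := by
    intro σ
    rw [mul_smul_comm, MvPolynomial.coeff_smul]
    rw [MvPolynomial.coeff_mul_monomial']
    rw [Int.cast_mul, Int.cast_natCast]
    by_cases hc : ∀ i, ((σ⁻¹ i : Fin h) : ℕ) ≤ tf i
    · have hle : (∑ i, Finsupp.single (σ i) (i : ℕ)) ≤ τ := by
        rw [Finsupp.le_def]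
        intro j
        rw [usig_apply σ j, hτ j]
        exact hc j
      rw [if_pos hle]
      have hν : ∑ j, (τ - ∑ i, Finsupp.single (σ i) (i : ℕ)) j = E := by
        rw [Finset.sum_congr rfl (fun j _ => by
          rw [Finsupp.tsub_apply, usig_apply σ j, hτ j])]
        exact hsumc σ hc
      rw [coeff_sum_X_pow _ E hν, mul_one]
      have hfun : (fun j => (τ - ∑ i, Finsupp.single (σ i) (i : ℕ)) j)
          = fun j => tf j - ((σ⁻¹ j : Fin h) : ℕ) := by
        funext j
        rw [Finsupp.tsub_apply, usig_apply σ j, hτ j]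
      rw [hfun]
      simp only [hnndef]
      rw [if_pos hc]
      exact zsmul_eq_mul _ _
    · have hle : ¬ ((∑ i, Finsupp.single (σ i) (i : ℕ)) ≤ τ) := by
        intro hcon
        apply hc
        intro i
        have := Finsupp.le_def.1 hcon i
        rwa [usig_apply σ i, hτ i] at this
      rw [if_neg hle]
      simp only [hnndef]
      rw [if_neg hc, smul_zero, Nat.cast_zero, mul_zero]
  set Kz : ℤ := ∑ σ : Equiv.Perm (Fin h), (Equiv.Perm.sign σ : ℤ) * (nn σ : ℤ) with hKzdef
  have hstepB : MvPolynomial.coeff τ (SX ^ E * V) = ((Kz : ℤ) : ZMod p) := by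
    rw [hVdef, vdet_eq, Finset.mul_sum, MvPolynomial.coeff_sum]
    rw [Finset.sum_congr rfl (fun σ _ => hB σ), hKzdef, Int.cast_sum]
  -- Step C : the integer Kz is not divisible by p
  have hKnd : ¬ ((p : ℤ) ∣ Kz) := by
    intro hdvd
    -- the factorial identity
    have hperm : ∀ σ : Equiv.Perm (Fin h),
        (nn σ : ℤ) * ∏ i, ((tf i).factorial : ℤ)
          = (E.factorial : ℤ) * ∏ i, (((tf i).descFactorial ((σ⁻¹ i : Fin h) : ℕ) : ℕ) : ℤ) := by
      intro σ
      by_cases hc : ∀ i, ((σ⁻¹ i : Fin h) : ℕ) ≤ tf i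
      · have hnat : nn σ * ∏ i, (tf i).factorial
            = E.factorial * ∏ i, (tf i).descFactorial ((σ⁻¹ i : Fin h) : ℕ) := by
          simp only [hnndef]
          rw [if_pos hc]
          have hfac : ∀ i : Fin h, (tf i).factorial
              = (tf i - ((σ⁻¹ i : Fin h) : ℕ)).factorial
                  * (tf i).descFactorial ((σ⁻¹ i : Fin h) : ℕ) :=
            fun i => (Nat.factorial_mul_descFactorial (hc i)).symm
          rw [Finset.prod_congr rfl fun i _ => hfac i, Finset.prod_mul_distrib, ← mul_assoc]
          congr 1
          have hspec := Nat.multinomial_spec Finset.univ (fun j => tf j - ((σ⁻¹ j : Fin h) : ℕ))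
          rw [hsumc σ hc] at hspec
          rw [mul_comm]
          exact hspec
        exact_mod_cast congrArg (Nat.cast : ℕ → ℤ) hnat
      · simp only [hnndef]
        rw [if_neg hc]
        push_neg at hc
        obtain ⟨i, hi⟩ := hc
        have hz : (((tf i).descFactorial ((σ⁻¹ i : Fin h) : ℕ) : ℕ) : ℤ) = 0 := by
          rw [Nat.descFactorial_eq_zero_iff_lt.2 hi, Nat.cast_zero]
        rw [Finset.prod_eq_zero (f := fun i : Fin h =>
            (((tf i).descFactorial ((σ⁻¹ i : Fin h) : ℕ) : ℕ) : ℤ)) (Finset.mem_univ i) hz,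
          Nat.cast_zero, zero_mul, mul_zero]
    set D : ℤ := ∑ σ : Equiv.Perm (Fin h),
      (Equiv.Perm.sign σ : ℤ) * ∏ i, (((tf i).descFactorial ((σ⁻¹ i : Fin h) : ℕ) : ℕ) : ℤ)
      with hDdef
    have hKfact : Kz * ∏ i, ((tf i).factorial : ℤ) = (E.factorial : ℤ) * D := by
      rw [hKzdef, Finset.sum_mul, hDdef, Finset.mul_sum]
      refine Finset.sum_congr rfl fun σ _ => ?_
      rw [mul_assoc, hperm σ]
      ring
    have hDdet : D = ∏ i : Fin h, ∏ j ∈ Finset.Ioi i, ((tf j : ℤ) - (tf i : ℤ)) := by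
      have hD2 : D = ∑ σ : Equiv.Perm (Fin h),
          (Equiv.Perm.sign σ : ℤ) * ∏ i, (((tf i).descFactorial ((σ i : Fin h) : ℕ) : ℕ) : ℤ) := by
        rw [hDdef]
        rw [← Equiv.sum_comp (Equiv.inv (Equiv.Perm (Fin h)))
          (fun σ : Equiv.Perm (Fin h) => (Equiv.Perm.sign σ : ℤ)
            * ∏ i, (((tf i).descFactorial ((σ⁻¹ i : Fin h) : ℕ) : ℕ) : ℤ))]
        refine Finset.sum_congr rfl fun σ _ => ?_
        simp only [Equiv.inv_apply, Equiv.Perm.sign_inv, inv_inv]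
      rw [hD2]
      have hdet : (Matrix.of fun i j : Fin h => (((tf j).descFactorial (i : ℕ) : ℕ) : ℤ)).det
          = ∑ σ : Equiv.Perm (Fin h),
            (Equiv.Perm.sign σ : ℤ) * ∏ i, (((tf i).descFactorial ((σ i : Fin h) : ℕ) : ℕ) : ℤ) := by
        rw [Matrix.det_apply]
        refine Finset.sum_congr rfl fun σ _ => ?_
        rw [Units.smul_def, zsmul_eq_mul]
        simp [Matrix.of_apply, Int.cast_id]
      rw [← hdet]
      have htrans : (Matrix.of fun i j : Fin h => (((tf j).descFactorial (i : ℕ) : ℕ) : ℤ))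
          = Matrix.transpose (Matrix.of fun i j : Fin h =>
              Polynomial.eval ((tf i : ℤ)) (descPochhammer ℤ (j : ℕ))) := by
        ext i j
        rw [Matrix.transpose_apply, Matrix.of_apply, Matrix.of_apply,
          descPochhammer_eval_eq_descFactorial]
      rw [htrans, Matrix.det_transpose,
        ← Matrix.det_eval_matrixOfPolynomials_eq_det_vandermonde
          (fun i => (tf i : ℤ)) (fun j => descPochhammer ℤ (j : ℕ))
          (fun j => descPochhammer_natDegree ℤ (j : ℕ))
          (fun j => monic_descPochhammer ℤ (j : ℕ)),
        Matrix.det_vandermonde]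
    set W : ℕ := ∏ i : Fin h, ∏ j ∈ Finset.Ioi i, (tf j - tf i) with hWdef
    have hWcast : ((W : ℕ) : ℤ) = ∏ i : Fin h, ∏ j ∈ Finset.Ioi i, ((tf j : ℤ) - (tf i : ℤ)) := by
      rw [hWdef, Nat.cast_prod]
      refine Finset.prod_congr rfl fun i _ => ?_
      rw [Nat.cast_prod]
      refine Finset.prod_congr rfl fun j hj => ?_
      exact Nat.cast_sub (hmono (Finset.mem_Ioi.1 hj)).le
    have hdvd2 : (p : ℤ) ∣ ((E.factorial * W : ℕ) : ℤ) := by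
      rw [Nat.cast_mul, hWcast, ← hDdet, ← hKfact]
      exact hdvd.mul_right _
    have hdvd3 : p ∣ E.factorial * W := Int.natCast_dvd_natCast.1 hdvd2
    rcases (Nat.Prime.dvd_mul hp).1 hdvd3 with hca | hcb
    · have := (Nat.Prime.dvd_factorial hp).1 hca
      omega
    · obtain ⟨i, _, hi⟩ := (hp.prime.dvd_finset_prod_iff _).1 hcb
      obtain ⟨j, hj, hij⟩ := (hp.prime.dvd_finset_prod_iff _).1 hi
      have hlt := hmono (Finset.mem_Ioi.1 hj)
      have hle := Nat.le_of_dvd (by omega) hij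
      have := htp j
      omega
  rw [hstepA, hstepB]
  intro h0
  exact hKnd ((ZMod.intCast_zmod_eq_zero_iff_dvd Kz p).1 h0)

end Key
section Main

open Equiv

lemma ddh_main (h p : ℕ) (hh : 0 < h) (hp : p.Prime) [NeZero p] (A : Finset (ZMod p))
    (hhk : h ≤ A.card) (E : ℕ) (hE1 : E ≤ h * (A.card - h)) (hE2 : E ≤ p - 1) :
    E + 1 ≤ ((A.powersetCard h).image (fun s => ∑ x ∈ s, x)).card := by
  classical
  haveI := Fact.mk hp
  set k := A.card with hkdef
  by_contra hN
  push_neg at hN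
  have hcard : ((A.powersetCard h).image (fun s => ∑ x ∈ s, x)).card ≤ E := by omega
  have hp2 := hp.two_le
  obtain ⟨C, hsub, hCcard⟩ := Finset.exists_superset_card_eq hcard
    (by rw [ZMod.card]; omega)
  -- construct the exponents
  set d := E / h with hddef
  set s := E % h with hsdef
  have hds : h * d + s = E := Nat.div_add_mod E h
  have hsh : s < h := Nat.mod_lt E hh
  set tf : Fin h → ℕ := fun i => d + (i : ℕ) + (if h - s ≤ (i : ℕ) then 1 else 0) with htf
  have hdk : d ≤ k - h := by
    have h1 : h * d ≤ h * (k - h) := le_trans (by omega) hE1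
    exact Nat.le_of_mul_le_mul_left h1 hh
  have hdk' : s ≠ 0 → d < k - h := by
    intro hs0
    rcases Nat.lt_or_ge d (k - h) with h1 | h1
    · exact h1
    · have hde : d = k - h := le_antisymm hdk h1
      rw [hde] at hds
      omega
  have htk : ∀ i : Fin h, tf i < k := by
    intro i
    have hi := i.isLt
    simp only [htf]
    by_cases hs0 : s = 0
    · rw [if_neg (by omega)]
      omega
    · have := hdk' hs0
      split <;> omega
  have hmono : StrictMono tf := by
    intro i j hij
    have hij' : (i : ℕ) < (j : ℕ) := hij
    simp only [htf]
    by_cases hi : h - s ≤ (i : ℕ)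
    · rw [if_pos hi, if_pos (le_trans hi hij'.le)]
      omega
    · rw [if_neg hi]
      split <;> omega
  have hsumtf : ∑ i, tf i = E + ∑ i : Fin h, (i : ℕ) := by
    simp only [htf]
    rw [Finset.sum_add_distrib, Finset.sum_add_distrib]
    have h1 : ∑ _i : Fin h, d = h * d := by
      rw [Finset.sum_const, Finset.card_univ, Fintype.card_fin, smul_eq_mul]
    have h2 : ∑ i : Fin h, (if h - s ≤ (i : ℕ) then 1 else 0) = s := by
      rw [Fin.sum_univ_eq_sum_range (fun i => if h - s ≤ i then 1 else 0) h]
      rw [Finset.range_eq_Ico,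
        ← Finset.sum_Ico_consecutive _ (Nat.zero_le (h - s)) (Nat.sub_le h s)]
      rw [Finset.sum_eq_zero (fun i hi => if_neg (by
        have := (Finset.mem_Ico.1 hi).2; omega))]
      rw [Finset.sum_congr rfl (fun i hi => if_pos (Finset.mem_Ico.1 hi).1)]
      rw [Finset.sum_const, Nat.card_Ico, smul_eq_mul, mul_one]
      omega
    omega
  have hkp : k ≤ p := by
    have := Finset.card_le_univ A
    rwa [ZMod.card] at this
  have hvp : ∀ i : Fin h, tf i < p := fun i => lt_of_lt_of_le (htk i) hkp
  have hEp : E < p := by omega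
  have hkey := key_coeff hp C E hCcard tf hmono hvp hEp hsumtf
  -- apply the Combinatorial Nullstellensatz
  set τ : Fin h →₀ ℕ := Finsupp.equivFunOnFinite.symm tf with hτdef
  have hτ : ∀ i, τ i = tf i := fun i => rfl
  have hτsum : ∑ i, τ i = E + ∑ i : Fin h, (i : ℕ) := by
    rw [Finset.sum_congr rfl fun i _ => hτ i]
    exact hsumtf
  set V : MvPolynomial (Fin h) (ZMod p) :=
    (Matrix.vandermonde fun i : Fin h => (X i : MvPolynomial (Fin h) (ZMod p))).det with hVdef
  set P : MvPolynomial (Fin h) (ZMod p) :=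
    ∏ c ∈ C, ((∑ j : Fin h, X j) - MvPolynomial.C c) with hPdef
  have hfdeg : (P * V).totalDegree ≤ ∑ i, τ i := by
    rw [hτsum]
    refine (totalDegree_mul _ _).trans (Nat.add_le_add ?_ vdet_totalDegree)
    rw [hPdef]
    refine (totalDegree_finset_prod _ _).trans ?_
    have hone : ∀ c ∈ C, ((∑ j : Fin h, X j) - MvPolynomial.C c :
        MvPolynomial (Fin h) (ZMod p)).totalDegree ≤ 1 := by
      intro c _
      refine (totalDegree_sub _ _).trans (max_le ?_ ?_)
      · exact (totalDegree_finset_sum _ _).trans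
          (Finset.sup_le fun j _ => le_of_eq (totalDegree_X j))
      · rw [totalDegree_C]; omega
    refine le_trans (Finset.sum_le_sum hone) ?_
    rw [Finset.sum_const, smul_eq_mul, mul_one, hCcard]
  obtain ⟨x, hxA, hxf⟩ := comb_null (E + ∑ i : Fin h, (i : ℕ)) (fun _ => A) τ
    (le_of_eq hτsum) (fun i => by rw [hτ i]; exact htk i) (P * V) hfdeg hkey
  -- the solution gives h distinct elements of A
  have hPV : eval x P ≠ 0 ∧ eval x V ≠ 0 := by
    rw [map_mul] at hxf
    exact ⟨left_ne_zero_of_mul hxf, right_ne_zero_of_mul hxf⟩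
  have hinj : Function.Injective x := by
    refine Matrix.det_vandermonde_ne_zero_iff.1 ?_
    have : eval x V = (Matrix.vandermonde x).det := by
      rw [hVdef, RingHom.map_det]
      congr 1
      ext i j
      simp [Matrix.vandermonde_apply]
    rw [← this]
    exact hPV.2
  have hmem : (∑ i, x i) ∈ (A.powersetCard h).image (fun s => ∑ y ∈ s, y) := by
    refine Finset.mem_image.2 ⟨Finset.univ.image x, ?_, ?_⟩
    · refine Finset.mem_powersetCard.2 ⟨?_, ?_⟩
      · exact Finset.image_subset_iff.2 fun i _ => hxA i
      · rw [Finset.card_image_of_injective _ hinj, Finset.card_univ, Fintype.card_fin]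
    · exact Finset.sum_image (fun a _ b _ hab => hinj hab)
  have hmemC : (∑ i, x i) ∈ C := hsub hmem
  have hPzero : eval x P = 0 := by
    rw [hPdef, eval_prod]
    refine Finset.prod_eq_zero hmemC ?_
    rw [map_sub, eval_C, map_sum]
    rw [Finset.sum_congr rfl fun j _ => eval_X j]
    exact sub_self _
  exact hPV.1 hPzero

end Main

/-- The Dias da Silva–Hamidoune theorem: for `A ⊆ 𝔽_p` and `h ≥ 1`, the set `h^∧A` of sums
of `h` pairwise distinct elements of `A` satisfies `|h^∧A| ≥ min{p, h|A| - h² + 1}`; in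
particular, if `|A| ≥ (p-1)/h + h` then `h^∧A = 𝔽_p`. -/
theorem dias_da_silva_hamidoune (h p : ℕ) (hh : 0 < h) (hp : p.Prime) [NeZero p]
    (A : Finset (ZMod p)) :
    min (p : ℤ) ((h : ℤ) * A.card - (h : ℤ) ^ 2 + 1) ≤
      (((A.powersetCard h).image (fun s => ∑ x ∈ s, x)).card : ℤ) ∧
    ((((p : ℚ) - 1) / h + h ≤ (A.card : ℚ)) →
      (A.powersetCard h).image (fun s => ∑ x ∈ s, x) = Finset.univ) := by
  classical
  have hp2 := hp.two_le
  constructor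
  · by_cases hhk : h ≤ A.card
    · by_cases he : h * (A.card - h) ≤ p - 1
      · have hmain := ddh_main h p hh hp A hhk (h * (A.card - h)) le_rfl he
        refine le_trans (min_le_right _ _) ?_
        have hcast : (h : ℤ) * A.card - (h : ℤ) ^ 2 + 1
            = ((h * (A.card - h) + 1 : ℕ) : ℤ) := by
          push_cast [Nat.cast_sub hhk]
          ring
        rw [hcast]
        exact_mod_cast hmain
      · have hE1 : p - 1 ≤ h * (A.card - h) := by omega
        have hmain := ddh_main h p hh hp A hhk (p - 1) hE1 le_rfl
        refine le_trans (min_le_left _ _) ?_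
        have hp1 : p - 1 + 1 = p := by omega
        rw [hp1] at hmain
        exact_mod_cast hmain
    · push_neg at hhk
      refine le_trans (min_le_right _ _) ?_
      rw [Finset.powersetCard_eq_empty.2 hhk, Finset.image_empty, Finset.card_empty]
      have hk' : (A.card : ℤ) + 1 ≤ (h : ℤ) := by exact_mod_cast hhk
      have hh' : (1 : ℤ) ≤ (h : ℤ) := by exact_mod_cast hh
      nlinarith [sq_nonneg ((h : ℤ) - A.card)]
  · intro hge
    have hhQ : (0 : ℚ) < h := by exact_mod_cast hh
    have hpQ : (0 : ℚ) ≤ (p : ℚ) - 1 := by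
      have : (1 : ℚ) ≤ p := by exact_mod_cast hp.one_lt.le
      linarith
    have hhk : h ≤ A.card := by
      have : (h : ℚ) ≤ A.card := by
        have hdiv : (0 : ℚ) ≤ ((p : ℚ) - 1) / h := div_nonneg hpQ hhQ.le
        linarith
      exact_mod_cast this
    have hkey : (p : ℚ) - 1 ≤ ((A.card : ℚ) - h) * h := by
      have hdiv : ((p : ℚ) - 1) / h ≤ (A.card : ℚ) - h := by linarith
      exact (div_le_iff₀ hhQ).1 hdiv
    have hE1 : p - 1 ≤ h * (A.card - h) := by
      have hc : ((p - 1 : ℕ) : ℚ) ≤ ((h * (A.card - h) : ℕ) : ℚ) := by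
        rw [Nat.cast_sub hp.one_lt.le, Nat.cast_mul, Nat.cast_sub hhk]
        push_cast
        linarith
      exact_mod_cast hc
    have hmain := ddh_main h p hh hp A hhk (p - 1) hE1 le_rfl
    have hp1 : p - 1 + 1 = p := by omega
    rw [hp1] at hmain
    refine Finset.eq_univ_of_card _ ?_
    have hle := Finset.card_le_univ ((A.powersetCard h).image (fun s => ∑ x ∈ s, x))
    rw [ZMod.card] at hle ⊢
    omega
end

section
/- Let p be a prime, g ≥ 2 an integer, and n a positive integer with base-g digits d_0, ..., d_{ℓ-1}. Suppose there exists a subset J of the indices of nonzero digits of n with Σ_{i ∈ J} g^i ≡ n (mod p) and s_g(n) - |J| = p. Then m := n - Σ_{i ∈ J} g^i is a base-g Niven number with s_g(m) = p, and n is a sum of |J| + 1 base-g Niven numbers. -/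
lemma digits_sum_ofDigits (g : ℕ) (hg : 2 ≤ g) :
    ∀ L : List ℕ, (∀ d ∈ L, d < g) → (Nat.digits g (Nat.ofDigits g L)).sum = L.sum := by
  intro L
  induction L with
  | nil => simp
  | cons d L ih =>
    intro h
    have hd : d < g := h d (by simp)
    have hL : ∀ x ∈ L, x < g := fun x hx => h x (List.mem_cons_of_mem _ hx)
    have hod : Nat.ofDigits g (d :: L) = d + g * Nat.ofDigits g L := by
      rw [Nat.ofDigits_cons]
    rcases Nat.eq_zero_or_pos (Nat.ofDigits g (d :: L)) with h0 | hpos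
    · rw [h0]
      have h0' := h0
      rw [hod] at h0'
      have hd0 : d = 0 := by omega
      have hk0 : Nat.ofDigits g L = 0 := by
        rcases Nat.mul_eq_zero.mp (by omega : g * Nat.ofDigits g L = 0) with h | h
        · omega
        · exact h
      have hs := ih hL
      rw [hk0] at hs
      simp only [Nat.digits_zero, List.sum_nil] at hs ⊢
      rw [List.sum_cons, hd0, ← hs]
      rfl
    · rw [Nat.digits_def' (by omega : 1 < g) hpos, hod]
      have hmod : (d + g * Nat.ofDigits g L) % g = d := by
        rw [Nat.add_mul_mod_self_left]; exact Nat.mod_eq_of_lt hd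
      have hdiv : (d + g * Nat.ofDigits g L) / g = Nat.ofDigits g L := by
        rw [Nat.add_mul_div_left _ _ (by omega : 0 < g), Nat.div_eq_of_lt hd]; omega
      rw [hmod, hdiv]
      simp [ih hL]

lemma ofDigits_eq_sum_range (g : ℕ) :
    ∀ L : List ℕ, Nat.ofDigits g L = ∑ i ∈ Finset.range L.length, L.getD i 0 * g ^ i := by
  intro L
  induction L with
  | nil => simp
  | cons d L ih =>
    rw [Nat.ofDigits_cons, ih]
    rw [List.length_cons, Finset.sum_range_succ']
    simp only [List.getD_cons_succ, List.getD_cons_zero, pow_zero, mul_one]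
    rw [Finset.mul_sum, add_comm]
    congr 1
    apply Finset.sum_congr rfl
    intro i _
    ring

lemma list_sum_eq_sum_range (L : List ℕ) :
    L.sum = ∑ i ∈ Finset.range L.length, L.getD i 0 := by
  induction L with
  | nil => simp
  | cons d L ih =>
    rw [List.sum_cons, ih, List.length_cons, Finset.sum_range_succ']
    simp [add_comm]

lemma digits_sum_pow (g : ℕ) (hg : 2 ≤ g) (i : ℕ) :
    (Nat.digits g (g ^ i)).sum = 1 := by
  induction i with
  | zero =>
    simp only [pow_zero]
    rw [Nat.digits_def' (by omega : 1 < g) (by omega : 0 < 1)]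
    have : 1 % g = 1 := Nat.mod_eq_of_lt (by omega)
    have h2 : 1 / g = 0 := Nat.div_eq_of_lt (by omega)
    rw [this, h2]
    simp
  | succ i ih =>
    have hpos : 0 < g ^ (i + 1) := Nat.pow_pos (by omega)
    rw [Nat.digits_def' (by omega : 1 < g) hpos]
    have hmod : g ^ (i + 1) % g = 0 := by
      rw [pow_succ]; exact Nat.mul_mod_left _ _
    have hdiv : g ^ (i + 1) / g = g ^ i := by
      rw [pow_succ]; exact Nat.mul_div_cancel _ (by omega)
    rw [hmod, hdiv]
    simp [ih]

/-- If `J` is a set of positions of nonzero base-`g` digits of `n` with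
`∑_{i ∈ J} g^i ≡ n (mod p)` and `s_g(n) - |J| = p`, then `m = n - ∑_{i ∈ J} g^i` is a
base-`g` Niven number with `s_g(m) = p`, and `n` is a sum of `|J| + 1` Niven numbers. -/
theorem niven_subtract_powers (g : ℕ) (hg : 2 ≤ g) (p : ℕ) (hp : p.Prime)
    (n : ℕ) (hn : 0 < n) (J : Finset ℕ)
    (hJ : ∀ i ∈ J, (Nat.digits g n).getD i 0 ≠ 0)
    (hcong : (∑ i ∈ J, g ^ i) ≡ n [MOD p])
    (hcard : (Nat.digits g n).sum = p + J.card) :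
    IsNiven g (n - ∑ i ∈ J, g ^ i) ∧
    (Nat.digits g (n - ∑ i ∈ J, g ^ i)).sum = p ∧
    IsSumOfNiven g n (J.card + 1) := by
  set L := Nat.digits g n with hL
  -- J ⊆ range L.length
  have hJsub : J ⊆ Finset.range L.length := by
    intro i hi
    rw [Finset.mem_range]
    by_contra h
    exact hJ i hi (List.getD_eq_default _ _ (by omega))
  -- the decremented digit function
  set f : ℕ → ℕ := fun i => L.getD i 0 - (if i ∈ J then 1 else 0) with hf
  -- per-index: f i + indicator = digit
  have hterm : ∀ i, f i + (if i ∈ J then 1 else 0) = L.getD i 0 := by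
    intro i
    by_cases hi : i ∈ J
    · have h1 := hJ i hi
      simp only [hf, if_pos hi]
      omega
    · simp only [hf, if_neg hi]
      omega
  -- the decremented list
  set L' : List ℕ := (List.range L.length).map f with hL'
  have hL'len : L'.length = L.length := by simp [hL']
  have hL'get : ∀ i, i < L.length → L'.getD i 0 = f i := by
    intro i hi
    rw [hL', List.getD_eq_getElem _ _ (by simpa using hi)]
    simp
  -- ofDigits of L' as a sum
  have hm0 : Nat.ofDigits g L' = ∑ i ∈ Finset.range L.length, f i * g ^ i := by
    rw [ofDigits_eq_sum_range, hL'len]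
    apply Finset.sum_congr rfl
    intro i hi
    rw [hL'get i (Finset.mem_range.mp hi)]
  -- n as sum
  have hnsum : n = ∑ i ∈ Finset.range L.length, L.getD i 0 * g ^ i := by
    conv_lhs => rw [← Nat.ofDigits_digits g n]
    exact ofDigits_eq_sum_range g L
  -- sum over J of powers as an indicator sum
  have hJsum : (∑ i ∈ J, g ^ i)
      = ∑ i ∈ Finset.range L.length, (if i ∈ J then 1 else 0) * g ^ i := by
    have : ∀ i ∈ Finset.range L.length,
        (if i ∈ J then 1 else 0) * g ^ i = if i ∈ J then g ^ i else 0 := by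
      intro i _; split_ifs <;> simp
    rw [Finset.sum_congr rfl this, Finset.sum_ite_mem,
      Finset.inter_eq_right.mpr hJsub]
  -- key: ofDigits L' + ∑_{J} g^i = n
  have hkey : Nat.ofDigits g L' + (∑ i ∈ J, g ^ i) = n := by
    rw [hm0, hJsum, hnsum, ← Finset.sum_add_distrib]
    apply Finset.sum_congr rfl
    intro i _
    rw [← add_mul, hterm i]
  have hle : (∑ i ∈ J, g ^ i) ≤ n := by omega
  have hmeq : n - (∑ i ∈ J, g ^ i) = Nat.ofDigits g L' := by omega
  -- digits of n are < g
  have hlt : ∀ d ∈ L, d < g := fun d hd => Nat.digits_lt_base hg hd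
  have hlt' : ∀ d ∈ L', d < g := by
    intro d hd
    rw [hL'] at hd
    simp only [List.mem_map, List.mem_range] at hd
    obtain ⟨i, hi, rfl⟩ := hd
    have : L.getD i 0 < g := by
      rw [List.getD_eq_getElem _ _ hi]
      exact hlt _ (List.getElem_mem hi)
    simp only [hf]
    omega
  -- digit sum of m
  have hsumL' : L'.sum = p := by
    have h1 : L'.sum = ∑ i ∈ Finset.range L.length, f i := by
      rw [list_sum_eq_sum_range, hL'len]
      apply Finset.sum_congr rfl
      intro i hi
      exact hL'get i (Finset.mem_range.mp hi)
    have h2 : L.sum = ∑ i ∈ Finset.range L.length, L.getD i 0 := list_sum_eq_sum_range L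
    have h3 : (∑ i ∈ Finset.range L.length, (if i ∈ J then 1 else 0)) = J.card := by
      rw [Finset.sum_ite_mem, Finset.inter_eq_right.mpr hJsub]
      simp
    have h4 : (∑ i ∈ Finset.range L.length, f i)
        + (∑ i ∈ Finset.range L.length, (if i ∈ J then 1 else 0))
        = ∑ i ∈ Finset.range L.length, L.getD i 0 := by
      rw [← Finset.sum_add_distrib]
      exact Finset.sum_congr rfl fun i _ => hterm i
    omega
  have hdigsum : (Nat.digits g (n - ∑ i ∈ J, g ^ i)).sum = p := by
    rw [hmeq, digits_sum_ofDigits g hg L' hlt', hsumL']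
  -- m > 0
  have hmpos : 0 < n - ∑ i ∈ J, g ^ i := by
    rcases Nat.eq_zero_or_pos (n - ∑ i ∈ J, g ^ i) with h0 | h
    · rw [h0] at hdigsum
      simp at hdigsum
      exact absurd hdigsum.symm hp.ne_zero
    · exact h
  -- p ∣ m
  have hdvd : p ∣ n - ∑ i ∈ J, g ^ i := (Nat.modEq_iff_dvd' hle).mp hcong
  refine ⟨⟨hmpos, by rw [hdigsum]; exact hdvd⟩, hdigsum, ?_⟩
  -- sum of Niven numbers
  refine ⟨(n - ∑ i ∈ J, g ^ i) :: (J.toList.map (fun i => g ^ i)), ?_, ?_, ?_⟩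
  · simp [Finset.length_toList]
  · intro m hm
    rcases List.mem_cons.mp hm with rfl | hm
    · exact ⟨hmpos, by rw [hdigsum]; exact hdvd⟩
    · simp only [List.mem_map] at hm
      obtain ⟨i, _, rfl⟩ := hm
      exact ⟨Nat.pow_pos (by omega), by rw [digits_sum_pow g hg]; exact one_dvd _⟩
  · rw [List.sum_cons, Finset.sum_map_toList]
    omega
end

section
/- Let g ≥ 2 and write g = g_0^{2^u} with g_0 a nonsquare integer. Let n be a positive integer such that: (i) s_g(n) = p + h for a prime p and an integer h with 4g ≤ h ≤ 8g; (ii) g_0 is a primitive root modulo p; (iii) s_g(n) > max{(g-1)/3 · ℓ_g(n), 140g³}. Then n is the sum of at most 8g + 1 base-g Niven numbers. -/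
open Finset
open scoped Pointwise


/-- digit-sum of a list equals sum over range of getD -/
lemma nrl_sum_range_getD (L : List ℕ) :
    ∑ i ∈ Finset.range L.length, L.getD i 0 = L.sum := by
  induction L with
  | nil => simp
  | cons a L ih =>
    rw [List.length_cons, Finset.sum_range_succ']
    simp only [List.getD_cons_succ, List.getD_cons_zero, List.sum_cons, ih]
    omega

lemma nrl_ofDigits_eq_sum (b : ℕ) (L : List ℕ) :
    Nat.ofDigits b L = ∑ i ∈ Finset.range L.length, L.getD i 0 * b ^ i := by
  induction L with
  | nil => simp [Nat.ofDigits]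
  | cons a L ih =>
    rw [List.length_cons, Finset.sum_range_succ', Nat.ofDigits_cons, ih, Finset.mul_sum]
    simp only [List.getD_cons_succ, List.getD_cons_zero, pow_zero, mul_one, pow_succ]
    rw [add_comm]
    congr 1
    apply Finset.sum_congr rfl
    intro i _
    ring

lemma nrl_ofDigits_eq_zero {b : ℕ} (hb : 0 < b) {L : List ℕ} (h : Nat.ofDigits b L = 0) :
    L.sum = 0 := by
  induction L with
  | nil => simp
  | cons a L ih =>
    rw [Nat.ofDigits_cons] at h
    have h1 : a = 0 ∧ b * Nat.ofDigits b L = 0 := by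
      constructor <;> omega
    have h2 : Nat.ofDigits b L = 0 := by
      rcases Nat.mul_eq_zero.mp h1.2 with h' | h'
      · omega
      · exact h'
    simp [h1.1, ih h2]

lemma nrl_sum_digits_ofDigits {g : ℕ} (hg : 1 < g) (L : List ℕ) (hL : ∀ x ∈ L, x < g) :
    (Nat.digits g (Nat.ofDigits g L)).sum = L.sum := by
  induction L with
  | nil => simp
  | cons a L ih =>
    have ha : a < g := hL a (by simp)
    have hL' : ∀ x ∈ L, x < g := fun x hx => hL x (by simp [hx])
    rw [Nat.ofDigits_cons]
    rcases Nat.eq_zero_or_pos (a + g * Nat.ofDigits g L) with h0 | hpos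
    · have ha0 : a = 0 := by omega
      have hM : g * Nat.ofDigits g L = 0 := by omega
      have hM0 : Nat.ofDigits g L = 0 := by
        rcases Nat.mul_eq_zero.mp hM with h' | h'
        · omega
        · exact h'
      rw [h0]
      simp [ha0, nrl_ofDigits_eq_zero (by omega : 0 < g) hM0]
    · rw [Nat.digits_def' hg hpos]
      have hmod : (a + g * Nat.ofDigits g L) % g = a := by
        rw [Nat.add_mul_mod_self_left, Nat.mod_eq_of_lt ha]
      have hdiv : (a + g * Nat.ofDigits g L) / g = Nat.ofDigits g L := by
        rw [Nat.add_mul_div_left _ _ (by omega : 0 < g), Nat.div_eq_of_lt ha]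
        omega
      rw [hmod, hdiv, List.sum_cons, ih hL']
      simp


lemma nrl_ofDigits_map_range (b : ℕ) (f : ℕ → ℕ) (k : ℕ) :
    Nat.ofDigits b ((List.range k).map f) = ∑ i ∈ Finset.range k, f i * b ^ i := by
  induction k with
  | zero => simp [Nat.ofDigits]
  | succ k ih =>
    rw [List.range_succ, List.map_append, Nat.ofDigits_append, ih, Finset.sum_range_succ]
    simp [Nat.ofDigits_singleton, mul_comm]

lemma nrl_sum_map_range (f : ℕ → ℕ) (k : ℕ) :
    ((List.range k).map f).sum = ∑ i ∈ Finset.range k, f i := by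
  induction k with
  | zero => simp
  | succ k ih =>
    rw [List.range_succ, List.map_append, List.sum_append, ih, Finset.sum_range_succ]
    simp

/-- Greedy: extract `t` units from capacities `w` on a finite set `A`. -/
lemma nrl_greedy (w : ℕ → ℕ) (A : Finset ℕ) :
    ∀ t, t ≤ ∑ i ∈ A, w i →
    ∃ c : ℕ → ℕ, (∀ i, c i ≤ w i) ∧ (∀ i, c i ≠ 0 → i ∈ A) ∧ ∑ i ∈ A, c i = t := by
  classical
  induction A using Finset.induction_on with
  | empty =>
    intro t ht
    simp only [Finset.sum_empty, Nat.le_zero] at ht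
    exact ⟨fun _ => 0, fun i => Nat.zero_le _, fun i h => absurd rfl h, by simp [ht]⟩
  | @insert a A ha ih =>
    intro t ht
    rw [Finset.sum_insert ha] at ht
    obtain ⟨c', hc1, hc2, hc3⟩ := ih (t - min t (w a)) (by omega)
    refine ⟨Function.update c' a (min t (w a)), ?_, ?_, ?_⟩
    · intro i
      rcases eq_or_ne i a with rfl | hia
      · rw [Function.update_self]; omega
      · rw [Function.update_of_ne hia]; exact hc1 i
    · intro i hi
      rcases eq_or_ne i a with rfl | hia
      · exact Finset.mem_insert_self i A
      · rw [Function.update_of_ne hia] at hi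
        exact Finset.mem_insert_of_mem (hc2 i hi)
    · rw [Finset.sum_insert ha, Function.update_self]
      have : ∑ i ∈ A, Function.update c' a (min t (w a)) i = ∑ i ∈ A, c' i := by
        apply Finset.sum_congr rfl
        intro i hi
        exact Function.update_of_ne (by rintro rfl; exact ha hi) _ _
      rw [this, hc3]
      omega


section Cover
variable {p : ℕ} [Fact p.Prime]

/-- partial sumsets are nonempty -/
lemma nrl_sumset_nonempty (B : ℕ → Finset (ZMod p)) (K : ℕ)
    (hne : ∀ k < K, (B k).Nonempty) :
    (∑ k ∈ Finset.range K, B k).Nonempty := by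
  classical
  induction K with
  | zero => exact ⟨0, by simp⟩
  | succ K ih =>
    rw [Finset.sum_range_succ]
    exact (ih (fun k hk => hne k (by omega))).add (hne K (by omega))

lemma nrl_sumset_card (B : ℕ → Finset (ZMod p)) (K : ℕ)
    (hne : ∀ k < K, (B k).Nonempty) :
    p ≤ (∑ k ∈ Finset.range K, B k).card ∨
      ∑ k ∈ Finset.range K, (B k).card + 1 ≤ (∑ k ∈ Finset.range K, B k).card + K := by
  classical
  induction K with
  | zero => right; simp
  | succ K ih =>
    have hne' : ∀ k < K, (B k).Nonempty := fun k hk => hne k (by omega)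
    have hS : (∑ k ∈ Finset.range K, B k).Nonempty := nrl_sumset_nonempty B K hne'
    have hB : (B K).Nonempty := hne K (by omega)
    have hCD := ZMod.cauchy_davenport (Fact.out : p.Prime) hS hB
    rw [min_le_iff] at hCD
    rw [Finset.sum_range_succ, Finset.sum_range_succ]
    have hmono : (∑ k ∈ Finset.range K, B k).card ≤
        ((∑ k ∈ Finset.range K, B k) + B K).card := by
      obtain ⟨b, hb⟩ := hB
      calc (∑ k ∈ Finset.range K, B k).card
          = ((∑ k ∈ Finset.range K, B k).image (· + b)).card :=
            (Finset.card_image_of_injective _ (add_left_injective b)).symm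
        _ ≤ ((∑ k ∈ Finset.range K, B k) + B K).card := by
            apply Finset.card_le_card
            intro z hz
            simp only [Finset.mem_image] at hz
            obtain ⟨y, hy, rfl⟩ := hz
            exact Finset.add_mem_add hy hb
    have hS1 : 1 ≤ (∑ k ∈ Finset.range K, B k).card := Finset.card_pos.mpr hS
    have hB1 : 1 ≤ (B K).card := Finset.card_pos.mpr hB
    rcases hCD with h | h
    · left; omega
    · rcases ih hne' with h' | h'
      · left; omega
      · right; omega

lemma nrl_mem_sumset (B : ℕ → Finset (ZMod p)) (K : ℕ) (t : ZMod p)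
    (ht : t ∈ ∑ k ∈ Finset.range K, B k) :
    ∃ f : ℕ → ZMod p, (∀ k < K, f k ∈ B k) ∧ ∑ k ∈ Finset.range K, f k = t := by
  classical
  induction K generalizing t with
  | zero =>
    refine ⟨fun _ => 0, by omega, ?_⟩
    simp only [Finset.range_zero, Finset.sum_empty] at ht ⊢
    rw [Finset.mem_zero] at ht
    exact ht.symm
  | succ K ih =>
    rw [Finset.sum_range_succ, Finset.mem_add] at ht
    obtain ⟨y, hy, z, hz, hyz⟩ := ht
    obtain ⟨f, hf1, hf2⟩ := ih y hy
    refine ⟨Function.update f K z, ?_, ?_⟩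
    · intro k hk
      rcases eq_or_ne k K with rfl | hkK
      · rw [Function.update_self]; exact hz
      · rw [Function.update_of_ne hkK]; exact hf1 k (by omega)
    · rw [Finset.sum_range_succ, Function.update_self]
      have : ∑ k ∈ Finset.range K, Function.update f K z k = ∑ k ∈ Finset.range K, f k := by
        apply Finset.sum_congr rfl
        intro k hk
        rw [Finset.mem_range] at hk
        exact Function.update_of_ne (by omega) _ _
      rw [this, hf2, hyz]

/-- Covering: if blocks are nonempty and total card is ≥ p + K - 1 then every target is a sum. -/
lemma nrl_cover (B : ℕ → Finset (ZMod p)) (K : ℕ)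
    (hne : ∀ k < K, (B k).Nonempty)
    (hcard : p + K ≤ ∑ k ∈ Finset.range K, (B k).card + 1) (t : ZMod p) :
    ∃ f : ℕ → ZMod p, (∀ k < K, f k ∈ B k) ∧ ∑ k ∈ Finset.range K, f k = t := by
  classical
  have hp : p ≤ (∑ k ∈ Finset.range K, B k).card := by
    rcases nrl_sumset_card B K hne with h | h
    · exact h
    · omega
  have huniv : (∑ k ∈ Finset.range K, B k) = Finset.univ := by
    apply Finset.eq_univ_of_card
    have h1 : (∑ k ∈ Finset.range K, B k).card ≤ Fintype.card (ZMod p) :=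
      Finset.card_le_univ _
    rw [ZMod.card] at h1 ⊢
    omega
  exact nrl_mem_sumset B K t (by rw [huniv]; exact Finset.mem_univ t)

end Cover


/-- Realize a sequence of class choices as unit placements respecting capacities. -/
lemma nrl_realize {p : ℕ} [Fact p.Prime] (x : ℕ → ZMod p) (w : ℕ → ℕ) (ℓ : ℕ)
    (K : ℕ) (f : ℕ → ZMod p)
    (hf : ∀ k < K, k < ∑ i ∈ (Finset.range ℓ).filter (fun i => x i = f k), w i) :
    ∃ c : ℕ → ℕ, (∀ i, c i ≤ w i) ∧ (∀ i, c i ≠ 0 → i < ℓ) ∧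
      (∑ i ∈ Finset.range ℓ, c i = K) ∧
      (∑ i ∈ Finset.range ℓ, (c i : ZMod p) * x i = ∑ k ∈ Finset.range K, f k) := by
  classical
  induction K with
  | zero => exact ⟨fun _ => 0, fun i => Nat.zero_le _, fun i h => absurd rfl h, by simp, by simp⟩
  | succ K ih =>
    obtain ⟨c, hc1, hc2, hc3, hc4⟩ := ih (fun k hk => hf k (by omega))
    set F := (Finset.range ℓ).filter (fun i => x i = f K) with hF
    have hused : ∑ i ∈ F, c i ≤ ∑ i ∈ Finset.range ℓ, c i :=
      Finset.sum_le_sum_of_subset (Finset.filter_subset _ _)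
    have hlt : ∑ i ∈ F, c i < ∑ i ∈ F, w i := by
      have h := hf K (by omega)
      rw [← hF] at h
      omega
    obtain ⟨i₀, hi₀F, hi₀⟩ := Finset.exists_lt_of_sum_lt hlt
    have hi₀r : i₀ ∈ Finset.range ℓ := (Finset.mem_filter.mp hi₀F).1
    have hxi₀ : x i₀ = f K := (Finset.mem_filter.mp hi₀F).2
    refine ⟨Function.update c i₀ (c i₀ + 1), ?_, ?_, ?_, ?_⟩
    · intro i
      rcases eq_or_ne i i₀ with rfl | hne
      · rw [Function.update_self]; omega
      · rw [Function.update_of_ne hne]; exact hc1 i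
    · intro i hi
      rcases eq_or_ne i i₀ with rfl | hne
      · exact Finset.mem_range.mp hi₀r
      · rw [Function.update_of_ne hne] at hi; exact hc2 i hi
    · have h1 := Finset.sum_eq_add_sum_sdiff_singleton_of_mem hi₀r c
      rw [Finset.sum_update_of_mem hi₀r]
      omega
    · rw [Finset.sum_eq_add_sum_sdiff_singleton_of_mem hi₀r
          (fun i => ((Function.update c i₀ (c i₀ + 1) i : ℕ) : ZMod p) * x i),
        Finset.sum_range_succ, ← hc4,
        Finset.sum_eq_add_sum_sdiff_singleton_of_mem hi₀r (fun i => (c i : ZMod p) * x i)]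
      have hcong : ∑ i ∈ Finset.range ℓ \ {i₀},
          ((Function.update c i₀ (c i₀ + 1) i : ℕ) : ZMod p) * x i
          = ∑ i ∈ Finset.range ℓ \ {i₀}, (c i : ZMod p) * x i := by
        apply Finset.sum_congr rfl
        intro i hi
        have hne : i ≠ i₀ := by
          have := (Finset.mem_sdiff.mp hi).2
          simp only [Finset.mem_singleton] at this
          exact this
        rw [Function.update_of_ne hne]
      rw [hcong, Function.update_self, hxi₀]
      push_cast
      ring

lemma nrl_13v (v : ℕ) : 13 * v ≤ 6 * 2 ^ v + 2 := by
  induction v with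
  | zero => simp
  | succ w ih =>
    rcases Nat.lt_or_ge w 2 with hw | hw
    · interval_cases w <;> norm_num
    · have h4 : 4 ≤ 2 ^ w := by
        calc (4:ℕ) = 2 ^ 2 := rfl
        _ ≤ 2 ^ w := Nat.pow_le_pow_right (by norm_num) hw
      rw [pow_succ]
      omega

lemma nrl_arith {g ℓ d e v p : ℕ} (hg : 2 ≤ g) (hgv : 2 ^ v ≤ g) (hev : e ≤ v) (he1 : 1 ≤ e)
    (hde : d * e = p - 1) (hp2 : 2 ≤ p) (hpl : 140 * g ^ 3 ≤ p + 8 * g)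
    (hl : (g - 1) * ℓ < 3 * p + 24 * g) :
    (g - 1) * ((ℓ - 1) / d + 1) ≤ 4 * g := by
  have hd1 : 1 ≤ d := by
    rcases Nat.eq_zero_or_pos d with h | h
    · rw [h, zero_mul] at hde; omega
    · exact h
  obtain ⟨q, rfl⟩ : ∃ q, p = q + 1 := ⟨p - 1, by omega⟩
  have hq1 : 1 ≤ q := by omega
  have hdeq : d * e = q := by omega
  have h13 : 13 * e ≤ 6 * g + 2 := by
    have h1 : 13 * e ≤ 13 * v := Nat.mul_le_mul_left _ hev
    have h2 := nrl_13v v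
    have h3 : 6 * 2 ^ v ≤ 6 * g := Nat.mul_le_mul_left _ hgv
    omega
  have key : (g - 1) * (ℓ - 1) ≤ (3 * g + 1) * d := by
    apply Nat.le_of_mul_le_mul_right _ (show 0 < e by omega)
    have hrhs : (3 * g + 1) * d * e = (3 * g + 1) * q := by
      rw [mul_assoc, hdeq]
    rw [hrhs]
    have hlhs : (g - 1) * (ℓ - 1) * e ≤ (3 * (q + 1) + 24 * g) * e := by
      apply Nat.mul_le_mul_right
      calc (g - 1) * (ℓ - 1) ≤ (g - 1) * ℓ := Nat.mul_le_mul_left _ (by omega)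
        _ ≤ 3 * (q + 1) + 24 * g := by omega
    refine hlhs.trans ?_
    -- (3(q+1) + 24g) * e ≤ (3g+1) * q
    have hfin : 13 * ((3 * (q + 1) + 24 * g) * e) ≤ 13 * ((3 * g + 1) * q) := by
      have step1 : 13 * ((3 * (q + 1) + 24 * g) * e) = (3 * (q + 1) + 24 * g) * (13 * e) := by
        ring
      rw [step1]
      have step2 : (3 * (q + 1) + 24 * g) * (13 * e) ≤ (3 * (q + 1) + 24 * g) * (6 * g + 2) :=
        Nat.mul_le_mul_left _ h13
      refine step2.trans ?_
      -- (3q + 3 + 24g)(6g+2) ≤ 13(3g+1) q,  using 140 g^3 ≤ q + 1 + 8g and g ≥ 2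
      have hq : 140 * g ^ 3 ≤ q + 1 + 8 * g := by omega
      nlinarith [sq_nonneg g, hg, hq1, mul_le_mul_of_nonneg_left hq (Nat.zero_le (21 * g)),
        Nat.mul_le_mul hg hg, Nat.pow_le_pow_left hg 3, Nat.pow_le_pow_left hg 4]
    omega
  have h1 : (g - 1) * ((ℓ - 1) / d) ≤ (g - 1) * (ℓ - 1) / d :=
    Nat.mul_div_le_mul_div_assoc _ _ _
  have h2 : (g - 1) * (ℓ - 1) / d ≤ 3 * g + 1 := by
    have h3 := Nat.div_le_div_right (c := d) key
    rwa [Nat.mul_div_cancel _ (by omega : 0 < d)] at h3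
  have h4 : (g - 1) * ((ℓ - 1) / d + 1) = (g - 1) * ((ℓ - 1) / d) + (g - 1) := by ring
  omega

/-- one extra helper: ofDigits of replicate 0 -/
lemma nrl_ofDigits_replicate (b i : ℕ) : Nat.ofDigits b (List.replicate i 0) = 0 := by
  induction i with
  | zero => simp [Nat.ofDigits]
  | succ i ih => rw [List.replicate_succ, Nat.ofDigits_cons, ih]; simp



/-- `n` is the sum of at most `k` base-`g` Niven numbers. -/
def IsSumOfAtMostNiven (g n k : ℕ) : Prop :=
  ∃ L : List ℕ, L.length ≤ k ∧ (∀ m ∈ L, IsNiven g m) ∧ L.sum = n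

/-- Lemma 3: write `g = g₀^(2^u)` with `g₀ ≥ 2` not a square. If (i) `s_g(n) = p + h` for a
prime `p` and `4g ≤ h ≤ 8g`; (ii) `g₀` is a primitive root mod `p`; and
(iii) `s_g(n) > max{(g-1)/3 · ℓ_g(n), 140 g³}`, then `n` is the sum of at most `8g + 1`
base-`g` Niven numbers. -/
theorem niven_root_lemma (g g₀ u : ℕ) (hg : 2 ≤ g) (hg₀ : 2 ≤ g₀)
    (hns : ¬ ∃ a : ℕ, a * a = g₀) (hgu : g = g₀ ^ 2 ^ u)
    (n : ℕ) (hn : 0 < n) (p h : ℕ) (hp : p.Prime)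
    (hh : 4 * g ≤ h ∧ h ≤ 8 * g)
    (hsum : (Nat.digits g n).sum = p + h)
    (hroot : orderOf ((g₀ : ZMod p)) = p - 1)
    (hbig : (((Nat.digits g n).sum : ℚ)) >
      max (((g : ℚ) - 1) / 3 * (Nat.digits g n).length) (140 * (g : ℚ) ^ 3)) :
    IsSumOfAtMostNiven g n (8 * g + 1) := by
  classical
  haveI hpf : Fact p.Prime := ⟨hp⟩
  haveI : NeZero p := ⟨hp.ne_zero⟩
  have hp2 : 2 ≤ p := hp.two_le
  have hg1 : 1 < g := hg
  set ℓ := (Nat.digits g n).length with hldef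
  set dig : ℕ → ℕ := fun i => (Nat.digits g n).getD i 0 with hdigdef
  -- Step A : basic digit facts
  have hsum' : ∑ i ∈ Finset.range ℓ, dig i = p + h := by
    rw [hdigdef]; rw [hldef, nrl_sum_range_getD]; exact hsum
  have hn_eq : n = ∑ i ∈ Finset.range ℓ, dig i * g ^ i := by
    conv_lhs => rw [← Nat.ofDigits_digits g n]
    rw [nrl_ofDigits_eq_sum]
  have hdig_lt : ∀ i < ℓ, dig i < g := by
    intro i hi
    have hmem : (Nat.digits g n).getD i 0 ∈ Nat.digits g n := by
      rw [List.getD_eq_getElem _ _ hi]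
      exact List.getElem_mem _
    exact Nat.digits_lt_base hg1 hmem
  have hl1 : 1 ≤ ℓ := by
    rw [hldef]
    have : Nat.digits g n ≠ [] := Nat.digits_ne_nil_iff_ne_zero.mpr (by omega)
    exact List.length_pos_iff.mpr this
  have hsnat : 140 * g ^ 3 < p + h := by
    have h1 : (140 * (g:ℚ) ^ 3) < ((Nat.digits g n).sum : ℚ) :=
      lt_of_le_of_lt (le_max_right _ _) hbig
    rw [hsum] at h1
    exact_mod_cast h1
  have hlnat : (g - 1) * ℓ < 3 * (p + h) := by
    have h1 : ((g : ℚ) - 1) / 3 * ℓ < ((Nat.digits g n).sum : ℚ) :=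
      lt_of_le_of_lt (le_max_left _ _) hbig
    rw [hsum] at h1
    have h2 : (((g - 1) * ℓ : ℕ) : ℚ) < ((3 * (p + h) : ℕ) : ℚ) := by
      push_cast [Nat.cast_sub (by omega : 1 ≤ g)] at h1 ⊢
      linarith
    exact_mod_cast h2
  -- Step B : order of g mod p
  have hcast : ((g : ℕ) : ZMod p) = ((g₀ : ℕ) : ZMod p) ^ 2 ^ u := by
    rw [hgu]; push_cast; ring
  have hg₀ne : (g₀ : ZMod p) ≠ 0 := by
    intro h0
    have h1 : (g₀ : ZMod p) ^ (p - 1) = 1 := by rw [← hroot]; exact pow_orderOf_eq_one _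
    rw [h0, zero_pow (by omega : p - 1 ≠ 0)] at h1
    exact zero_ne_one h1
  have hgne : ((g : ℕ) : ZMod p) ≠ 0 := by
    rw [hcast]; exact pow_ne_zero _ hg₀ne
  set d := orderOf ((g : ℕ) : ZMod p) with hddef
  set e := Nat.gcd (p - 1) (2 ^ u) with hedef
  have hd : d = (p - 1) / e := by
    rw [hddef, hcast, orderOf_pow' _ (by positivity : 2 ^ u ≠ 0), hroot, hedef]
  have hde : d * e = p - 1 := by
    rw [hd]; exact Nat.div_mul_cancel (Nat.gcd_dvd_left _ _)
  have hev : e ≤ 2 ^ u := Nat.le_of_dvd (by positivity) (Nat.gcd_dvd_right _ _)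
  have he1 : 1 ≤ e := Nat.gcd_pos_of_pos_right _ (by positivity)
  have hgv : 2 ^ 2 ^ u ≤ g := by rw [hgu]; exact Nat.pow_le_pow_left hg₀ _
  set x : ℕ → ZMod p := fun i => ((g : ℕ) : ZMod p) ^ i with hxdef
  -- Step C : fiber bounds
  have hfiber : ∀ ρ : ZMod p,
      ((Finset.range ℓ).filter (fun i => x i = ρ)).card ≤ (ℓ - 1) / d + 1 := by
    intro ρ
    set F := (Finset.range ℓ).filter (fun i => x i = ρ) with hFdef
    have hstep : ∀ i ∈ F, ∀ j ∈ F, i < j → i / d < j / d := by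
      intro i hi j hj hij
      have hxi : x i = ρ := (Finset.mem_filter.mp hi).2
      have hxj : x j = ρ := (Finset.mem_filter.mp hj).2
      have hpow : ((g:ℕ) : ZMod p) ^ i * ((g:ℕ) : ZMod p) ^ (j - i)
          = ((g:ℕ) : ZMod p) ^ i * 1 := by
        rw [mul_one, ← pow_add, show i + (j - i) = j by omega]
        exact (hxj.trans hxi.symm : x j = x i)
      have h1 : ((g:ℕ) : ZMod p) ^ (j - i) = 1 := by
        have := mul_left_cancel₀ (pow_ne_zero i hgne) hpow
        exact this
      have hdvd : d ∣ j - i := orderOf_dvd_of_pow_eq_one h1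
      have hdle : d ≤ j - i := Nat.le_of_dvd (by omega) hdvd
      have h2 : (i + d) / d ≤ j / d := Nat.div_le_div_right (by omega)
      have hd0 : 0 < d := by
        rcases Nat.eq_zero_or_pos d with h' | h'
        · rw [h', zero_mul] at hde; omega
        · exact h'
      rw [Nat.add_div_right _ hd0] at h2
      omega
    have hinj : Set.InjOn (· / d) ↑F := by
      intro i hi j hj hij
      rcases lt_trichotomy i j with hlt | heq | hgt
      · exact absurd hij (Nat.ne_of_lt (hstep i hi j hj hlt))
      · exact heq
      · exact absurd hij.symm (Nat.ne_of_lt (hstep j hj i hi hgt))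
    calc F.card = (F.image (· / d)).card := (Finset.card_image_of_injOn hinj).symm
      _ ≤ (Finset.range ((ℓ - 1) / d + 1)).card := by
          apply Finset.card_le_card
          intro z hz
          simp only [Finset.mem_image] at hz
          obtain ⟨i, hiF, rfl⟩ := hz
          have hilt : i < ℓ := Finset.mem_range.mp (Finset.mem_filter.mp hiF).1
          rw [Finset.mem_range]
          have : i / d ≤ (ℓ - 1) / d := Nat.div_le_div_right (by omega)
          omega
      _ = (ℓ - 1) / d + 1 := Finset.card_range _
  set M : ZMod p → ℕ := fun ρ => ∑ i ∈ (Finset.range ℓ).filter (fun i => x i = ρ), dig i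
    with hMdef
  have hMle : ∀ ρ : ZMod p, M ρ ≤ 4 * g := by
    intro ρ
    have h1 : M ρ ≤ ∑ i ∈ (Finset.range ℓ).filter (fun i => x i = ρ), (g - 1) := by
      apply Finset.sum_le_sum
      intro i hi
      have := hdig_lt i (Finset.mem_range.mp (Finset.mem_filter.mp hi).1)
      omega
    rw [Finset.sum_const, smul_eq_mul] at h1
    have h2 : ((Finset.range ℓ).filter (fun i => x i = ρ)).card * (g - 1)
        ≤ ((ℓ - 1) / d + 1) * (g - 1) := Nat.mul_le_mul_right _ (hfiber ρ)
    have h3 : (g - 1) * ((ℓ - 1) / d + 1) ≤ 4 * g :=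
      nrl_arith hg hgv hev he1 hde hp2 (by omega) (by omega)
    calc M ρ ≤ ((Finset.range ℓ).filter (fun i => x i = ρ)).card * (g - 1) := h1
      _ ≤ ((ℓ - 1) / d + 1) * (g - 1) := h2
      _ = (g - 1) * ((ℓ - 1) / d + 1) := Nat.mul_comm _ _
      _ ≤ 4 * g := h3
  -- Step D : maximal class, reserved units
  set K := Finset.univ.sup M with hKdef
  have hKle : K ≤ h := Finset.sup_le (fun ρ _ => le_trans (hMle ρ) hh.1)
  have hMleK : ∀ ρ : ZMod p, M ρ ≤ K := fun ρ => Finset.le_sup (Finset.mem_univ ρ)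
  have htot : ∑ ρ : ZMod p, M ρ = p + h := by
    rw [hMdef, Finset.sum_fiberwise_eq_sum_filter]
    rw [show (Finset.range ℓ).filter (fun i => x i ∈ Finset.univ) = Finset.range ℓ by
      apply Finset.filter_true_of_mem; intro i _; exact Finset.mem_univ _]
    exact hsum'
  have hK1 : 1 ≤ K := by
    have hne : ∑ i ∈ Finset.range ℓ, dig i ≠ 0 := by omega
    obtain ⟨i₀, hi₀r, hi₀⟩ := Finset.exists_ne_zero_of_sum_ne_zero hne
    have h1 : dig i₀ ≤ M (x i₀) := by
      apply Finset.single_le_sum (f := dig) (fun j _ => Nat.zero_le _)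
      exact Finset.mem_filter.mpr ⟨hi₀r, rfl⟩
    have h2 := hMleK (x i₀)
    omega
  obtain ⟨ρs, _, hρs⟩ := Finset.exists_mem_eq_sup Finset.univ Finset.univ_nonempty M
  set A := (Finset.range ℓ).filter (fun i => ¬ (x i = ρs)) with hAdef
  have hsplit : M ρs + ∑ i ∈ A, dig i = p + h := by
    rw [hMdef, hAdef]
    rw [Finset.sum_filter_add_sum_filter_not (Finset.range ℓ) (fun i => x i = ρs) dig]
    exact hsum'
  obtain ⟨c₀, hc₀le, hc₀supp, hc₀sumA⟩ := nrl_greedy dig A (h - K) (by omega)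
  have hc₀sum : ∑ i ∈ Finset.range ℓ, c₀ i = h - K := by
    rw [← Finset.sum_filter_add_sum_filter_not (Finset.range ℓ) (fun i => x i = ρs) c₀]
    have hz : ∑ i ∈ (Finset.range ℓ).filter (fun i => x i = ρs), c₀ i = 0 := by
      apply Finset.sum_eq_zero
      intro i hi
      by_contra hne
      have := hc₀supp i hne
      rw [hAdef, Finset.mem_filter] at this
      exact this.2 (Finset.mem_filter.mp hi).2
    rw [hz, zero_add]
    exact hc₀sumA
  set w' : ℕ → ℕ := fun i => dig i - c₀ i with hw'def
  have hw'add : ∀ i, w' i + c₀ i = dig i := by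
    intro i
    have := hc₀le i
    simp only [hw'def]
    omega
  have hw'sum : ∑ i ∈ Finset.range ℓ, w' i = p + K := by
    have h1 : ∑ i ∈ Finset.range ℓ, (w' i + c₀ i) = p + h := by
      rw [Finset.sum_congr rfl (fun i _ => hw'add i)]; exact hsum'
    rw [Finset.sum_add_distrib] at h1
    omega
  set M' : ZMod p → ℕ := fun ρ => ∑ i ∈ (Finset.range ℓ).filter (fun i => x i = ρ), w' i
    with hM'def
  have hM'ρs : M' ρs = K := by
    have h1 : M' ρs = M ρs := by
      apply Finset.sum_congr rfl
      intro i hi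
      have hiA : i ∉ A := by
        rw [hAdef, Finset.mem_filter]
        push_neg
        intro _
        exact (Finset.mem_filter.mp hi).2
      have hc0 : c₀ i = 0 := by
        by_contra hne
        exact hiA (hc₀supp i hne)
      simp only [hw'def]
      omega
    rw [h1, ← hρs]
  have hM'le : ∀ ρ, M' ρ ≤ K := by
    intro ρ
    have h1 : M' ρ ≤ M ρ := by
      apply Finset.sum_le_sum
      intro i _
      simp only [hw'def]
      omega
    exact le_trans h1 (hMleK ρ)
  have hM'tot : ∑ ρ : ZMod p, M' ρ = p + K := by
    rw [hM'def, Finset.sum_fiberwise_eq_sum_filter]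
    rw [show (Finset.range ℓ).filter (fun i => x i ∈ Finset.univ) = Finset.range ℓ by
      apply Finset.filter_true_of_mem; intro i _; exact Finset.mem_univ _]
    exact hw'sum
  -- Step E : blocks, Cauchy-Davenport covering, realization
  set B : ℕ → Finset (ZMod p) := fun k => Finset.univ.filter (fun ρ => k < M' ρ) with hBdef
  have hBne : ∀ k < K, (B k).Nonempty := by
    intro k hk
    exact ⟨ρs, Finset.mem_filter.mpr ⟨Finset.mem_univ _, by omega⟩⟩
  have hBcard : ∑ k ∈ Finset.range K, (B k).card = p + K := by
    have h1 : ∀ k, (B k).card = ∑ ρ : ZMod p, ite (k < M' ρ) 1 0 := by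
      intro k
      rw [hBdef]
      exact Finset.card_filter _ _
    calc ∑ k ∈ Finset.range K, (B k).card
        = ∑ k ∈ Finset.range K, ∑ ρ : ZMod p, ite (k < M' ρ) 1 0 :=
          Finset.sum_congr rfl (fun k _ => h1 k)
      _ = ∑ ρ : ZMod p, ∑ k ∈ Finset.range K, ite (k < M' ρ) 1 0 := Finset.sum_comm
      _ = ∑ ρ : ZMod p, M' ρ := by
          apply Finset.sum_congr rfl
          intro ρ _
          rw [← Finset.card_filter]
          have hfe : (Finset.range K).filter (fun k => k < M' ρ) = Finset.range (M' ρ) := by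
            ext k
            simp only [Finset.mem_filter, Finset.mem_range]
            have := hM'le ρ
            omega
          rw [hfe, Finset.card_range]
      _ = p + K := hM'tot
  set t₀ : ZMod p := (n : ZMod p) - ∑ i ∈ Finset.range ℓ, (c₀ i : ZMod p) * x i with ht₀def
  obtain ⟨f, hf1, hf2⟩ := nrl_cover B K hBne (by omega) t₀
  have hf1' : ∀ k < K, k < ∑ i ∈ (Finset.range ℓ).filter (fun i => x i = f k), w' i := by
    intro k hk
    have := hf1 k hk
    rw [hBdef, Finset.mem_filter] at this
    exact this.2
  obtain ⟨c₁, hc₁le, hc₁supp, hc₁sum, hc₁mod⟩ := nrl_realize x w' ℓ K f hf1'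
  -- Step F : final assembly
  set c : ℕ → ℕ := fun i => c₀ i + c₁ i with hcdef
  have hcle : ∀ i, c i ≤ dig i := by
    intro i
    have h1 := hc₀le i
    have h2 := hc₁le i
    have h3 := hw'add i
    simp only [hcdef]
    omega
  have hcsum : ∑ i ∈ Finset.range ℓ, c i = h := by
    simp only [hcdef]
    rw [Finset.sum_add_distrib, hc₀sum, hc₁sum]
    omega
  have hcmod : ∑ i ∈ Finset.range ℓ, (c i : ZMod p) * x i = (n : ZMod p) := by
    have h1 : ∀ i ∈ Finset.range ℓ,
        (c i : ZMod p) * x i = (c₀ i : ZMod p) * x i + (c₁ i : ZMod p) * x i := by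
      intro i _
      simp only [hcdef]
      push_cast
      ring
    rw [Finset.sum_congr rfl h1, Finset.sum_add_distrib, hc₁mod, hf2, ht₀def]
    ring
  -- the large Niven number m
  set Bm := (List.range ℓ).map (fun i => dig i - c i) with hBmdef
  set m := Nat.ofDigits g Bm with hmdef
  have hm_eq : m = ∑ i ∈ Finset.range ℓ, (dig i - c i) * g ^ i := by
    rw [hmdef, hBmdef, nrl_ofDigits_map_range]
  have hmem_lt : ∀ a ∈ Bm, a < g := by
    intro a ha
    rw [hBmdef, List.mem_map] at ha
    obtain ⟨i, hi, rfl⟩ := ha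
    have hilt : i < ℓ := List.mem_range.mp hi
    have := hdig_lt i hilt
    omega
  have hm_digitsum : (Nat.digits g m).sum = p := by
    rw [hmdef, nrl_sum_digits_ofDigits hg1 Bm hmem_lt, hBmdef, nrl_sum_map_range]
    have h1 : ∑ i ∈ Finset.range ℓ, ((dig i - c i) + c i) = p + h := by
      have hcg : ∀ i ∈ Finset.range ℓ, (dig i - c i) + c i = dig i := by
        intro i _
        have := hcle i
        omega
      rw [Finset.sum_congr rfl hcg]
      exact hsum'
    rw [Finset.sum_add_distrib, hcsum] at h1
    omega
  have hmn : m + ∑ i ∈ Finset.range ℓ, c i * g ^ i = n := by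
    rw [hm_eq, ← Finset.sum_add_distrib]
    rw [hn_eq]
    apply Finset.sum_congr rfl
    intro i _
    have hci := hcle i
    rw [← Nat.add_mul, Nat.sub_add_cancel hci]
  have hm_mod : (m : ZMod p) = 0 := by
    have h1 : ((m + ∑ i ∈ Finset.range ℓ, c i * g ^ i : ℕ) : ZMod p) = ((n : ℕ) : ZMod p) := by
      rw [hmn]
    push_cast at h1
    have h2 : (m : ZMod p) + ∑ i ∈ Finset.range ℓ, (c i : ZMod p) * x i = (n : ZMod p) := by
      exact h1
    rw [hcmod] at h2
    have := add_right_cancel (b := (n : ZMod p)) (a := (m : ZMod p)) (c := 0)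
    apply this
    rw [zero_add]
    exact h2
  have hm_dvd : p ∣ m := (ZMod.natCast_eq_zero_iff m p).mp hm_mod
  have hm_pos : 0 < m := by
    rcases Nat.eq_zero_or_pos m with h0 | h' 
    · exfalso
      rw [h0] at hm_digitsum
      simp at hm_digitsum
      omega
    · exact h'
  have hm_niven : IsNiven g m := ⟨hm_pos, by rw [hm_digitsum]; exact hm_dvd⟩
  -- the small pieces
  set S := (Finset.range ℓ).filter (fun i => c i ≠ 0) with hSdef
  have hScard : S.card ≤ h := by
    have h1 : S.card = ∑ i ∈ S, 1 := by rw [Finset.sum_const, smul_eq_mul, mul_one]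
    have h2 : ∑ i ∈ S, 1 ≤ ∑ i ∈ S, c i := by
      apply Finset.sum_le_sum
      intro i hi
      have := (Finset.mem_filter.mp hi).2
      omega
    have h3 : ∑ i ∈ S, c i ≤ ∑ i ∈ Finset.range ℓ, c i :=
      Finset.sum_le_sum_of_subset (Finset.filter_subset _ _)
    omega
  have hSsum : ∑ i ∈ S, c i * g ^ i = ∑ i ∈ Finset.range ℓ, c i * g ^ i := by
    rw [hSdef]
    apply Finset.sum_filter_of_ne
    intro i _ hne
    intro h0
    rw [h0, zero_mul] at hne
    exact hne rfl
  refine ⟨m :: S.toList.map (fun i => c i * g ^ i), ?_, ?_, ?_⟩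
  · rw [List.length_cons, List.length_map, Finset.length_toList]
    have := hh.2
    omega
  · intro v hv
    rcases List.mem_cons.mp hv with rfl | hv'
    · exact hm_niven
    · rw [List.mem_map] at hv'
      obtain ⟨i, hiS, rfl⟩ := hv'
      rw [Finset.mem_toList] at hiS
      have hci : c i ≠ 0 := (Finset.mem_filter.mp hiS).2
      have hilt : i < ℓ := Finset.mem_range.mp (Finset.mem_filter.mp hiS).1
      have hcig : c i < g := lt_of_le_of_lt (hcle i) (hdig_lt i hilt)
      constructor
      · have : 0 < g ^ i := Nat.pow_pos (by omega)
        exact Nat.mul_pos (by omega) this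
      · -- digit sum of c i * g^i is c i
        have hval : c i * g ^ i = Nat.ofDigits g (List.replicate i 0 ++ [c i]) := by
          rw [Nat.ofDigits_append, nrl_ofDigits_replicate, Nat.ofDigits_singleton,
            List.length_replicate]
          ring
        have hds : (Nat.digits g (c i * g ^ i)).sum = c i := by
          rw [hval, nrl_sum_digits_ofDigits hg1]
          · rw [List.sum_append, List.sum_replicate, List.sum_cons, List.sum_nil]
            simp
          · intro a ha
            rcases List.mem_append.mp ha with h' | h'
            · have := List.eq_of_mem_replicate h'
              omega
            · rcases List.mem_singleton.mp h' with rfl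
              exact hcig
        rw [hds]
        exact Dvd.intro _ rfl
  · rw [List.sum_cons]
    have h1 : (S.toList.map (fun i => c i * g ^ i)).sum = ∑ i ∈ S, c i * g ^ i :=
      Finset.sum_map_toList S (fun i => c i * g ^ i)
    rw [h1, hSsum, hmn]
end

section
/- Let g ≥ 2 and let q > 0 and r be integers. The set S_{q,r} of positive integers n satisfying (S1) s_g(n) ≡ r (mod q) and (S2) for all positive integers m such that [m]_g is a substring of [n]_g and ℓ_g(m) ≥ 36 log ℓ_g(n), one has s_g(m) > (g-1)/3 · ℓ_g(m), has positive lower asymptotic density; in fact its lower density is at least 1/(2g^{q+1}). -/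
open Filter Finset

set_option maxHeartbeats 1000000


lemma digitsum_add_base_mul {g : ℕ} (hg : 2 ≤ g) {d : ℕ} (m : ℕ) (hd : d < g) :
    (Nat.digits g (d + g * m)).sum = d + (Nat.digits g m).sum := by
  rcases Nat.eq_zero_or_pos (d + g * m) with h | h
  · have hd0 : d = 0 := by omega
    have hm0 : m = 0 := by
      have := Nat.mul_eq_zero.mp (by omega : g * m = 0); omega
    simp [hd0, hm0]
  · rw [Nat.digits_def' (by omega : 1 < g) h]
    have h1 : (d + g * m) % g = d := by
      rw [Nat.add_mul_mod_self_left, Nat.mod_eq_of_lt hd]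
    have h2 : (d + g * m) / g = m := by
      rw [Nat.add_mul_div_left _ _ (by omega : 0 < g), Nat.div_eq_of_lt hd]; omega
    rw [h1, h2, List.sum_cons]

lemma ofDigits_zero_sum {g : ℕ} (hg : 2 ≤ g) :
    ∀ w : List ℕ, Nat.ofDigits g w = 0 → w.sum = 0 := by
  intro w
  induction w with
  | nil => simp
  | cons d w ih =>
    intro h
    rw [Nat.ofDigits_cons] at h
    have hw : Nat.ofDigits g w = 0 := by
      have := Nat.mul_eq_zero.mp (by omega : g * Nat.ofDigits g w = 0); omega
    simp only [List.sum_cons, ih hw]; omega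

lemma sum_digits_ofDigits {g : ℕ} (hg : 2 ≤ g) :
    ∀ w : List ℕ, (∀ x ∈ w, x < g) → (Nat.digits g (Nat.ofDigits g w)).sum = w.sum := by
  intro w
  induction w with
  | nil => simp
  | cons d w ih =>
    intro hw
    rw [Nat.ofDigits_cons]
    have hd : d < g := hw d (by simp)
    rw [digitsum_add_base_mul hg (Nat.ofDigits g w) hd,
      ih (fun x hx => hw x (List.mem_cons_of_mem _ hx))]
    simp


lemma exp_pair_bound {t : ℝ} (ht : |t| ≤ 1) :
    Real.exp t + Real.exp (-t) ≤ 2 + 3/2 * t^2 := by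
  have h1 := Real.exp_bound ht (by norm_num : 0 < 2)
  have h2 := Real.exp_bound (by rwa [abs_neg] : |(-t)| ≤ 1) (by norm_num : 0 < 2)
  simp only [Finset.sum_range_succ, Finset.sum_range_zero, Nat.factorial] at h1 h2
  rw [abs_sub_le_iff] at h1 h2
  have e1 := h1.1
  have e2 := h2.1
  rw [abs_neg] at e2
  norm_num at e1 e2 ⊢
  nlinarith [abs_nonneg t, sq_abs t]

lemma sumDig_le (g : ℕ) (hg : 2 ≤ g) :
    ∑ d ∈ Finset.range g, Real.exp ((1/(3*((g:ℝ)-1))) * (((g:ℝ)-1)/3 - d))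
      ≤ g * Real.exp (-(5/144)) := by
  have hg1 : (1:ℝ) ≤ (g:ℝ) - 1 := by
    have : (2:ℝ) ≤ g := by exact_mod_cast hg
    linarith
  set β : ℝ := 1/(3*((g:ℝ)-1)) with hβ
  set c : ℝ := ((g:ℝ)-1)/2 with hc
  have hβpos : 0 < β := by positivity
  have hβc : β * c = 1/6 := by
    rw [hβ, hc]
    field_simp
    ring
  -- rewrite each term
  have hterm : ∀ d : ℕ, Real.exp (β * (((g:ℝ)-1)/3 - d))
      = Real.exp (-(1/18)) * Real.exp (β * (c - d)) := by
    intro d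
    rw [← Real.exp_add]
    congr 1
    have : ((g:ℝ)-1)/3 - d = (((g:ℝ)-1)/3 - c) + (c - d) := by ring
    rw [this, mul_add]
    congr 1
    rw [hc, hβ]
    field_simp
    ring
  -- reflection
  have hrefl : ∑ d ∈ Finset.range g, Real.exp (β * (c - d))
      = ∑ d ∈ Finset.range g, Real.exp (-(β * (c - d))) := by
    have := Finset.sum_range_reflect (fun j : ℕ => Real.exp (-(β * (c - j)))) g
    rw [← this]
    apply Finset.sum_congr rfl
    intro j hj
    rw [Finset.mem_range] at hj
    congr 1
    have hcast : ((g - 1 - j : ℕ) : ℝ) = (g:ℝ) - 1 - j := by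
      have : j ≤ g - 1 := by omega
      rw [Nat.cast_sub this, Nat.cast_sub (by omega : 1 ≤ g)]
      norm_num
    rw [hcast, hc]
    ring
  -- pair bound
  have hub : ∀ d ∈ Finset.range g,
      Real.exp (β * (c - d)) + Real.exp (-(β * (c - d))) ≤ 2 + 1/24 := by
    intro d hd
    rw [Finset.mem_range] at hd
    have habs : |β * (c - d)| ≤ 1/6 := by
      rw [abs_mul, abs_of_pos hβpos]
      have h1 : |c - (d:ℝ)| ≤ c := by
        rw [abs_le]
        constructor
        · have : (d:ℝ) ≤ (g:ℝ) - 1 := by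
            have : (d:ℝ) ≤ (g:ℝ) - 1 := by
              have : d ≤ g - 1 := by omega
              calc (d:ℝ) ≤ ((g-1 : ℕ):ℝ) := by exact_mod_cast this
                _ = (g:ℝ) - 1 := by push_cast [Nat.cast_sub (by omega : 1 ≤ g)]; ring
            exact this
          rw [hc]; linarith
        · have : (0:ℝ) ≤ d := Nat.cast_nonneg d
          rw [hc]; linarith
      calc β * |c - (d:ℝ)| ≤ β * c := by nlinarith
        _ = 1/6 := hβc
    have := exp_pair_bound (le_trans habs (by norm_num))
    nlinarith [sq_abs (β * (c - (d:ℝ))), sq_nonneg (|β * (c-(d:ℝ))| - 1/6), abs_nonneg (β * (c - (d:ℝ)))]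
  -- combine
  have hsum : ∑ d ∈ Finset.range g, Real.exp (β * (c - d)) ≤ g * (1 + 1/48) := by
    have h2 : 2 * ∑ d ∈ Finset.range g, Real.exp (β * (c - d))
        = ∑ d ∈ Finset.range g, (Real.exp (β * (c - d)) + Real.exp (-(β * (c - d)))) := by
      rw [Finset.sum_add_distrib, ← hrefl]; ring
    have h3 : ∑ d ∈ Finset.range g, (Real.exp (β * (c - d)) + Real.exp (-(β * (c - d))))
        ≤ ∑ _d ∈ Finset.range g, (2 + 1/24 : ℝ) := Finset.sum_le_sum hub
    rw [Finset.sum_const, Finset.card_range] at h3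
    have h4 : 2 * ∑ d ∈ Finset.range g, Real.exp (β * (c - d)) ≤ (g:ℝ) * 2 + g * 24⁻¹ := by
      rw [h2]; simpa using h3
    linarith
  calc ∑ d ∈ Finset.range g, Real.exp (β * (((g:ℝ)-1)/3 - d))
      = Real.exp (-(1/18)) * ∑ d ∈ Finset.range g, Real.exp (β * (c - d)) := by
        rw [Finset.mul_sum]; exact Finset.sum_congr rfl (fun d _ => hterm d)
    _ ≤ Real.exp (-(1/18)) * (g * Real.exp (1/48)) := by
        have h48 : (1:ℝ) + 1/48 ≤ Real.exp (1/48) := by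
          have := Real.add_one_le_exp (1/48 : ℝ); linarith
        gcongr
        exact le_trans hsum (by gcongr)
    _ = g * Real.exp (-(5/144)) := by
        rw [mul_comm, mul_assoc, ← Real.exp_add]
        norm_num



lemma sum_f_digitsum {g : ℕ} (hg : 2 ≤ g) (f : ℕ → ℝ) (hf0 : f 0 = 1)
    (hf : ∀ a b, f (a+b) = f a * f b) :
    ∀ ℓ : ℕ, ∑ m ∈ Finset.range (g^ℓ), f (Nat.digits g m).sum
      = (∑ d ∈ Finset.range g, f d)^ℓ := by
  intro ℓ
  induction ℓ with
  | zero => simpa using hf0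
  | succ ℓ ih =>
    conv_rhs => rw [pow_succ]
    rw [← ih, Finset.sum_mul_sum]
    rw [← Finset.sum_product']
    apply Finset.sum_nbij' (fun m => ((m / g : ℕ), (m % g : ℕ)))
      (fun p => p.2 + g * p.1)
    · intro m hm
      rw [Finset.mem_range] at hm
      rw [Finset.mem_product, Finset.mem_range, Finset.mem_range]
      refine ⟨?_, Nat.mod_lt _ (by omega)⟩
      rw [Nat.div_lt_iff_lt_mul (by omega : 0 < g)]
      calc m < g^(ℓ+1) := hm
        _ = g^ℓ * g := by ring
    · intro p hp
      rw [Finset.mem_product, Finset.mem_range, Finset.mem_range] at hp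
      rw [Finset.mem_range]
      have h1 : p.1 + 1 ≤ g^ℓ := hp.1
      have h2 : p.2 + 1 ≤ g := hp.2
      calc p.2 + g * p.1 < g + g * p.1 := by omega
        _ = g * (p.1 + 1) := by ring
        _ ≤ g * g^ℓ := Nat.mul_le_mul_left g h1
        _ = g^(ℓ+1) := by ring
    · intro m hm
      simp [Nat.mod_add_div]
    · intro p hp
      rw [Finset.mem_product, Finset.mem_range, Finset.mem_range] at hp
      have e1 : (p.2 + g * p.1) % g = p.2 := by
        rw [Nat.add_mul_mod_self_left, Nat.mod_eq_of_lt hp.2]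
      have e2 : (p.2 + g * p.1) / g = p.1 := by
        rw [Nat.add_mul_div_left _ _ (by omega : 0 < g), Nat.div_eq_of_lt hp.2]; omega
      simp [e1, e2]
    · intro m hm
      rw [Finset.mem_range] at hm
      have hd : m % g < g := Nat.mod_lt _ (by omega)
      have hm' : m = m % g + g * (m / g) := by rw [Nat.mod_add_div]
      conv_lhs => rw [hm']
      rw [digitsum_add_base_mul hg (m / g) hd, hf]
      simp only []
      ring

lemma Xcard_le {g : ℕ} (hg : 2 ≤ g) (ℓ : ℕ)
    (hdig : ∑ d ∈ Finset.range g, Real.exp ((1/(3*((g:ℝ)-1))) * (((g:ℝ)-1)/3 - d))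
      ≤ g * Real.exp (-(5/144))) :
    (((Finset.range (g^ℓ)).filter
        (fun m => 3 * (Nat.digits g m).sum ≤ (g-1) * ℓ)).card : ℝ)
      ≤ (g * Real.exp (-(5/144)))^ℓ := by
  have h2g : (2:ℝ) ≤ (g:ℝ) := by exact_mod_cast hg
  have hden : (0:ℝ) < 3*((g:ℝ)-1) := by linarith
  have hβpos : (0:ℝ) < 1/(3*((g:ℝ)-1)) := by positivity
  have h0 : (fun s : ℕ => Real.exp (-((1/(3*((g:ℝ)-1))) * (s:ℝ)))) 0 = 1 := by norm_num
  have hmul : ∀ a b : ℕ, (fun s : ℕ => Real.exp (-((1/(3*((g:ℝ)-1))) * (s:ℝ)))) (a+b)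
      = (fun s : ℕ => Real.exp (-((1/(3*((g:ℝ)-1))) * (s:ℝ)))) a
        * (fun s : ℕ => Real.exp (-((1/(3*((g:ℝ)-1))) * (s:ℝ)))) b := by
    intro a b
    simp only []
    rw [← Real.exp_add]
    congr 1
    push_cast
    ring
  have hT := sum_f_digitsum hg (fun s : ℕ => Real.exp (-((1/(3*((g:ℝ)-1))) * (s:ℝ)))) h0 hmul ℓ
  beta_reduce at hT
  have step1 : (((Finset.range (g^ℓ)).filter
        (fun m => 3 * (Nat.digits g m).sum ≤ (g-1) * ℓ)).card : ℝ)
      ≤ ∑ m ∈ Finset.range (g^ℓ),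
          Real.exp ((1/(3*((g:ℝ)-1))) * ((((g:ℝ)-1)/3) * ℓ - (Nat.digits g m).sum)) := by
    rw [Finset.card_eq_sum_ones, Nat.cast_sum]
    refine le_trans (Finset.sum_le_sum ?_)
      (Finset.sum_le_sum_of_subset_of_nonneg (Finset.filter_subset _ _)
        (fun m _ _ => (Real.exp_pos _).le))
    intro m hm
    rw [Finset.mem_filter] at hm
    have hcast : 3 * ((Nat.digits g m).sum : ℝ) ≤ ((g-1 : ℕ):ℝ) * ℓ := by
      exact_mod_cast hm.2
    have hg1 : ((g-1:ℕ):ℝ) = (g:ℝ) - 1 := by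
      rw [Nat.cast_sub (by omega : 1 ≤ g)]; norm_num
    rw [hg1] at hcast
    have hnn : (0:ℝ) ≤ (1/(3*((g:ℝ)-1))) * ((((g:ℝ)-1)/3) * ℓ - (Nat.digits g m).sum) := by
      apply mul_nonneg hβpos.le; linarith
    simpa using Real.one_le_exp hnn
  have hsplit : ∀ m : ℕ,
      Real.exp ((1/(3*((g:ℝ)-1))) * ((((g:ℝ)-1)/3) * ℓ - (Nat.digits g m).sum))
      = Real.exp ((1/(3*((g:ℝ)-1))) * (((g:ℝ)-1)/3)) ^ ℓ
        * Real.exp (-((1/(3*((g:ℝ)-1))) * (((Nat.digits g m).sum : ℕ) : ℝ))) := by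
    intro m
    rw [← Real.exp_nat_mul, ← Real.exp_add]
    congr 1
    ring
  have step2 : ∑ m ∈ Finset.range (g^ℓ),
      Real.exp ((1/(3*((g:ℝ)-1))) * ((((g:ℝ)-1)/3) * ℓ - (Nat.digits g m).sum))
      = (∑ d ∈ Finset.range g, Real.exp ((1/(3*((g:ℝ)-1))) * (((g:ℝ)-1)/3 - d)))^ℓ := by
    rw [Finset.sum_congr rfl (fun m _ => hsplit m), ← Finset.mul_sum, hT, ← mul_pow]
    congr 1
    rw [Finset.mul_sum]
    refine Finset.sum_congr rfl (fun d _ => ?_)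
    rw [← Real.exp_add]
    congr 1
    ring
  refine le_trans step1 (le_trans (le_of_eq step2) ?_)
  apply pow_le_pow_left₀ (Finset.sum_nonneg (fun d _ => (Real.exp_pos _).le)) hdig



lemma window_eq {g : ℕ} (hg : 2 ≤ g) {n : ℕ} {a w b : List ℕ}
    (h : Nat.digits g n = a ++ (w ++ b)) :
    (n / g^a.length) % g^w.length = Nat.ofDigits g w := by
  have hlt : ∀ x ∈ Nat.digits g n, x < g := fun x hx => Nat.digits_lt_base (by omega) hx
  have ha : ∀ x ∈ a, x < g := fun x hx => hlt x (by rw [h]; simp [hx])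
  have hw : ∀ x ∈ w, x < g := fun x hx => hlt x (by rw [h]; simp [hx])
  have hn : n = Nat.ofDigits g a + g^a.length * Nat.ofDigits g (w ++ b) := by
    conv_lhs => rw [← Nat.ofDigits_digits g n, h]
    rw [Nat.ofDigits_append]
  have hdiv : n / g^a.length = Nat.ofDigits g (w ++ b) := by
    rw [hn, Nat.add_mul_div_left _ _ (by positivity : 0 < g^a.length),
      Nat.div_eq_of_lt (Nat.ofDigits_lt_base_pow_length (by omega) ha)]
    omega
  rw [hdiv, Nat.ofDigits_append, Nat.add_mul_mod_self_left,
    Nat.mod_eq_of_lt (Nat.ofDigits_lt_base_pow_length (by omega) hw)]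

lemma digits_len_of_mem_Ico {g L n : ℕ} (hg : 2 ≤ g) (hL : 1 ≤ L)
    (h : n ∈ Finset.Ico (g^(L-1)) (g^L)) : (Nat.digits g n).length = L := by
  rw [Finset.mem_Ico] at h
  have hn0 : n ≠ 0 := by
    have : 1 ≤ g^(L-1) := Nat.one_le_pow _ _ (by omega)
    omega
  rw [Nat.digits_len g n (by omega) hn0]
  have : Nat.log g n = L - 1 := by
    apply Nat.log_eq_of_pow_le_of_lt_pow h.1
    have : L - 1 + 1 = L := by omega
    rw [this]; exact h.2
  omega

open scoped Classical in
lemma badF_card_le {g : ℕ} (hg : 2 ≤ g)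
    (hX : ∀ ℓ : ℕ, (((Finset.range (g^ℓ)).filter
        (fun m => 3 * (Nat.digits g m).sum ≤ (g-1) * ℓ)).card : ℝ)
      ≤ ((g:ℝ) * Real.exp (-(5/144)))^ℓ)
    (L t0 : ℕ) (hL : 1 ≤ L) (ht0 : 1 ≤ t0) :
    (((Finset.Ico (g^(L-1)) (g^L)).filter (fun n => ∃ w : List ℕ,
        w <:+: Nat.digits g n ∧ t0 ≤ w.length ∧ 3 * w.sum ≤ (g-1) * w.length)).card : ℝ)
      ≤ 30 * L * (g:ℝ)^L * (Real.exp (-(5/144)))^t0 := by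
  set X : ℕ → Finset ℕ := fun ℓ => (Finset.range (g^ℓ)).filter
      (fun m => 3 * (Nat.digits g m).sum ≤ (g-1) * ℓ) with hXdef
  set W : ℕ × ℕ → Finset ℕ := fun p => (Finset.Ico (g^(L-1)) (g^L)).filter
      (fun n => p.2 + p.1 ≤ L ∧ 3 * (Nat.digits g ((n / g^p.2) % g^p.1)).sum ≤ (g-1) * p.1)
    with hWdef
  -- subset of biUnion
  have hsub : (Finset.Ico (g^(L-1)) (g^L)).filter (fun n => ∃ w : List ℕ,
        w <:+: Nat.digits g n ∧ t0 ≤ w.length ∧ 3 * w.sum ≤ (g-1) * w.length)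
      ⊆ (Finset.Icc t0 L ×ˢ Finset.range L).biUnion W := by
    intro n hn
    rw [Finset.mem_filter] at hn
    obtain ⟨hblock, w, hinf, hlen, hsumw⟩ := hn
    obtain ⟨a, b, hab⟩ := hinf
    have hlenL : (Nat.digits g n).length = L := digits_len_of_mem_Ico hg hL hblock
    have hlens : a.length + w.length + b.length = L := by
      rw [← hlenL, ← hab]; simp [List.length_append]; omega
    rw [Finset.mem_biUnion]
    refine ⟨(w.length, a.length), ?_, ?_⟩
    · rw [Finset.mem_product, Finset.mem_Icc, Finset.mem_range]
      constructor
      · exact ⟨hlen, by omega⟩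
      · omega
    · rw [hWdef, Finset.mem_filter]
      refine ⟨hblock, by omega, ?_⟩
      have : Nat.digits g n = a ++ (w ++ b) := by rw [← hab]; simp
      rw [window_eq hg this]
      have hwlt : ∀ x ∈ w, x < g := by
        intro x hx
        apply Nat.digits_lt_base (by omega : 1 < g)
        rw [this]; simp [hx]
      rw [sum_digits_ofDigits hg w hwlt]
      exact hsumw
  -- card of each W
  have hW : ∀ p ∈ Finset.Icc t0 L ×ˢ Finset.range L,
      (W p).card ≤ (X p.1).card * g^(L - p.1) := by
    rintro ⟨ℓ, i⟩ hp
    by_cases hple : i + ℓ ≤ L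
    · refine le_trans (Finset.card_le_card_of_injOn
        (fun n => ((n / g^i) % g^ℓ, n % g^i + g^i * (n / g^(i+ℓ))))
        (t := X ℓ ×ˢ Finset.range (g^(L-ℓ))) ?_ ?_)
        (le_of_eq (by rw [Finset.card_product, Finset.card_range]))
      · intro n hn
        rw [Finset.mem_coe, hWdef, Finset.mem_filter, Finset.mem_Ico] at hn
        obtain ⟨⟨hn1, hn2⟩, _, hcond⟩ := hn
        rw [Finset.mem_coe, Finset.mem_product, hXdef, Finset.mem_filter, Finset.mem_range, Finset.mem_range]
        refine ⟨⟨Nat.mod_lt _ (by positivity), hcond⟩, ?_⟩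
        have hlo : n % g^i < g^i := Nat.mod_lt _ (by positivity)
        have hhi : n / g^(i+ℓ) < g^(L-i-ℓ) := by
          rw [Nat.div_lt_iff_lt_mul (by positivity : 0 < g^(i+ℓ)), ← pow_add]
          have : L - i - ℓ + (i + ℓ) = L := by omega
          rw [this]; exact hn2
        calc n % g^i + g^i * (n / g^(i+ℓ))
            < g^i + g^i * (n / g^(i+ℓ)) := by omega
          _ = g^i * (n / g^(i+ℓ) + 1) := by ring
          _ ≤ g^i * g^(L-i-ℓ) := Nat.mul_le_mul_left _ (by omega)
          _ = g^(L-ℓ) := by rw [← pow_add]; congr 1; omega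
      · intro n1 hn1 n2 hn2 heq
        simp only [Prod.mk.injEq] at heq
        have key : ∀ n : ℕ, n = n % g^i + g^i * ((n / g^i) % g^ℓ + g^ℓ * (n / g^(i+ℓ))) := by
          intro n
          have h1 : n / g^i = (n / g^i) % g^ℓ + g^ℓ * ((n / g^i) / g^ℓ) := by
            rw [Nat.mod_add_div]
          have h2 : (n / g^i) / g^ℓ = n / g^(i+ℓ) := by
            rw [Nat.div_div_eq_div_mul, ← pow_add]
          conv_lhs => rw [← Nat.mod_add_div n (g^i), h1, h2]
        have hrec : ∀ n : ℕ, n % g^i = (n % g^i + g^i * (n / g^(i+ℓ))) % g^i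
            ∧ n / g^(i+ℓ) = (n % g^i + g^i * (n / g^(i+ℓ))) / g^i := by
          intro n
          have hlo : n % g^i < g^i := Nat.mod_lt _ (by positivity)
          constructor
          · rw [Nat.add_mul_mod_self_left, Nat.mod_eq_of_lt hlo]
          · rw [Nat.add_mul_div_left _ _ (by positivity : 0 < g^i), Nat.div_eq_of_lt hlo]
            omega
        have e1 := (hrec n1).1
        have e2 := (hrec n1).2
        rw [heq.2, ← (hrec n2).1] at e1
        rw [heq.2, ← (hrec n2).2] at e2
        calc n1 = n1 % g^i + g^i * ((n1 / g^i) % g^ℓ + g^ℓ * (n1 / g^(i+ℓ))) := key n1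
          _ = n2 % g^i + g^i * ((n2 / g^i) % g^ℓ + g^ℓ * (n2 / g^(i+ℓ))) := by
              rw [e1, e2, heq.1]
          _ = n2 := (key n2).symm
    · have hWempty : W (ℓ, i) = ∅ := by
        rw [hWdef]
        apply Finset.filter_eq_empty_iff.mpr
        intro x hx hc
        exact hple hc.1
      rw [hWempty]
      simp
  -- assemble
  have hcard : ((Finset.Ico (g^(L-1)) (g^L)).filter (fun n => ∃ w : List ℕ,
        w <:+: Nat.digits g n ∧ t0 ≤ w.length ∧ 3 * w.sum ≤ (g-1) * w.length)).card
      ≤ ∑ p ∈ Finset.Icc t0 L ×ˢ Finset.range L, (X p.1).card * g^(L - p.1) :=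
    le_trans (le_trans (Finset.card_le_card hsub) Finset.card_biUnion_le)
      (Finset.sum_le_sum hW)
  have hρ0 : (0:ℝ) < Real.exp (-(5/144)) := Real.exp_pos _
  have hρ1 : Real.exp (-(5/144)) ≤ 29/30 := by
    have h1 : (30:ℝ)/29 ≤ Real.exp (5/144) := by
      have := Real.add_one_le_exp (5/144 : ℝ); nlinarith
    rw [Real.exp_neg]
    rw [inv_le_comm₀ (Real.exp_pos _) (by norm_num)]
    linarith
  have hgR : (0:ℝ) < (g:ℝ) := by positivity
  calc (((Finset.Ico (g^(L-1)) (g^L)).filter (fun n => ∃ w : List ℕ,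
        w <:+: Nat.digits g n ∧ t0 ≤ w.length ∧ 3 * w.sum ≤ (g-1) * w.length)).card : ℝ)
      ≤ ∑ p ∈ Finset.Icc t0 L ×ˢ Finset.range L, ((X p.1).card : ℝ) * (g:ℝ)^(L - p.1) := by
        calc (((Finset.Ico (g^(L-1)) (g^L)).filter (fun n => ∃ w : List ℕ,
            w <:+: Nat.digits g n ∧ t0 ≤ w.length ∧ 3 * w.sum ≤ (g-1) * w.length)).card : ℝ)
            ≤ ((∑ p ∈ Finset.Icc t0 L ×ˢ Finset.range L, (X p.1).card * g^(L - p.1) : ℕ) : ℝ) := by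
              exact_mod_cast hcard
          _ = ∑ p ∈ Finset.Icc t0 L ×ˢ Finset.range L, ((X p.1).card : ℝ) * (g:ℝ)^(L - p.1) := by
              push_cast; ring
    _ ≤ ∑ p ∈ Finset.Icc t0 L ×ˢ Finset.range L,
          ((g:ℝ) * Real.exp (-(5/144)))^p.1 * (g:ℝ)^(L - p.1) := by
        apply Finset.sum_le_sum
        intro p _
        exact mul_le_mul_of_nonneg_right (hX p.1) (by positivity)
    _ = ∑ ℓ ∈ Finset.Icc t0 L, ∑ _i ∈ Finset.range L,
          ((g:ℝ) * Real.exp (-(5/144)))^ℓ * (g:ℝ)^(L - ℓ) := by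
        rw [Finset.sum_product]
    _ = ∑ ℓ ∈ Finset.Icc t0 L, (L:ℝ) *
          (((g:ℝ) * Real.exp (-(5/144)))^ℓ * (g:ℝ)^(L - ℓ)) := by
        apply Finset.sum_congr rfl
        intro ℓ _
        rw [Finset.sum_const, Finset.card_range, nsmul_eq_mul]
    _ = (L:ℝ) * (g:ℝ)^L * ∑ ℓ ∈ Finset.Icc t0 L, (Real.exp (-(5/144)))^ℓ := by
        rw [Finset.mul_sum]
        apply Finset.sum_congr rfl
        intro ℓ hℓ
        rw [Finset.mem_Icc] at hℓ
        rw [mul_pow]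
        have : (g:ℝ)^ℓ * (g:ℝ)^(L-ℓ) = (g:ℝ)^L := by
          rw [← pow_add]; congr 1; omega
        linear_combination (L:ℝ) * Real.exp (-(5/144))^ℓ * this
    _ ≤ (L:ℝ) * (g:ℝ)^L * (30 * (Real.exp (-(5/144)))^t0) := by
        apply mul_le_mul_of_nonneg_left _ (by positivity)
        -- geometric sum
        have hIcc : Finset.Icc t0 L = Finset.Ico t0 (L+1) := by
          rw [Finset.Ico_add_one_right_eq_Icc]
        rw [hIcc, Finset.sum_Ico_eq_sum_range]
        have : ∑ j ∈ Finset.range (L + 1 - t0), (Real.exp (-(5/144)))^(t0 + j)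
            = (Real.exp (-(5/144)))^t0 * ∑ j ∈ Finset.range (L + 1 - t0),
              (Real.exp (-(5/144)))^j := by
          rw [Finset.mul_sum]
          exact Finset.sum_congr rfl (fun j _ => by rw [pow_add])
        rw [this, mul_comm (30 : ℝ) _]
        apply mul_le_mul_of_nonneg_left _ (by positivity)
        have hne : Real.exp (-(5/144)) ≠ 1 := by
          intro h
          rw [Real.exp_eq_one_iff] at h
          norm_num at h
        rw [geom_sum_eq hne]
        have hpow : (0:ℝ) ≤ (Real.exp (-(5/144)))^(L + 1 - t0) := by positivity
        rw [div_le_iff_of_neg (by linarith : Real.exp (-(5/144)) - 1 < 0)]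
        nlinarith
    _ = 30 * L * (g:ℝ)^L * (Real.exp (-(5/144)))^t0 := by ring



open scoped Classical in
lemma S1F_card_ge {g : ℕ} (hg : 2 ≤ g) (q : ℕ) (hq : 0 < q) (r : ℤ) (L : ℕ)
    (hL : q + 1 ≤ L) :
    (g-1) * g^(L-1-q) ≤ ((Finset.Ico (g^(L-1)) (g^L)).filter
      (fun n => ((Nat.digits g n).sum : ℤ) ≡ r [ZMOD (q:ℤ)])).card := by
  have hq0 : (q:ℤ) ≠ 0 := by exact_mod_cast hq.ne'
  -- injection
  set s : ℕ → ℕ := fun h => ((r - ((Nat.digits g h).sum : ℤ)) % q).toNat with hsdef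
  set low : ℕ → List ℕ := fun h => List.replicate (s h) 1 ++ List.replicate (q - s h) 0
    with hlowdef
  set φ : ℕ → ℕ := fun h => Nat.ofDigits g (low h ++ Nat.digits g h) with hφdef
  have hs_lt : ∀ h, s h < q := by
    intro h
    rw [hsdef]
    have h1 : (r - ((Nat.digits g h).sum : ℤ)) % q < q := Int.emod_lt_of_pos _ (by exact_mod_cast hq)
    exact (Int.toNat_lt' hq).mpr h1
  have hs_cast : ∀ h, ((s h : ℕ) : ℤ) = (r - ((Nat.digits g h).sum : ℤ)) % q := by
    intro h
    rw [hsdef]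
    exact Int.toNat_of_nonneg (Int.emod_nonneg _ hq0)
  have hlow_len : ∀ h, (low h).length = q := by
    intro h
    rw [hlowdef]
    simp only [List.length_append, List.length_replicate]
    have := hs_lt h; omega
  have hlow_sum : ∀ h, (low h).sum = s h := by
    intro h
    rw [hlowdef]
    simp [List.sum_replicate]
  have hlow_mem : ∀ h, ∀ x ∈ low h, x < g := by
    intro h x hx
    rw [hlowdef, List.mem_append] at hx
    rcases hx with hx | hx <;> rw [List.eq_of_mem_replicate hx] <;> omega
  -- key digits fact
  have hdig : ∀ h : ℕ, h ≠ 0 → Nat.digits g (φ h) = low h ++ Nat.digits g h := by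
    intro h h0
    rw [hφdef]
    apply Nat.digits_ofDigits g (by omega)
    · intro l hl
      rw [List.mem_append] at hl
      rcases hl with hl | hl
      · exact hlow_mem h l hl
      · exact Nat.digits_lt_base (by omega) hl
    · intro hne
      have hd : Nat.digits g h ≠ [] := Nat.digits_ne_nil_iff_ne_zero.mpr h0
      rw [List.getLast_append_of_right_ne_nil _ _ hd]
      exact Nat.getLast_digit_ne_zero g h0
  have hφval : ∀ h : ℕ, φ h = Nat.ofDigits g (low h) + g^q * h := by
    intro h
    rw [hφdef]
    simp only [Nat.ofDigits_append, Nat.ofDigits_digits, hlow_len h]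
  have hlow_lt : ∀ h : ℕ, Nat.ofDigits g (low h) < g^q := by
    intro h
    have := Nat.ofDigits_lt_base_pow_length (by omega : 1 < g) (hlow_mem h)
    rwa [hlow_len h] at this
  -- membership
  have hmem : ∀ h ∈ Finset.Ico (g^(L-q-1)) (g^(L-q)), φ h ∈
      (Finset.Ico (g^(L-1)) (g^L)).filter
        (fun n => ((Nat.digits g n).sum : ℤ) ≡ r [ZMOD (q:ℤ)]) := by
    intro h hh
    rw [Finset.mem_Ico] at hh
    have h0 : h ≠ 0 := by
      have : 1 ≤ g^(L-q-1) := Nat.one_le_pow _ _ (by omega)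
      omega
    rw [Finset.mem_filter, Finset.mem_Ico]
    have hpows : g^q * g^(L-q-1) = g^(L-1) := by rw [← pow_add]; congr 1; omega
    have hpows2 : g^q * g^(L-q) = g^L := by rw [← pow_add]; congr 1; omega
    refine ⟨⟨?_, ?_⟩, ?_⟩
    · calc g^(L-1) = g^q * g^(L-q-1) := hpows.symm
        _ ≤ g^q * h := Nat.mul_le_mul_left _ hh.1
        _ ≤ φ h := by rw [hφval]; omega
    · have h1 : h + 1 ≤ g^(L-q) := hh.2
      calc φ h = Nat.ofDigits g (low h) + g^q * h := hφval h
        _ < g^q + g^q * h := by have := hlow_lt h; omega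
        _ = g^q * (h+1) := by ring
        _ ≤ g^q * g^(L-q) := Nat.mul_le_mul_left _ h1
        _ = g^L := hpows2
    · -- S1
      rw [hdig h h0, List.sum_append]
      have : ((low h).sum + (Nat.digits g h).sum : ℕ) = s h + (Nat.digits g h).sum := by
        rw [hlow_sum]
      rw [this]
      push_cast
      rw [hs_cast h]
      have h1 : (r - ((Nat.digits g h).sum : ℤ)) % q
          ≡ r - ((Nat.digits g h).sum : ℤ) [ZMOD (q:ℤ)] := Int.emod_emod_of_dvd _ dvd_rfl
      have h2 := h1.add_right ((Nat.digits g h).sum : ℤ)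
      simpa using h2
  -- injectivity
  have hinj : Set.InjOn φ (Finset.Ico (g^(L-q-1)) (g^(L-q))) := by
    intro h1 hh1 h2 hh2 heq
    rw [Finset.coe_Ico, Set.mem_Ico] at hh1 hh2
    have e1 : 1 ≤ g^(L-q-1) := Nat.one_le_pow _ _ (by omega)
    have h10 : h1 ≠ 0 := by omega
    have h20 : h2 ≠ 0 := by omega
    have d1 : (Nat.digits g (φ h1)).drop q = Nat.digits g h1 := by
      rw [hdig h1 h10, ← hlow_len h1, List.drop_left]
    have d2 : (Nat.digits g (φ h2)).drop q = Nat.digits g h2 := by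
      rw [hdig h2 h20, ← hlow_len h2, List.drop_left]
    have : Nat.digits g h1 = Nat.digits g h2 := by rw [← d1, ← d2, heq]
    calc h1 = Nat.ofDigits g (Nat.digits g h1) := (Nat.ofDigits_digits g h1).symm
      _ = Nat.ofDigits g (Nat.digits g h2) := by rw [this]
      _ = h2 := Nat.ofDigits_digits g h2
  have hcard := Finset.card_le_card_of_injOn φ hmem hinj
  rw [Nat.card_Ico] at hcard
  have heq : g^(L-q) - g^(L-q-1) = (g-1) * g^(L-1-q) := by
    have e1 : L - q = (L-q-1) + 1 := by omega
    have e2 : L - 1 - q = L - q - 1 := by omega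
    rw [e1, e2, pow_succ, Nat.sub_mul, one_mul, mul_comm (g^(L-q-1)) g]
    norm_num
  omega



lemma rho_pow_le {K L : ℕ} (hK : 1 ≤ K) (hL : K^4 ≤ L) (hL2 : 2 ≤ L) :
    (L:ℝ) * (Real.exp (-(5/144)))^(⌈36 * Real.log L⌉₊) ≤ 1 / K := by
  have hLpos : (0:ℝ) < L := by positivity
  have hL1 : (1:ℝ) ≤ L := by exact_mod_cast (by omega : 1 ≤ L)
  have hK1 : (1:ℝ) ≤ K := by exact_mod_cast hK
  have hKpos : (0:ℝ) < K := by linarith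
  set t0 : ℕ := ⌈36 * Real.log L⌉₊ with ht0
  have hlogL : 0 ≤ Real.log L := Real.log_nonneg hL1
  have hlogK : 0 ≤ Real.log K := Real.log_nonneg hK1
  have h1 : (Real.exp (-(5/144)))^t0 = Real.exp ((t0:ℝ) * (-(5/144))) := by
    rw [Real.exp_nat_mul]
  have h2 : (36 * Real.log L : ℝ) ≤ t0 := Nat.le_ceil _
  have h3 : ((t0:ℝ)) * (-(5/144)) ≤ -(Real.log L) + (-(1/4) * Real.log L) := by
    nlinarith
  have h4 : (1/4 : ℝ) * Real.log L ≥ Real.log K := by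
    have hcast : ((K:ℝ))^4 ≤ (L:ℝ) := by exact_mod_cast hL
    have := Real.log_le_log (by positivity) hcast
    rw [Real.log_pow] at this
    push_cast at this
    linarith
  have h5 : Real.exp ((t0:ℝ) * (-(5/144)))
      ≤ Real.exp (-(Real.log L)) * Real.exp (-(Real.log K)) := by
    rw [← Real.exp_add]
    apply Real.exp_le_exp.mpr
    linarith
  have h6 : Real.exp (-(Real.log L)) = (L:ℝ)⁻¹ := by
    rw [Real.exp_neg, Real.exp_log hLpos]
  have h7 : Real.exp (-(Real.log K)) = (K:ℝ)⁻¹ := by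
    rw [Real.exp_neg, Real.exp_log hKpos]
  calc (L:ℝ) * (Real.exp (-(5/144)))^t0
      ≤ (L:ℝ) * ((L:ℝ)⁻¹ * (K:ℝ)⁻¹) := by
        rw [h1]
        apply mul_le_mul_of_nonneg_left _ hLpos.le
        rw [← h6, ← h7]
        exact h5
    _ = 1 / K := by field_simp



open scoped Classical in
lemma block_bound {g : ℕ} (hg : 2 ≤ g) (q : ℕ) (hq : 0 < q) (r : ℤ)
    (hX : ∀ ℓ : ℕ, (((Finset.range (g^ℓ)).filter
        (fun m => 3 * (Nat.digits g m).sum ≤ (g-1) * ℓ)).card : ℝ)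
      ≤ ((g:ℝ) * Real.exp (-(5/144)))^ℓ)
    (L : ℕ) (hL : q + 1 ≤ L) (hL2 : 2 ≤ L) :
    ((g:ℝ)-1) * (g:ℝ)^(L-1-q)
      - 30 * L * (g:ℝ)^L * (Real.exp (-(5/144)))^(⌈36 * Real.log L⌉₊)
    ≤ (((Finset.Ico (g^(L-1)) (g^L)).filter (fun n : ℕ =>
        n ∈ {n : ℕ | 0 < n ∧ ((Nat.digits g n).sum : ℤ) ≡ r [ZMOD (q : ℤ)] ∧
          ∀ m : ℕ, 0 < m → (Nat.digits g m) <:+: (Nat.digits g n) →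
            36 * Real.log ((Nat.digits g n).length) ≤ ((Nat.digits g m).length : ℝ) →
            (g - 1) * (Nat.digits g m).length < 3 * (Nat.digits g m).sum})).card : ℝ) := by
  set t0 : ℕ := ⌈36 * Real.log L⌉₊ with ht0def
  have hL1R : (1:ℝ) < (L:ℝ) := by exact_mod_cast (by omega : 1 < L)
  have ht01 : 1 ≤ t0 := by
    rw [ht0def]
    apply Nat.one_le_ceil_iff.mpr
    have := Real.log_pos hL1R
    positivity
  have hsub : (Finset.Ico (g^(L-1)) (g^L)).filter
      (fun n => ((Nat.digits g n).sum : ℤ) ≡ r [ZMOD (q:ℤ)])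
      ⊆ ((Finset.Ico (g^(L-1)) (g^L)).filter (fun n : ℕ =>
        n ∈ {n : ℕ | 0 < n ∧ ((Nat.digits g n).sum : ℤ) ≡ r [ZMOD (q : ℤ)] ∧
          ∀ m : ℕ, 0 < m → (Nat.digits g m) <:+: (Nat.digits g n) →
            36 * Real.log ((Nat.digits g n).length) ≤ ((Nat.digits g m).length : ℝ) →
            (g - 1) * (Nat.digits g m).length < 3 * (Nat.digits g m).sum}))
        ∪ ((Finset.Ico (g^(L-1)) (g^L)).filter (fun n => ∃ w : List ℕ,
            w <:+: Nat.digits g n ∧ t0 ≤ w.length ∧ 3 * w.sum ≤ (g-1) * w.length)) := by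
    intro n hn
    rw [Finset.mem_filter] at hn
    obtain ⟨hb, hS1⟩ := hn
    rw [Finset.mem_union]
    by_cases hbad : n ∈ (Finset.Ico (g^(L-1)) (g^L)).filter (fun n => ∃ w : List ℕ,
        w <:+: Nat.digits g n ∧ t0 ≤ w.length ∧ 3 * w.sum ≤ (g-1) * w.length)
    · right; exact hbad
    · left
      rw [Finset.mem_filter]
      refine ⟨hb, ?_⟩
      rw [Set.mem_setOf_eq]
      have hnpos : 0 < n := by
        rw [Finset.mem_Ico] at hb
        have : 1 ≤ g^(L-1) := Nat.one_le_pow _ _ (by omega)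
        omega
      refine ⟨hnpos, hS1, ?_⟩
      intro m hm hinf hlen
      by_contra hcon
      apply hbad
      rw [Finset.mem_filter]
      refine ⟨hb, Nat.digits g m, hinf, ?_, by omega⟩
      rw [ht0def, Nat.ceil_le]
      rwa [digits_len_of_mem_Ico hg (by omega) hb] at hlen
  have hcard1 := Finset.card_le_card hsub
  have hcard2 := Finset.card_union_le
    ((Finset.Ico (g^(L-1)) (g^L)).filter (fun n : ℕ =>
        n ∈ {n : ℕ | 0 < n ∧ ((Nat.digits g n).sum : ℤ) ≡ r [ZMOD (q : ℤ)] ∧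
          ∀ m : ℕ, 0 < m → (Nat.digits g m) <:+: (Nat.digits g n) →
            36 * Real.log ((Nat.digits g n).length) ≤ ((Nat.digits g m).length : ℝ) →
            (g - 1) * (Nat.digits g m).length < 3 * (Nat.digits g m).sum}))
    ((Finset.Ico (g^(L-1)) (g^L)).filter (fun n => ∃ w : List ℕ,
        w <:+: Nat.digits g n ∧ t0 ≤ w.length ∧ 3 * w.sum ≤ (g-1) * w.length))
  have hS1 := S1F_card_ge hg q hq r L hL
  have hbad := badF_card_le hg hX L t0 (by omega) ht01
  have hS1R : ((g:ℝ)-1) * (g:ℝ)^(L-1-q) ≤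
      (((Finset.Ico (g^(L-1)) (g^L)).filter
        (fun n => ((Nat.digits g n).sum : ℤ) ≡ r [ZMOD (q:ℤ)])).card : ℝ) := by
    calc ((g:ℝ)-1) * (g:ℝ)^(L-1-q) = (((g-1) * g^(L-1-q) : ℕ) : ℝ) := by
          push_cast [Nat.cast_sub (by omega : 1 ≤ g)]
          ring
      _ ≤ _ := by exact_mod_cast hS1
  have hchain : (((Finset.Ico (g^(L-1)) (g^L)).filter
        (fun n => ((Nat.digits g n).sum : ℤ) ≡ r [ZMOD (q:ℤ)])).card : ℝ)
      ≤ (((Finset.Ico (g^(L-1)) (g^L)).filter (fun n : ℕ =>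
        n ∈ {n : ℕ | 0 < n ∧ ((Nat.digits g n).sum : ℤ) ≡ r [ZMOD (q : ℤ)] ∧
          ∀ m : ℕ, 0 < m → (Nat.digits g m) <:+: (Nat.digits g n) →
            36 * Real.log ((Nat.digits g n).length) ≤ ((Nat.digits g m).length : ℝ) →
            (g - 1) * (Nat.digits g m).length < 3 * (Nat.digits g m).sum})).card : ℝ)
        + (((Finset.Ico (g^(L-1)) (g^L)).filter (fun n => ∃ w : List ℕ,
            w <:+: Nat.digits g n ∧ t0 ≤ w.length ∧ 3 * w.sum ≤ (g-1) * w.length)).card : ℝ) := by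
    have := le_trans hcard1 hcard2
    exact_mod_cast this
  linarith



/-- Lemma 4: for integers `q > 0` and `r`, the set `S_{q,r}` of positive integers `n` with
(S1) `s_g(n) ≡ r (mod q)` and (S2) every positive `m` whose digit string is a substring of
that of `n` with `ℓ_g(m) ≥ 36 log ℓ_g(n)` satisfies `s_g(m) > (g-1)/3 · ℓ_g(m)`,
has lower asymptotic density at least `1/(2g^{q+1})`; in particular positive. -/
theorem Sqr_positive_density (g : ℕ) (hg : 2 ≤ g) (q : ℕ) (hq : 0 < q) (r : ℤ) :
    (1 : ℝ) / (2 * (g : ℝ) ^ (q + 1)) ≤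
      Filter.atTop.liminf (fun x : ℕ =>
        (({n : ℕ | 0 < n ∧ ((Nat.digits g n).sum : ℤ) ≡ r [ZMOD (q : ℤ)] ∧
            ∀ m : ℕ, 0 < m → (Nat.digits g m) <:+: (Nat.digits g n) →
              36 * Real.log ((Nat.digits g n).length) ≤ ((Nat.digits g m).length : ℝ) →
              (g - 1) * (Nat.digits g m).length < 3 * (Nat.digits g m).sum} ∩
          Set.Icc 1 x).ncard : ℝ) / x) ∧
    (0 : ℝ) < Filter.atTop.liminf (fun x : ℕ =>
        (({n : ℕ | 0 < n ∧ ((Nat.digits g n).sum : ℤ) ≡ r [ZMOD (q : ℤ)] ∧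
            ∀ m : ℕ, 0 < m → (Nat.digits g m) <:+: (Nat.digits g n) →
              36 * Real.log ((Nat.digits g n).length) ≤ ((Nat.digits g m).length : ℝ) →
              (g - 1) * (Nat.digits g m).length < 3 * (Nat.digits g m).sum} ∩
          Set.Icc 1 x).ncard : ℝ) / x) := by
  classical
  have hX := fun ℓ => Xcard_le hg ℓ (sumDig_le g hg)
  set S : Set ℕ := {n : ℕ | 0 < n ∧ ((Nat.digits g n).sum : ℤ) ≡ r [ZMOD (q : ℤ)] ∧
            ∀ m : ℕ, 0 < m → (Nat.digits g m) <:+: (Nat.digits g n) →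
              36 * Real.log ((Nat.digits g n).length) ≤ ((Nat.digits g m).length : ℝ) →
              (g - 1) * (Nat.digits g m).length < 3 * (Nat.digits g m).sum} with hSdef
  set K : ℕ := 120 * g^(q+1) with hKdef
  set L₁ : ℕ := K^4 with hL₁def
  have hgR : (2:ℝ) ≤ (g:ℝ) := by exact_mod_cast hg
  have hgne1 : (g:ℝ) ≠ 1 := by linarith
  have hP1 : (1:ℝ) ≤ (g:ℝ)^(q+1) := one_le_pow₀ (by linarith)
  have hKcast : (K:ℝ) = 120 * (g:ℝ)^(q+1) := by rw [hKdef]; push_cast; ring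
  have hK1 : 1 ≤ K := by
    rw [hKdef]
    have : 1 ≤ g^(q+1) := Nat.one_le_pow _ _ (by omega)
    omega
  have hq2L : q + 2 ≤ L₁ := by
    have h1 : q + 2 ≤ 2^(q+1) := by
      calc q + 2 = (q + 1) + 1 := by ring
        _ ≤ 2^(q+1) := Nat.succ_le_of_lt (Nat.lt_two_pow_self)
    have h2 : 2^(q+1) ≤ g^(q+1) := Nat.pow_le_pow_left hg _
    have h3 : K ≤ K^4 := Nat.le_self_pow (by omega) K
    rw [hL₁def]
    calc q + 2 ≤ g^(q+1) := le_trans h1 h2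
      _ ≤ K := by rw [hKdef]; omega
      _ ≤ K^4 := h3
  -- the key counting bound
  have key : ∀ x : ℕ, g^(L₁+1) ≤ x →
      (x:ℝ) / (2 * (g:ℝ)^(q+1)) ≤ ((S ∩ Set.Icc 1 x).ncard : ℝ) := by
    intro x hx
    have hx0 : x ≠ 0 := by
      have : 1 ≤ g^(L₁+1) := Nat.one_le_pow _ _ (by omega)
      omega
    set M : ℕ := (Nat.digits g x).length with hMdef
    have hxM : x < g^M := by rw [hMdef]; exact Nat.lt_base_pow_length_digits (by omega)
    have hMx : g^(M-1) ≤ x := by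
      have hlen : M = Nat.log g x + 1 := by rw [hMdef]; exact Nat.digits_len g x (by omega) hx0
      have : M - 1 = Nat.log g x := by omega
      rw [this]
      exact Nat.pow_log_le_self g hx0
    have hM : L₁ + 2 ≤ M := by
      have : g^(L₁+1) < g^M := lt_of_le_of_lt hx hxM
      have := (Nat.pow_lt_pow_iff_right (by omega : 1 < g)).mp this
      omega
    -- ncard to Finset card
    have hset : S ∩ Set.Icc 1 x = ↑((Finset.Icc 1 x).filter (· ∈ S)) := by
      ext n
      simp only [Set.mem_inter_iff, Set.mem_Icc, Finset.coe_filter, Finset.mem_Icc,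
        Set.mem_setOf_eq]
      tauto
    rw [hset, Set.ncard_coe_finset]
    -- biUnion of blocks
    have hBsub : (Finset.Ico L₁ M).biUnion
        (fun L => (Finset.Ico (g^(L-1)) (g^L)).filter (· ∈ S))
        ⊆ (Finset.Icc 1 x).filter (· ∈ S) := by
      intro n hn
      rw [Finset.mem_biUnion] at hn
      obtain ⟨L, hLmem, hnmem⟩ := hn
      rw [Finset.mem_Ico] at hLmem
      rw [Finset.mem_filter] at hnmem ⊢
      refine ⟨?_, hnmem.2⟩
      rw [Finset.mem_Ico] at hnmem
      rw [Finset.mem_Icc]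
      have h1 : 1 ≤ g^(L-1) := Nat.one_le_pow _ _ (by omega)
      have h2 : g^L ≤ g^(M-1) := Nat.pow_le_pow_right (by omega) (by omega)
      have := hnmem.1
      omega
    have hdisj : ∀ L1 ∈ Finset.Ico L₁ M, ∀ L2 ∈ Finset.Ico L₁ M, L1 ≠ L2 →
        Disjoint ((Finset.Ico (g^(L1-1)) (g^L1)).filter (· ∈ S))
          ((Finset.Ico (g^(L2-1)) (g^L2)).filter (· ∈ S)) := by
      intro L1 hL1 L2 hL2 hne
      rw [Finset.disjoint_left]
      intro n hn1 hn2
      rw [Finset.mem_filter, Finset.mem_Ico] at hn1 hn2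
      rcases Nat.lt_or_ge L1 L2 with h | h
      · have : g^L1 ≤ g^(L2-1) := Nat.pow_le_pow_right (by omega) (by omega)
        omega
      · have hlt : L2 < L1 := by omega
        have : g^L2 ≤ g^(L1-1) := Nat.pow_le_pow_right (by omega) (by omega)
        omega
    have hcardB : ∑ L ∈ Finset.Ico L₁ M,
        ((Finset.Ico (g^(L-1)) (g^L)).filter (· ∈ S)).card
        ≤ ((Finset.Icc 1 x).filter (· ∈ S)).card := by
      rw [← Finset.card_biUnion hdisj]
      exact Finset.card_le_card hBsub
    -- real bound per block
    have hper : ∀ L ∈ Finset.Ico L₁ M,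
        (((g:ℝ)-1)/(g:ℝ)^(q+1) - 30/K) * (g:ℝ)^L
          ≤ (((Finset.Ico (g^(L-1)) (g^L)).filter (· ∈ S)).card : ℝ) := by
      intro L hLm
      rw [Finset.mem_Ico] at hLm
      have hLq : q + 1 ≤ L := by omega
      have hL2 : 2 ≤ L := by omega
      have hbb := block_bound hg q hq r hX L hLq hL2
      have hrp := rho_pow_le hK1 (by rw [← hL₁def]; exact hLm.1) hL2
      have hpow : (g:ℝ)^(L-1-q) * (g:ℝ)^(q+1) = (g:ℝ)^L := by
        rw [← pow_add]; congr 1; omega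
      have hgLpos : (0:ℝ) < (g:ℝ)^L := by positivity
      have h30 : 30 * (L:ℝ) * (g:ℝ)^L * (Real.exp (-(5/144)))^(⌈36 * Real.log L⌉₊)
          ≤ 30 * (g:ℝ)^L / K := by
        have hKposR : (0:ℝ) < K := by
          have : (1:ℝ) ≤ K := by exact_mod_cast hK1
          linarith
        calc 30 * (L:ℝ) * (g:ℝ)^L * (Real.exp (-(5/144)))^(⌈36 * Real.log L⌉₊)
            = 30 * (g:ℝ)^L * ((L:ℝ) * (Real.exp (-(5/144)))^(⌈36 * Real.log L⌉₊)) := by ring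
          _ ≤ 30 * (g:ℝ)^L * (1/K) := by
              apply mul_le_mul_of_nonneg_left hrp (by positivity)
          _ = 30 * (g:ℝ)^L / K := by ring
      have heq : ((g:ℝ)-1) * (g:ℝ)^(L-1-q) = ((g:ℝ)-1)/(g:ℝ)^(q+1) * (g:ℝ)^L := by
        rw [← hpow]
        have hPne : ((g:ℝ)^(q+1)) ≠ 0 := by positivity
        field_simp
      have hKposR : (0:ℝ) < K := by
        have : (1:ℝ) ≤ K := by exact_mod_cast hK1
        linarith
      have : (((g:ℝ)-1)/(g:ℝ)^(q+1) - 30/K) * (g:ℝ)^L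
          = ((g:ℝ)-1) * (g:ℝ)^(L-1-q) - 30 * (g:ℝ)^L / K := by
        rw [heq]; ring
      rw [this]
      linarith
    -- sum them
    have hsum : ∑ L ∈ Finset.Ico L₁ M, (((g:ℝ)-1)/(g:ℝ)^(q+1) - 30/K) * (g:ℝ)^L
        ≤ (((Finset.Icc 1 x).filter (· ∈ S)).card : ℝ) := by
      calc ∑ L ∈ Finset.Ico L₁ M, (((g:ℝ)-1)/(g:ℝ)^(q+1) - 30/K) * (g:ℝ)^L
          ≤ ∑ L ∈ Finset.Ico L₁ M,
            ((((Finset.Ico (g^(L-1)) (g^L)).filter (· ∈ S)).card : ℕ) : ℝ) :=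
            Finset.sum_le_sum hper
        _ = ((∑ L ∈ Finset.Ico L₁ M,
            ((Finset.Ico (g^(L-1)) (g^L)).filter (· ∈ S)).card : ℕ) : ℝ) := by
            push_cast; ring
        _ ≤ _ := by exact_mod_cast hcardB
    have hgeom : ∑ L ∈ Finset.Ico L₁ M, (g:ℝ)^L
        = ((g:ℝ)^M - (g:ℝ)^L₁) / ((g:ℝ) - 1) := geom_sum_Ico hgne1 (by omega)
    have hfact : ∑ L ∈ Finset.Ico L₁ M, (((g:ℝ)-1)/(g:ℝ)^(q+1) - 30/K) * (g:ℝ)^L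
        = (((g:ℝ)-1)/(g:ℝ)^(q+1) - 30/K) * (((g:ℝ)^M - (g:ℝ)^L₁) / ((g:ℝ) - 1)) := by
      rw [← Finset.mul_sum, hgeom]
    rw [hfact] at hsum
    -- final arithmetic
    have hxA : (x:ℝ) ≤ (g:ℝ)^M := by
      have : (x:ℝ) < ((g^M : ℕ) : ℝ) := by exact_mod_cast hxM
      push_cast at this
      linarith
    have hA4B : 4 * (g:ℝ)^L₁ ≤ (g:ℝ)^M := by
      have h1 : (g:ℝ)^(L₁+2) ≤ (g:ℝ)^M := pow_le_pow_right₀ (by linarith) (by omega)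
      have h2 : (g:ℝ)^(L₁+2) = (g:ℝ)^L₁ * (g:ℝ)^2 := by rw [← pow_add]
      have h3 : (4:ℝ) ≤ (g:ℝ)^2 := by nlinarith
      have h4 : (0:ℝ) < (g:ℝ)^L₁ := by positivity
      nlinarith
    have hB1 : (1:ℝ) ≤ (g:ℝ)^L₁ := one_le_pow₀ (by linarith)
    have hPpos : (0:ℝ) < (g:ℝ)^(q+1) := by positivity
    rw [hKcast] at hsum
    obtain ⟨A, hA⟩ : ∃ A : ℝ, A = (g:ℝ)^M := ⟨_, rfl⟩
    obtain ⟨B, hB⟩ : ∃ B : ℝ, B = (g:ℝ)^L₁ := ⟨_, rfl⟩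
    obtain ⟨P, hP⟩ : ∃ P : ℝ, P = (g:ℝ)^(q+1) := ⟨_, rfl⟩
    rw [← hA] at hsum hxA hA4B
    rw [← hB] at hsum hA4B hB1
    rw [← hP] at hsum hPpos ⊢
    have hcore : 4*(x:ℝ)*((g:ℝ)-1)
        ≤ (A - B)*(4*((g:ℝ)-1)-1)*2 := by
      nlinarith [mul_nonneg (by linarith : (0:ℝ) ≤ A - 4*B)
          (by linarith : (0:ℝ) ≤ 4*(g:ℝ)-6),
        mul_nonneg (by linarith : (0:ℝ) ≤ B)
          (by linarith : (0:ℝ) ≤ 8*(g:ℝ)-14),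
        mul_le_mul_of_nonneg_right hxA (by linarith : (0:ℝ) ≤ 4*((g:ℝ)-1))]
    have hstep : (x:ℝ) / (2 * P)
        ≤ (((g:ℝ)-1)/P - 30/(120 * P))
          * ((A - B) / ((g:ℝ) - 1)) := by
      have hPne : P ≠ 0 := ne_of_gt hPpos
      have hg1ne : (g:ℝ) - 1 ≠ 0 := by linarith
      have hform : (((g:ℝ)-1)/P - 30/(120 * P))
          * ((A - B) / ((g:ℝ) - 1))
          = (A - B) * (4*((g:ℝ)-1)-1)
            / (4 * P * ((g:ℝ)-1)) := by
        field_simp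
        ring
      rw [hform, div_le_div_iff₀ (by positivity) (by nlinarith)]
      nlinarith [mul_le_mul_of_nonneg_right hcore hPpos.le]
    linarith
  -- conclude via liminf
  have hub : ∀ x : ℕ, ((S ∩ Set.Icc 1 x).ncard : ℝ)/x ≤ 1 := by
    intro x
    rcases Nat.eq_zero_or_pos x with rfl | hx
    · simp
    · have h1 : (S ∩ Set.Icc 1 x).ncard ≤ x := by
        have h2 : (S ∩ Set.Icc 1 x).ncard ≤ (Set.Icc 1 x).ncard :=
          Set.ncard_le_ncard Set.inter_subset_right (Set.finite_Icc _ _)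
        have h3 : (Set.Icc (1:ℕ) x).ncard = x := by
          rw [← Finset.coe_Icc, Set.ncard_coe_finset, Nat.card_Icc]
          omega
        omega
      rw [div_le_one (by exact_mod_cast hx : (0:ℝ) < (x:ℝ))]
      exact_mod_cast h1
  have hcob : IsCoboundedUnder (· ≥ ·) atTop
      (fun x : ℕ => ((S ∩ Set.Icc 1 x).ncard : ℝ)/x) :=
    Filter.isCoboundedUnder_ge_of_le atTop (x := 1) hub
  have hev : ∀ᶠ x : ℕ in atTop,
      (1:ℝ)/(2*(g:ℝ)^(q+1)) ≤ ((S ∩ Set.Icc 1 x).ncard : ℝ)/x := by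
    rw [eventually_atTop]
    refine ⟨g^(L₁+1), fun x hx => ?_⟩
    have hx1 : 1 ≤ x := le_trans (Nat.one_le_pow _ _ (by omega)) hx
    have hxpos : (0:ℝ) < (x:ℝ) := by exact_mod_cast hx1
    rw [le_div_iff₀ hxpos]
    have hk := key x hx
    calc (1:ℝ)/(2*(g:ℝ)^(q+1)) * x = (x:ℝ)/(2*(g:ℝ)^(q+1)) := by ring
      _ ≤ _ := hk
  have hmain := Filter.le_liminf_of_le hcob hev
  have hposc : (0:ℝ) < (1:ℝ)/(2*(g:ℝ)^(q+1)) := by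
    have := pow_pos (show (0:ℝ) < (g:ℝ) by linarith) (q+1)
    positivity
  exact ⟨hmain, lt_of_lt_of_le hposc hmain⟩
end

section
/- Let g ≥ 2, q > 0, r be integers, ℓ > q an integer, and let d_1, ..., d_ℓ be independent uniformly distributed random variables in {0, ..., g-1}. Then the probability that d_ℓ ≠ 0 and Σ_{i=1}^ℓ d_i ≡ r (mod q) is at least 1/g^q. -/
lemma sum_ite_lt_aux (t : ℕ) : ∀ n, t ≤ n →
    ∑ i ∈ Finset.range n, (if i < t then 1 else 0) = t := by
  intro n
  induction n with
  | zero =>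
    intro h
    have ht : t = 0 := by omega
    subst ht; simp
  | succ n ih =>
    intro h
    rw [Finset.sum_range_succ]
    by_cases hc : t ≤ n
    · rw [ih hc, if_neg (by omega)]
      omega
    · have ht : t = n + 1 := by omega
      rw [if_pos (by omega)]
      have heq : ∑ i ∈ Finset.range n, (if i < t then 1 else 0)
          = ∑ _i ∈ Finset.range n, 1 :=
        Finset.sum_congr rfl (fun i hi => if_pos (by
          have := Finset.mem_range.mp hi; omega))
      rw [heq, Finset.sum_const, Finset.card_range, smul_eq_mul]
      omega

lemma digit_aux (g : ℕ) (hg : 2 ≤ g) (q : ℕ) (hq : 0 < q) (r : ℤ)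
    (ℓ : ℕ) (hℓ : q < ℓ) (f : Fin (ℓ - q) → Fin g) :
    ∃ d : Fin ℓ → Fin g,
      ((d ⟨ℓ - 1, Nat.sub_lt (Nat.zero_lt_of_lt hℓ) Nat.one_pos⟩ : ℕ) ≠ 0 ∧ ((∑ i, (d i : ℕ) : ℕ) : ℤ) ≡ r [ZMOD (q : ℤ)]) ∧
      ∀ i : Fin (ℓ - q), d ⟨i, by omega⟩ = f i := by
  classical
  set S : ℕ := ∑ i : Fin (ℓ - q), (f i : ℕ) with hS
  have hqZ : (0 : ℤ) < (q : ℤ) := by exact_mod_cast hq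
  set t : ℕ := ((r - (S : ℤ) - 1) % (q : ℤ)).toNat with htdef
  have ht : (t : ℤ) = (r - (S : ℤ) - 1) % (q : ℤ) :=
    Int.toNat_of_nonneg (Int.emod_nonneg _ (by omega))
  have htq : t < q := by
    have := Int.emod_lt_of_pos (r - (S : ℤ) - 1) hqZ
    omega
  set d : Fin ℓ → Fin g := fun i => if h : (i : ℕ) < ℓ - q then f ⟨i, h⟩
      else if (i : ℕ) = ℓ - 1 then ⟨1, by omega⟩
      else if (i : ℕ) - (ℓ - q) < t then ⟨1, by omega⟩ else ⟨0, by omega⟩ with hd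
  refine ⟨d, ⟨?_, ?_⟩, ?_⟩
  · -- last entry nonzero
    have h1 : ¬ (ℓ - 1 < ℓ - q) := by omega
    simp only [hd, dif_neg h1, if_pos rfl]
    simp
  · -- sum congruence
    set V : ℕ → ℕ := fun n => if h : n < ℓ then (d ⟨n, h⟩ : ℕ) else 0 with hV
    have hsum : ∑ i : Fin ℓ, (d i : ℕ) = ∑ n ∈ Finset.range ℓ, V n := by
      rw [← Fin.sum_univ_eq_sum_range V ℓ]
      refine Finset.sum_congr rfl (fun i _ => ?_)
      simp [hV, i.isLt]
    have hsplit : ∑ n ∈ Finset.range ℓ, V n =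
        ((∑ n ∈ Finset.range (ℓ - q), V n) + ∑ i ∈ Finset.range (q - 1), V ((ℓ - q) + i))
          + V ((ℓ - q) + (q - 1)) := by
      conv_lhs => rw [show ℓ = ((ℓ - q) + (q - 1)) + 1 by omega, Finset.sum_range_succ,
        Finset.sum_range_add]
    have h1 : ∑ n ∈ Finset.range (ℓ - q), V n = S := by
      rw [hS, ← Fin.sum_univ_eq_sum_range V (ℓ - q)]
      refine Finset.sum_congr rfl (fun i _ => ?_)
      have hi : (i : ℕ) < ℓ - q := i.isLt
      have hi2 : (i : ℕ) < ℓ := by omega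
      simp [hV, hd, hi2, hi]
    have h2 : ∑ i ∈ Finset.range (q - 1), V ((ℓ - q) + i) = t := by
      have hc2 : ∀ i ∈ Finset.range (q - 1), V ((ℓ - q) + i) = if i < t then 1 else 0 := by
        intro i hi
        have hi' : i < q - 1 := Finset.mem_range.mp hi
        have hlt : (ℓ - q) + i < ℓ := by omega
        have hna : ¬ ((ℓ - q) + i < ℓ - q) := by omega
        have hne : ¬ ((ℓ - q) + i = ℓ - 1) := by omega
        simp only [hV, hd, dif_pos hlt, dif_neg hna, if_neg hne]
        have he : (ℓ - q) + i - (ℓ - q) = i := by omega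
        rw [he]
        by_cases hc : i < t <;> simp [hc]
      rw [Finset.sum_congr rfl hc2, sum_ite_lt_aux t (q - 1) (by omega)]
    have h3 : V ((ℓ - q) + (q - 1)) = 1 := by
      have hlt : (ℓ - q) + (q - 1) < ℓ := by omega
      have hna : ¬ ((ℓ - q) + (q - 1) < ℓ - q) := by omega
      have heq : (ℓ - q) + (q - 1) = ℓ - 1 := by omega
      simp only [hV, hd, dif_pos hlt, heq, dif_neg (show ¬ (ℓ - 1 < ℓ - q) by omega),
        if_pos rfl]
      simp
      omega
    have htotal : ∑ i : Fin ℓ, (d i : ℕ) = S + t + 1 := by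
      rw [hsum, hsplit, h1, h2, h3]
    rw [htotal]
    have hmod : ((r - (S : ℤ) - 1) % (q : ℤ)) ≡ (r - (S : ℤ) - 1) [ZMOD (q : ℤ)] :=
      Int.emod_emod_of_dvd _ dvd_rfl
    calc ((S + t + 1 : ℕ) : ℤ) = (S : ℤ) + ((r - (S : ℤ) - 1) % (q : ℤ)) + 1 := by
          push_cast [ht]; ring
      _ ≡ (S : ℤ) + (r - (S : ℤ) - 1) + 1 [ZMOD (q : ℤ)] :=
          (hmod.add_left _).add_right _
      _ = r := by ring
  · intro i
    have hi : (i : ℕ) < ℓ - q := i.isLt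
    simp [hd, hi]

/-- For `ℓ > q > 0`, the number of tuples `(d 0, …, d (ℓ-1)) ∈ {0,…,g-1}^ℓ` whose last entry
is nonzero and whose sum is `≡ r (mod q)` is at least `g^(ℓ-q)`; equivalently the
corresponding probability for independent uniform digits is at least `1/g^q`. -/
theorem digit_tuples_count (g : ℕ) (hg : 2 ≤ g) (q : ℕ) (hq : 0 < q) (r : ℤ)
    (ℓ : ℕ) (hℓ : q < ℓ) :
    g ^ (ℓ - q) ≤ Nat.card {d : Fin ℓ → Fin g //
      (d ⟨ℓ - 1, by omega⟩ : ℕ) ≠ 0 ∧ ((∑ i, (d i : ℕ) : ℕ) : ℤ) ≡ r [ZMOD (q : ℤ)]} := by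
  classical
  have key := digit_aux g hg q hq r ℓ hℓ
  choose F hF1 hF2 using key
  have hinj : Function.Injective (fun f : Fin (ℓ - q) → Fin g =>
      (⟨F f, hF1 f⟩ : {d : Fin ℓ → Fin g //
        (d ⟨ℓ - 1, by omega⟩ : ℕ) ≠ 0 ∧ ((∑ i, (d i : ℕ) : ℕ) : ℤ) ≡ r [ZMOD (q : ℤ)]})) := by
    intro f₁ f₂ h
    have h' : F f₁ = F f₂ := congrArg Subtype.val h
    funext i
    rw [← hF2 f₁ i, ← hF2 f₂ i, h']
  have hcard := Nat.card_le_card_of_injective _ hinj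
  calc g ^ (ℓ - q) = Nat.card (Fin (ℓ - q) → Fin g) := by
        simp [Nat.card_eq_fintype_card]
    _ ≤ _ := hcard
end

section
/- Let g ≥ 2 be an integer and let ℓ be an integer with ℓ ≥ 2. The probability that a uniformly random integer n in {0, ..., g^ℓ - 1} admits a substring m of its digit string with ℓ_g(m) ≥ 36 log ℓ and s_g(m) ≤ (g-1)/3 · ℓ_g(m) is less than 20/ℓ. -/
open Finset Real

namespace BadSub




/-- ofDigits of a list of zeros is zero. -/
lemma ofDigits_replicate_zero (g k : ℕ) : Nat.ofDigits g (List.replicate k 0) = 0 := by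
  induction k with
  | zero => simp [Nat.ofDigits]
  | succ k ih => simp [List.replicate_succ, Nat.ofDigits, ih]

/-- digit-sum recursion -/
lemma sum_digits_rec {g : ℕ} (hg : 2 ≤ g) (u : ℕ) :
    (Nat.digits g u).sum = u % g + (Nat.digits g (u / g)).sum := by
  rcases Nat.eq_zero_or_pos u with rfl | hu
  · simp
  · rw [Nat.digits_def' (by omega : 1 < g) hu]; simp

/-- length of digits is at most ℓ when n < g^ℓ -/
lemma digits_len_le {g ℓ n : ℕ} (hg : 2 ≤ g) (hn : n < g ^ ℓ) :
    (Nat.digits g n).length ≤ ℓ := by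
  rcases Nat.eq_zero_or_pos n with rfl | hpos
  · simp
  · rw [Nat.digits_len g n (by omega) (by omega)]
    have := Nat.log_lt_of_lt_pow (by omega : n ≠ 0) hn
    omega

/-- The key reduction: an infix occurrence of digits of `m` in the padded digit string of `n`
gives an arithmetic window. -/
lemma reduce {g ℓ n m : ℕ} (hg : 2 ≤ g) (hn : n < g ^ ℓ) (hm : 0 < m)
    (hinf : Nat.digits g m <:+:
      (Nat.digits g n ++ List.replicate (ℓ - (Nat.digits g n).length) 0)) :
    ∃ i, i + (Nat.digits g m).length ≤ ℓ ∧
      (n / g ^ i) % g ^ (Nat.digits g m).length = m := by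
  obtain ⟨s, t, hst⟩ := hinf
  set D := Nat.digits g n ++ List.replicate (ℓ - (Nat.digits g n).length) 0 with hD
  have hlen : D.length = ℓ := by
    have := digits_len_le hg hn
    simp [hD, List.length_append, List.length_replicate]; omega
  have hDmem : ∀ x ∈ D, x < g := by
    intro x hx
    rcases List.mem_append.1 hx with h | h
    · exact Nat.digits_lt_base (by omega) h
    · have := List.eq_of_mem_replicate h; omega
  set i := s.length
  set L := (Nat.digits g m).length
  refine ⟨i, ?_, ?_⟩
  · have : s.length + (L + t.length) = ℓ := by
      have := congrArg List.length hst
      simpa [List.length_append, hlen, add_assoc] using this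
    omega
  · have hsmem : ∀ x ∈ s, x < g := fun x hx => hDmem x (by rw [← hst]; simp [hx])
    have hslt : Nat.ofDigits g s < g ^ i := Nat.ofDigits_lt_base_pow_length (by omega) hsmem
    have hmlt : m < g ^ L := Nat.lt_base_pow_length_digits (by omega)
    have hofD : Nat.ofDigits g D = n := by
      rw [hD, Nat.ofDigits_append, Nat.ofDigits_digits, ofDigits_replicate_zero]
      ring
    have hn' : n = Nat.ofDigits g s + g ^ i * (m + g ^ L * Nat.ofDigits g t) := by
      rw [← hofD, ← hst]
      rw [List.append_assoc, Nat.ofDigits_append, Nat.ofDigits_append, Nat.ofDigits_digits]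
    have hgi : 0 < g ^ i := Nat.pow_pos (n := i) (by omega)
    rw [hn', Nat.add_mul_div_left _ _ hgi, Nat.div_eq_of_lt hslt, zero_add,
      Nat.add_mul_mod_self_left, Nat.mod_eq_of_lt hmlt]


/-- the bad-window count -/
def B (g L : ℕ) : ℕ :=
  ((Finset.range (g ^ L)).filter (fun u => 3 * (Nat.digits g u).sum ≤ (g - 1) * L)).card

/-- the set of `n < g^ℓ` whose window `(i, L)` is bad -/
def A (g ℓ i L : ℕ) : Finset ℕ :=
  (Finset.range (g ^ ℓ)).filter
    (fun n => i + L ≤ ℓ ∧ 3 * (Nat.digits g ((n / g ^ i) % g ^ L)).sum ≤ (g - 1) * L)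

lemma card_A_le {g : ℕ} (hg : 2 ≤ g) (ℓ i L : ℕ) :
    (A g ℓ i L).card ≤ g ^ (ℓ - L) * B g L := by
  by_cases hiL : i + L ≤ ℓ
  · have hcard : (((Finset.range (g ^ L)).filter
        (fun u => 3 * (Nat.digits g u).sum ≤ (g - 1) * L)) ×ˢ
        Finset.range (g ^ (ℓ - L))).card = B g L * g ^ (ℓ - L) := by
      simp [B, Finset.card_product]
    rw [A]
    calc _ ≤ (((Finset.range (g ^ L)).filter
        (fun u => 3 * (Nat.digits g u).sum ≤ (g - 1) * L)) ×ˢ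
        Finset.range (g ^ (ℓ - L))).card := by
          apply Finset.card_le_card_of_injOn
            (fun n => ((n / g ^ i) % g ^ L, n % g ^ i + g ^ i * (n / g ^ (i + L))))
          · intro n hn
            simp only [Finset.mem_coe, Finset.mem_filter, Finset.mem_range] at hn
            obtain ⟨hnlt, _, hbad⟩ := hn
            simp only [Finset.mem_coe, Finset.mem_product, Finset.mem_filter, Finset.mem_range]
            refine ⟨⟨Nat.mod_lt _ (Nat.pow_pos (n := L) (by omega)), hbad⟩, ?_⟩
            have h1 : n % g ^ i < g ^ i := Nat.mod_lt _ (Nat.pow_pos (n := i) (by omega))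
            have h2 : n / g ^ (i + L) < g ^ (ℓ - i - L) := by
              apply Nat.div_lt_of_lt_mul
              calc n < g ^ ℓ := hnlt
              _ = g ^ (i + L) * g ^ (ℓ - i - L) := by rw [← pow_add]; congr 1; omega
            calc n % g ^ i + g ^ i * (n / g ^ (i + L))
                < g ^ i + g ^ i * (n / g ^ (i + L)) := by omega
              _ = g ^ i * (n / g ^ (i + L) + 1) := by ring
              _ ≤ g ^ i * g ^ (ℓ - i - L) := Nat.mul_le_mul_left _ (by omega)
              _ = g ^ (ℓ - L) := by rw [← pow_add]; congr 1; omega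
          · intro n1 h1 n2 h2 heq
            have hgi : 0 < g ^ i := Nat.pow_pos (n := i) (by omega)
            have key : ∀ n : ℕ, n = n % g ^ i +
                g ^ i * ((n / g ^ i) % g ^ L + g ^ L * (n / g ^ (i + L))) := by
              intro n
              have hd : n / g ^ (i + L) = n / g ^ i / g ^ L := by
                rw [Nat.div_div_eq_div_mul, ← pow_add]
              rw [hd, Nat.mod_add_div, Nat.mod_add_div]
            simp only [Prod.mk.injEq] at heq
            obtain ⟨hu, hv⟩ := heq
            have hm1 : n1 % g ^ i = n2 % g ^ i := by
              have := congrArg (· % g ^ i) hv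
              simpa [Nat.add_mul_mod_self_left,
                Nat.mod_mod_of_dvd, Nat.mod_eq_of_lt (Nat.mod_lt n1 hgi),
                Nat.mod_eq_of_lt (Nat.mod_lt n2 hgi)] using this
            have hd1 : n1 / g ^ (i + L) = n2 / g ^ (i + L) := by
              have := congrArg (· / g ^ i) hv
              simpa [Nat.add_mul_div_left _ _ hgi,
                Nat.div_eq_of_lt (Nat.mod_lt n1 hgi), Nat.div_eq_of_lt (Nat.mod_lt n2 hgi)]
                using this
            rw [key n1, key n2, hm1, hu, hd1]
      _ = g ^ (ℓ - L) * B g L := by rw [hcard]; ring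
  · have : A g ℓ i L = ∅ := by
      apply Finset.filter_false_of_mem
      intro n _
      simp [hiL]
    simp [this]

noncomputable def tt (g : ℕ) : ℝ := 2 / (3 * ((g : ℝ) - 1))

noncomputable def q (g : ℕ) : ℝ := ∑ d ∈ Finset.range g, Real.exp (-(tt g) * d)

lemma F_eq {g : ℕ} (hg : 2 ≤ g) :
    ∀ L : ℕ, ∑ u ∈ Finset.range (g ^ L), Real.exp (-(tt g) * ((Nat.digits g u).sum : ℝ))
      = q g ^ L := by
  intro L
  induction L with
  | zero => simp
  | succ L ih =>
    have hbij : ∑ u ∈ Finset.range (g ^ (L + 1)),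
        Real.exp (-(tt g) * ((Nat.digits g u).sum : ℝ))
        = ∑ p ∈ Finset.range g ×ˢ Finset.range (g ^ L),
          Real.exp (-(tt g) * ((Nat.digits g (p.1 + g * p.2)).sum : ℝ)) := by
      apply Finset.sum_nbij' (fun u => (u % g, u / g)) (fun p => p.1 + g * p.2)
      · intro u hu
        simp only [Finset.mem_range] at hu
        simp only [Finset.mem_product, Finset.mem_range]
        refine ⟨Nat.mod_lt _ (by omega), Nat.div_lt_of_lt_mul ?_⟩
        rw [← pow_succ']; exact hu
      · intro p hp
        simp only [Finset.mem_product, Finset.mem_range] at hp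
        simp only [Finset.mem_range]
        calc p.1 + g * p.2 < g + g * p.2 := by omega
          _ = g * (p.2 + 1) := by ring
          _ ≤ g * g ^ L := Nat.mul_le_mul_left _ (by omega)
          _ = g ^ (L + 1) := (pow_succ' g L).symm
      · intro u hu; simp [Nat.mod_add_div]
      · intro p hp
        simp only [Finset.mem_product, Finset.mem_range] at hp
        simp [Nat.add_mul_div_left _ _ (by omega : 0 < g), Nat.div_eq_of_lt hp.1,
          Nat.add_mul_mod_self_left, Nat.mod_eq_of_lt hp.1]
      · intro u hu
        congr 2
        rw [Nat.mod_add_div]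
    rw [hbij, Finset.sum_product]
    have key : ∀ d v : ℕ, d < g →
        ((Nat.digits g (d + g * v)).sum : ℝ) = d + ((Nat.digits g v).sum : ℝ) := by
      intro d v hp
      rw [sum_digits_rec hg]
      push_cast
      congr 2 <;>
        simp [Nat.add_mul_mod_self_left, Nat.mod_eq_of_lt hp,
          Nat.add_mul_div_left _ _ (by omega : 0 < g), Nat.div_eq_of_lt hp]
    calc ∑ d ∈ Finset.range g, ∑ v ∈ Finset.range (g ^ L),
          Real.exp (-(tt g) * ((Nat.digits g (d + g * v)).sum : ℝ))
        = ∑ d ∈ Finset.range g, ∑ v ∈ Finset.range (g ^ L),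
          Real.exp (-(tt g) * d) * Real.exp (-(tt g) * ((Nat.digits g v).sum : ℝ)) := by
          apply Finset.sum_congr rfl; intro d hd
          apply Finset.sum_congr rfl; intro v hv
          rw [key d v (Finset.mem_range.1 hd), ← Real.exp_add]
          ring_nf
      _ = q g * q g ^ L := by
          rw [← Finset.sum_mul_sum, ih]; rfl
      _ = q g ^ (L + 1) := by ring

lemma B_le {g : ℕ} (hg : 2 ≤ g) (L : ℕ) :
    (B g L : ℝ) ≤ (Real.exp (tt g * ((g : ℝ) - 1) / 3) * q g) ^ L := by
  have ht : 0 ≤ tt g := by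
    have h2 : (2 : ℝ) ≤ (g : ℝ) := by exact_mod_cast hg
    unfold tt
    apply div_nonneg (by norm_num)
    linarith
  have hcast : (B g L : ℝ) = ∑ u ∈ (Finset.range (g ^ L)).filter
      (fun u => 3 * (Nat.digits g u).sum ≤ (g - 1) * L), (1 : ℝ) := by
    rw [Finset.sum_const, B]; simp
  have hstep : (B g L : ℝ) ≤ ∑ u ∈ (Finset.range (g ^ L)).filter
      (fun u => 3 * (Nat.digits g u).sum ≤ (g - 1) * L),
      Real.exp (tt g * (((g : ℝ) - 1) * L / 3 - ((Nat.digits g u).sum : ℝ))) := by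
    rw [hcast]
    apply Finset.sum_le_sum
    intro u hu
    simp only [Finset.mem_filter, Finset.mem_range] at hu
    have hsum : ((Nat.digits g u).sum : ℝ) ≤ ((g : ℝ) - 1) * L / 3 := by
      have h := hu.2
      have hgc : ((g - 1 : ℕ) : ℝ) = (g : ℝ) - 1 := by
        push_cast [Nat.cast_sub (by omega : 1 ≤ g)]; ring
      have hc : (3 : ℝ) * ((Nat.digits g u).sum : ℝ) ≤ ((g : ℝ) - 1) * L := by
        calc (3 : ℝ) * ((Nat.digits g u).sum : ℝ) = ((3 * (Nat.digits g u).sum : ℕ) : ℝ) := by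
              push_cast; ring
          _ ≤ (((g - 1) * L : ℕ) : ℝ) := by exact_mod_cast h
          _ = ((g : ℝ) - 1) * L := by rw [Nat.cast_mul, hgc]
      linarith
    have h0 : 0 ≤ tt g * (((g : ℝ) - 1) * L / 3 - ((Nat.digits g u).sum : ℝ)) := by
      apply mul_nonneg ht; linarith
    calc (1 : ℝ) = Real.exp 0 := by simp
      _ ≤ _ := Real.exp_le_exp.2 h0
  calc (B g L : ℝ) ≤ _ := hstep
    _ ≤ ∑ u ∈ Finset.range (g ^ L),
        Real.exp (tt g * (((g : ℝ) - 1) * L / 3 - ((Nat.digits g u).sum : ℝ))) := by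
        apply Finset.sum_le_sum_of_subset_of_nonneg (Finset.filter_subset _ _)
        intro u _ _; positivity
    _ = Real.exp (tt g * ((g : ℝ) - 1) * L / 3) *
        ∑ u ∈ Finset.range (g ^ L), Real.exp (-(tt g) * ((Nat.digits g u).sum : ℝ)) := by
        rw [Finset.mul_sum]
        apply Finset.sum_congr rfl
        intro u _
        rw [← Real.exp_add]
        ring_nf
    _ = Real.exp (tt g * ((g : ℝ) - 1) * L / 3) * q g ^ L := by rw [F_eq hg]
    _ = (Real.exp (tt g * ((g : ℝ) - 1) / 3) * q g) ^ L := by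
        rw [mul_pow, ← Real.exp_nat_mul]
        ring_nf

lemma q_le {g : ℕ} (hg : 2 ≤ g) :
    q g ≤ g * Real.exp (tt g ^ 2 * ((g : ℝ) - 1) ^ 2 / 8 - tt g * ((g : ℝ) - 1) / 2) := by
  have hrefl : ∑ d ∈ Finset.range g, Real.exp (-(tt g) * ((g : ℝ) - 1 - d)) = q g := by
    rw [q, ← Finset.sum_range_reflect (fun d => Real.exp (-(tt g) * d)) g]
    apply Finset.sum_congr rfl
    intro d hd
    simp only [Finset.mem_range] at hd
    congr 2
    have : ((g - 1 - d : ℕ) : ℝ) = (g : ℝ) - 1 - d := by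
      push_cast [Nat.cast_sub (by omega : d ≤ g - 1), Nat.cast_sub (by omega : 1 ≤ g)]
      ring
    rw [this]
  have h2q : 2 * q g = ∑ d ∈ Finset.range g,
      (Real.exp (-(tt g) * d) + Real.exp (-(tt g) * ((g : ℝ) - 1 - d))) := by
    rw [Finset.sum_add_distrib, hrefl, q, two_mul]
  have hpair : ∀ d : ℕ, d < g →
      Real.exp (-(tt g) * d) + Real.exp (-(tt g) * ((g : ℝ) - 1 - d))
        ≤ 2 * Real.exp (tt g ^ 2 * ((g : ℝ) - 1) ^ 2 / 8 - tt g * ((g : ℝ) - 1) / 2) := by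
    intro d hd
    set t := tt g
    set y := t * (((g : ℝ) - 1) / 2 - d) with hy
    have hcosh : Real.exp (-t * d) + Real.exp (-t * ((g : ℝ) - 1 - d))
        = 2 * Real.exp (-t * ((g : ℝ) - 1) / 2) * Real.cosh y := by
      rw [Real.cosh_eq, hy]
      rw [show -t * (d : ℝ) = -t * ((g : ℝ) - 1) / 2 + t * (((g : ℝ) - 1) / 2 - d) by ring,
        show -t * ((g : ℝ) - 1 - d)
          = -t * ((g : ℝ) - 1) / 2 + -(t * (((g : ℝ) - 1) / 2 - d)) by ring,
        Real.exp_add, Real.exp_add]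
      ring
    have hcb : Real.cosh y ≤ Real.exp (y ^ 2 / 2) := Real.cosh_le_exp_half_sq _
    have habs : y ^ 2 / 2 ≤ t ^ 2 * ((g : ℝ) - 1) ^ 2 / 8 := by
      have hd' : (d : ℝ) ≤ (g : ℝ) - 1 := by
        have : (d : ℝ) + 1 ≤ (g : ℝ) := by exact_mod_cast hd
        linarith
      have hd0 : (0 : ℝ) ≤ d := Nat.cast_nonneg d
      have hsq : (((g : ℝ) - 1) / 2 - d) ^ 2 ≤ (((g : ℝ) - 1) / 2) ^ 2 := by nlinarith
      rw [hy]
      nlinarith [sq_nonneg t]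
    have hc2 : Real.cosh y ≤ Real.exp (t ^ 2 * ((g : ℝ) - 1) ^ 2 / 8) :=
      hcb.trans (Real.exp_le_exp.2 habs)
    calc Real.exp (-t * d) + Real.exp (-t * ((g : ℝ) - 1 - d))
        = 2 * Real.exp (-t * ((g : ℝ) - 1) / 2) * Real.cosh y := hcosh
      _ ≤ 2 * Real.exp (-t * ((g : ℝ) - 1) / 2) *
          Real.exp (t ^ 2 * ((g : ℝ) - 1) ^ 2 / 8) := by
          have h2 : (0 : ℝ) ≤ 2 * Real.exp (-t * ((g : ℝ) - 1) / 2) := by positivity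
          exact mul_le_mul_of_nonneg_left hc2 h2
      _ = 2 * Real.exp (t ^ 2 * ((g : ℝ) - 1) ^ 2 / 8 - t * ((g : ℝ) - 1) / 2) := by
          rw [mul_assoc, ← Real.exp_add]
          congr 2
          ring
  have hfin : 2 * q g ≤ (g : ℝ) *
      (2 * Real.exp (tt g ^ 2 * ((g : ℝ) - 1) ^ 2 / 8 - tt g * ((g : ℝ) - 1) / 2)) := by
    rw [h2q]
    calc ∑ d ∈ Finset.range g,
          (Real.exp (-(tt g) * d) + Real.exp (-(tt g) * ((g : ℝ) - 1 - d)))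
        ≤ ∑ _d ∈ Finset.range g,
          2 * Real.exp (tt g ^ 2 * ((g : ℝ) - 1) ^ 2 / 8 - tt g * ((g : ℝ) - 1) / 2) := by
          apply Finset.sum_le_sum
          intro d hd
          exact hpair d (Finset.mem_range.1 hd)
      _ = _ := by rw [Finset.sum_const, Finset.card_range]; ring
  linarith

lemma perdigit {g : ℕ} (hg : 2 ≤ g) :
    Real.exp (tt g * ((g : ℝ) - 1) / 3) * q g ≤ g * Real.exp (-(1/18) : ℝ) := by
  have hG : (1 : ℝ) ≤ (g : ℝ) - 1 := by
    have : (2 : ℝ) ≤ (g : ℝ) := by exact_mod_cast hg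
    linarith
  have htG : tt g * ((g : ℝ) - 1) = 2 / 3 := by
    unfold tt
    field_simp
  have h1 : Real.exp (tt g * ((g : ℝ) - 1) / 3) * q g
      ≤ Real.exp (tt g * ((g : ℝ) - 1) / 3) *
        (g * Real.exp (tt g ^ 2 * ((g : ℝ) - 1) ^ 2 / 8 - tt g * ((g : ℝ) - 1) / 2)) :=
    mul_le_mul_of_nonneg_left (q_le hg) (Real.exp_nonneg _)
  have h2 : Real.exp (tt g * ((g : ℝ) - 1) / 3) *
      (g * Real.exp (tt g ^ 2 * ((g : ℝ) - 1) ^ 2 / 8 - tt g * ((g : ℝ) - 1) / 2))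
      = g * Real.exp (tt g * ((g : ℝ) - 1) / 3 +
        ((tt g * ((g : ℝ) - 1)) ^ 2 / 8 - tt g * ((g : ℝ) - 1) / 2)) := by
    rw [Real.exp_add]
    ring
  have h3 : tt g * ((g : ℝ) - 1) / 3 +
      ((tt g * ((g : ℝ) - 1)) ^ 2 / 8 - tt g * ((g : ℝ) - 1) / 2) = -(1/18) := by
    rw [htG]; norm_num
  calc Real.exp (tt g * ((g : ℝ) - 1) / 3) * q g ≤ _ := h1
    _ = _ := h2
    _ = g * Real.exp (-(1/18) : ℝ) := by rw [h3]


theorem main (g : ℕ) (hg : 2 ≤ g) (ℓ : ℕ) (hℓ : 2 ≤ ℓ) :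
    (Nat.card {n : Fin (g ^ ℓ) // ∃ m : ℕ, 0 < m ∧
        (Nat.digits g m) <:+:
          ((Nat.digits g (n : ℕ)) ++ List.replicate (ℓ - (Nat.digits g (n : ℕ)).length) 0) ∧
        36 * Real.log ℓ ≤ ((Nat.digits g m).length : ℝ) ∧
        3 * (Nat.digits g m).sum ≤ (g - 1) * (Nat.digits g m).length} : ℝ) / (g : ℝ) ^ ℓ
      < 20 / ℓ := by
  classical
  set P : ℕ → Prop := fun k => ∃ m : ℕ, 0 < m ∧
      (Nat.digits g m) <:+:
        ((Nat.digits g k) ++ List.replicate (ℓ - (Nat.digits g k).length) 0) ∧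
      36 * Real.log ℓ ≤ ((Nat.digits g m).length : ℝ) ∧
      3 * (Nat.digits g m).sum ≤ (g - 1) * (Nat.digits g m).length with hP
  set L0 : ℕ := ⌈36 * Real.log ℓ⌉₊ with hL0
  set T : Finset ℕ := (Finset.range (g ^ ℓ)).filter P with hT
  -- Step A : Nat.card of the subtype is at most T.card
  have hA : Nat.card {n : Fin (g ^ ℓ) // P (n : ℕ)} ≤ T.card := by
    rw [Nat.card_eq_fintype_card, Fintype.card_subtype]
    refine Finset.card_le_card_of_injOn (fun n => (n : ℕ)) ?_ ?_
    · intro n hn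
      simp only [Finset.mem_coe, Finset.mem_filter, Finset.mem_univ, true_and] at hn
      simp only [hT, Finset.mem_coe, Finset.mem_filter, Finset.mem_range]
      exact ⟨n.isLt, hn⟩
    · intro a _ b _ h
      exact Fin.val_injective h
  -- Step B : T is covered by the union of the A's
  have hB : T ⊆ (Finset.Icc L0 ℓ ×ˢ Finset.range ℓ).biUnion
      (fun p => A g ℓ p.2 p.1) := by
    intro n hn
    simp only [hT, Finset.mem_filter, Finset.mem_range] at hn
    obtain ⟨hnlt, m, hm, hinf, hlen, hbad⟩ := hn
    obtain ⟨i, hiL, heq⟩ := reduce hg hnlt hm hinf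
    have hL1 : 1 ≤ (Nat.digits g m).length := by
      have : Nat.digits g m ≠ [] := Nat.digits_ne_nil_iff_ne_zero.mpr (by omega)
      cases h : Nat.digits g m with
      | nil => exact absurd h this
      | cons a l => simp [h]
    simp only [Finset.mem_biUnion, Finset.mem_product, Finset.mem_Icc, Finset.mem_range]
    refine ⟨((Nat.digits g m).length, i), ⟨⟨Nat.ceil_le.mpr hlen, by omega⟩, by omega⟩, ?_⟩
    simp only [A, Finset.mem_filter, Finset.mem_range]
    exact ⟨hnlt, by omega, by rw [heq]; exact hbad⟩
  -- Step C : counting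
  have hC : T.card ≤ ∑ L ∈ Finset.Icc L0 ℓ, ℓ * (g ^ (ℓ - L) * B g L) := by
    calc T.card ≤ ((Finset.Icc L0 ℓ ×ˢ Finset.range ℓ).biUnion
          (fun p => A g ℓ p.2 p.1)).card := Finset.card_le_card hB
      _ ≤ ∑ p ∈ Finset.Icc L0 ℓ ×ˢ Finset.range ℓ, (A g ℓ p.2 p.1).card :=
          Finset.card_biUnion_le
      _ = ∑ L ∈ Finset.Icc L0 ℓ, ∑ i ∈ Finset.range ℓ, (A g ℓ i L).card := by
          rw [Finset.sum_product]
      _ ≤ ∑ L ∈ Finset.Icc L0 ℓ, ∑ _i ∈ Finset.range ℓ, g ^ (ℓ - L) * B g L := by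
          apply Finset.sum_le_sum
          intro L _
          apply Finset.sum_le_sum
          intro i _
          exact card_A_le hg ℓ i L
      _ = ∑ L ∈ Finset.Icc L0 ℓ, ℓ * (g ^ (ℓ - L) * B g L) := by
          apply Finset.sum_congr rfl
          intro L _
          rw [Finset.sum_const, Finset.card_range, smul_eq_mul]
  -- real-number estimates
  set r : ℝ := Real.exp (-(1/18) : ℝ) with hr
  have hr0 : 0 < r := Real.exp_pos _
  have hr19 : r ≤ 18 / 19 := by
    rw [hr, show (-(1/18) : ℝ) = -(1/18) from rfl, Real.exp_neg]
    have h1 : (19 : ℝ) / 18 ≤ Real.exp (1/18) := by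
      have := Real.add_one_le_exp (1/18 : ℝ)
      linarith
    have h2 : (0 : ℝ) < 19 / 18 := by norm_num
    calc (Real.exp (1/18))⁻¹ ≤ ((19 : ℝ)/18)⁻¹ := by
          apply inv_anti₀ h2 h1
      _ = 18/19 := by norm_num
  -- bound on B in terms of r
  have hBr : ∀ L : ℕ, (B g L : ℝ) ≤ (g : ℝ) ^ L * r ^ L := by
    intro L
    have hq0 : 0 ≤ Real.exp (tt g * ((g : ℝ) - 1) / 3) * q g := by
      apply mul_nonneg (Real.exp_nonneg _)
      apply Finset.sum_nonneg
      intro d _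
      exact Real.exp_nonneg _
    calc (B g L : ℝ) ≤ (Real.exp (tt g * ((g : ℝ) - 1) / 3) * q g) ^ L := B_le hg L
      _ ≤ ((g : ℝ) * r) ^ L := pow_le_pow_left₀ hq0 (perdigit hg) L
      _ = (g : ℝ) ^ L * r ^ L := mul_pow _ _ _
  -- geometric sum bound
  have hgeo : ∑ L ∈ Finset.Icc L0 ℓ, r ^ L ≤ r ^ L0 * 19 := by
    rw [← Finset.Ico_add_one_right_eq_Icc, Finset.sum_Ico_eq_sum_range]
    have : ∀ k, r ^ (L0 + k) = r ^ L0 * r ^ k := fun k => pow_add r L0 k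
    calc ∑ k ∈ Finset.range (ℓ + 1 - L0), r ^ (L0 + k)
        = r ^ L0 * ∑ k ∈ Finset.range (ℓ + 1 - L0), r ^ k := by
          rw [Finset.mul_sum]
          exact Finset.sum_congr rfl (fun k _ => this k)
      _ ≤ r ^ L0 * 19 := by
          apply mul_le_mul_of_nonneg_left _ (by positivity)
          have hrne : r ≠ 1 := by
            intro h
            rw [h] at hr19
            norm_num at hr19
          rw [geom_sum_eq hrne]
          rw [div_le_iff_of_neg (by linarith : r - 1 < 0)]
          have : (0 : ℝ) ≤ r ^ (ℓ + 1 - L0) := by positivity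
          nlinarith
  -- r ^ L0 ≤ 1 / ℓ^2
  have hℓ0 : (0 : ℝ) < (ℓ : ℝ) := by positivity
  have hrL0 : r ^ L0 ≤ 1 / (ℓ : ℝ) ^ 2 := by
    have h1 : r ^ L0 = Real.exp ((L0 : ℕ) * (-(1/18) : ℝ)) := (Real.exp_nat_mul _ L0).symm
    have h2 : 36 * Real.log ℓ ≤ (L0 : ℝ) := Nat.le_ceil _
    have h3 : ((L0 : ℕ) : ℝ) * (-(1/18) : ℝ) ≤ -(2 * Real.log ℓ) := by linarith
    have h4 : Real.exp (-(2 * Real.log ℓ)) = 1 / (ℓ : ℝ) ^ 2 := by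
      rw [Real.exp_neg]
      rw [show (2 : ℝ) * Real.log ℓ = ((2 : ℕ) : ℝ) * Real.log ℓ by norm_num]
      rw [Real.exp_nat_mul, Real.exp_log hℓ0]
      norm_num
    calc r ^ L0 = Real.exp ((L0 : ℕ) * (-(1/18) : ℝ)) := h1
      _ ≤ Real.exp (-(2 * Real.log ℓ)) := Real.exp_le_exp.2 h3
      _ = 1 / (ℓ : ℝ) ^ 2 := h4
  -- put everything together
  have hgpow : (0 : ℝ) < (g : ℝ) ^ ℓ := by positivity
  have hmain : (T.card : ℝ) ≤ (ℓ : ℝ) * (g : ℝ) ^ ℓ * (1 / (ℓ : ℝ) ^ 2 * 19) := by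
    have step1 : (T.card : ℝ) ≤ ∑ L ∈ Finset.Icc L0 ℓ,
        (ℓ : ℝ) * ((g : ℝ) ^ (ℓ - L) * (B g L : ℝ)) := by
      calc (T.card : ℝ) ≤ ((∑ L ∈ Finset.Icc L0 ℓ, ℓ * (g ^ (ℓ - L) * B g L) : ℕ) : ℝ) := by
            exact_mod_cast hC
        _ = ∑ L ∈ Finset.Icc L0 ℓ, (ℓ : ℝ) * ((g : ℝ) ^ (ℓ - L) * (B g L : ℝ)) := by
            push_cast
            exact Finset.sum_congr rfl (fun L _ => by ring)
    have step2 : ∑ L ∈ Finset.Icc L0 ℓ, (ℓ : ℝ) * ((g : ℝ) ^ (ℓ - L) * (B g L : ℝ))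
        ≤ ∑ L ∈ Finset.Icc L0 ℓ, (ℓ : ℝ) * (g : ℝ) ^ ℓ * r ^ L := by
      apply Finset.sum_le_sum
      intro L hL
      have hLℓ : L ≤ ℓ := (Finset.mem_Icc.1 hL).2
      have : (g : ℝ) ^ (ℓ - L) * ((g : ℝ) ^ L * r ^ L) = (g : ℝ) ^ ℓ * r ^ L := by
        rw [← mul_assoc, ← pow_add]
        congr 2
        omega
      calc (ℓ : ℝ) * ((g : ℝ) ^ (ℓ - L) * (B g L : ℝ))
          ≤ (ℓ : ℝ) * ((g : ℝ) ^ (ℓ - L) * ((g : ℝ) ^ L * r ^ L)) := by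
            apply mul_le_mul_of_nonneg_left _ (by positivity)
            apply mul_le_mul_of_nonneg_left (hBr L) (by positivity)
        _ = (ℓ : ℝ) * (g : ℝ) ^ ℓ * r ^ L := by rw [this]; ring
    have step3 : ∑ L ∈ Finset.Icc L0 ℓ, (ℓ : ℝ) * (g : ℝ) ^ ℓ * r ^ L
        ≤ (ℓ : ℝ) * (g : ℝ) ^ ℓ * (r ^ L0 * 19) := by
      rw [← Finset.mul_sum]
      apply mul_le_mul_of_nonneg_left hgeo (by positivity)
    have step4 : (ℓ : ℝ) * (g : ℝ) ^ ℓ * (r ^ L0 * 19)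
        ≤ (ℓ : ℝ) * (g : ℝ) ^ ℓ * (1 / (ℓ : ℝ) ^ 2 * 19) := by
      apply mul_le_mul_of_nonneg_left _ (by positivity)
      apply mul_le_mul_of_nonneg_right hrL0 (by norm_num)
    linarith
  have h2 : (Nat.card {n : Fin (g ^ ℓ) // P (n : ℕ)} : ℝ) / (g : ℝ) ^ ℓ
      ≤ ((ℓ : ℝ) * (g : ℝ) ^ ℓ * (1 / (ℓ : ℝ) ^ 2 * 19)) / (g : ℝ) ^ ℓ := by
    apply (div_le_div_iff_of_pos_right hgpow).mpr
    have h1 : (Nat.card {n : Fin (g ^ ℓ) // P (n : ℕ)} : ℝ) ≤ (T.card : ℝ) := by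
      exact_mod_cast hA
    linarith
  have h3 : ((ℓ : ℝ) * (g : ℝ) ^ ℓ * (1 / (ℓ : ℝ) ^ 2 * 19)) / (g : ℝ) ^ ℓ
      = 19 / (ℓ : ℝ) := by
    field_simp
  have h4 : (19 : ℝ) / (ℓ : ℝ) < 20 / (ℓ : ℝ) := by
    apply (div_lt_div_iff_of_pos_right hℓ0).mpr
    norm_num
  calc (Nat.card {n : Fin (g ^ ℓ) // P (n : ℕ)} : ℝ) / (g : ℝ) ^ ℓ ≤ _ := h2
    _ = 19 / (ℓ : ℝ) := h3
    _ < 20 / (ℓ : ℝ) := h4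

end BadSub


/-- For `ℓ ≥ 2`, the probability that a uniformly random `n ∈ {0,…,g^ℓ - 1}` admits a
positive integer `m` whose base-`g` digit string is a contiguous substring of the (zero
padded) length-`ℓ` digit string of `n`, with `ℓ_g(m) ≥ 36 log ℓ` and
`s_g(m) ≤ (g-1)/3 · ℓ_g(m)`, is less than `20/ℓ`. -/
theorem bad_substring_probability (g : ℕ) (hg : 2 ≤ g) (ℓ : ℕ) (hℓ : 2 ≤ ℓ) :
    (Nat.card {n : Fin (g ^ ℓ) // ∃ m : ℕ, 0 < m ∧
        (Nat.digits g m) <:+: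
          ((Nat.digits g (n : ℕ)) ++ List.replicate (ℓ - (Nat.digits g (n : ℕ)).length) 0) ∧
        36 * Real.log ℓ ≤ ((Nat.digits g m).length : ℝ) ∧
        3 * (Nat.digits g m).sum ≤ (g - 1) * (Nat.digits g m).length} : ℝ) / (g : ℝ) ^ ℓ
      < 20 / ℓ := BadSub.main g hg ℓ hℓ
end
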